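/- arXiv:1709.01018 — 5 statements merged into one kernel-verified Lean document; each statement's English description precedes it below -/
import Mathlib

section
/- Let u : [0,T] → ℝ^d be a Carathéodory solution of u̇(t) = f(t,u(t)), u(0) = u₀, where f satisfies Assumption A. Then u is Hölder continuous with exponent 1/2; more precisely, for all s,t ∈ [0,T] one has |u(s) − u(t)| ≤ (1 + sup_{z ∈ [0,T]} |u(z)|) · ‖L_{K_u} + g‖_{L²(0,T)} · |s − t|^{1/2}, where K_u is the closed ball in ℝ^d centered at the origin of radius e^{νT}( |u₀| + ∫₀ᵀ g(s) ds ). -/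
open MeasureTheory RealInnerProductSpace

-- triangle swap lemma
lemma tri_swap {t : ℝ} (ht : 0 ≤ t) (ψ : ℝ → ℝ → ℝ)
    (hψ : Integrable (fun p : ℝ × ℝ => ψ p.1 p.2)
      ((volume.restrict (Set.Icc 0 t)).prod (volume.restrict (Set.Icc 0 t)))) :
    ∫ s in Set.Icc (0:ℝ) t, ∫ r in Set.Icc (0:ℝ) s, ψ s r
      = ∫ r in Set.Icc (0:ℝ) t, ∫ s in Set.Icc r t, ψ s r := by
  set μ := volume.restrict (Set.Icc (0:ℝ) t) with hμ
  have htri : MeasurableSet {p : ℝ × ℝ | p.2 ≤ p.1} :=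
    (isClosed_le continuous_snd continuous_fst).measurableSet
  set Φ : ℝ × ℝ → ℝ := ({p : ℝ × ℝ | p.2 ≤ p.1}).indicator (fun p => ψ p.1 p.2) with hΦdef
  have hΦ : Integrable Φ (μ.prod μ) := hψ.indicator htri
  have swap := MeasureTheory.integral_integral_swap (f := fun s r => Φ (s, r))
    (μ := μ) (ν := μ) (by exact hΦ)
  have h1 : ∀ s ∈ Set.Icc (0:ℝ) t, ∫ r, Φ (s, r) ∂μ = ∫ r in Set.Icc (0:ℝ) s, ψ s r := by
    intro s hs
    have : ∀ r, Φ (s, r) = (Set.Iic s).indicator (fun r => ψ s r) r := by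
      intro r
      simp [hΦdef, Set.indicator_apply, Set.mem_Iic]
    simp_rw [this]
    have hset : Set.Iic s ∩ Set.Icc (0:ℝ) t = Set.Icc (0:ℝ) s := by
      ext x
      simp only [Set.mem_inter_iff, Set.mem_Iic, Set.mem_Icc]
      constructor
      · rintro ⟨h1, h2, h3⟩; exact ⟨h2, h1⟩
      · rintro ⟨h1, h2⟩; exact ⟨h2, h1, h2.trans hs.2⟩
    rw [hμ, integral_indicator measurableSet_Iic, Measure.restrict_restrict measurableSet_Iic,
      hset]
  have h2 : ∀ r ∈ Set.Icc (0:ℝ) t, ∫ s, Φ (s, r) ∂μ = ∫ s in Set.Icc r t, ψ s r := by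
    intro r hr
    have : ∀ s, Φ (s, r) = (Set.Ici r).indicator (fun s => ψ s r) s := by
      intro s
      simp [hΦdef, Set.indicator_apply, Set.mem_Ici]
    simp_rw [this]
    have hset : Set.Ici r ∩ Set.Icc (0:ℝ) t = Set.Icc r t := by
      ext x
      simp only [Set.mem_inter_iff, Set.mem_Ici, Set.mem_Icc]
      constructor
      · rintro ⟨h1, h2, h3⟩; exact ⟨h1, h3⟩
      · rintro ⟨h1, h2⟩; exact ⟨h1, hr.1.trans h1, h2⟩
    rw [hμ, integral_indicator measurableSet_Ici, Measure.restrict_restrict measurableSet_Ici,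
      hset]
  calc ∫ s in Set.Icc (0:ℝ) t, ∫ r in Set.Icc (0:ℝ) s, ψ s r
      = ∫ s, (∫ r, Φ (s, r) ∂μ) ∂μ := by
        refine (setIntegral_congr_fun measurableSet_Icc ?_).symm
        intro s hs; exact h1 s hs
    _ = ∫ r, (∫ s, Φ (s, r) ∂μ) ∂μ := swap
    _ = ∫ r in Set.Icc (0:ℝ) t, ∫ s in Set.Icc r t, ψ s r := by
        refine setIntegral_congr_fun measurableSet_Icc ?_
        intro r hr; exact h2 r hr

variable {E : Type*} [NormedAddCommGroup E] [InnerProductSpace ℝ E] [CompleteSpace E]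

lemma energy_tri {t : ℝ} (ht : 0 ≤ t) {F : ℝ → E} (hF : IntegrableOn F (Set.Icc 0 t)) :
    ‖∫ s in Set.Icc (0:ℝ) t, F s‖ ^ 2
      = ∫ s in Set.Icc (0:ℝ) t, 2 * ⟪F s, ∫ r in Set.Icc (0:ℝ) s, F r⟫ := by
  set I : ℝ → E := fun s => ∫ r in Set.Icc (0:ℝ) s, F r with hI
  -- continuity and boundedness of I on Icc 0 t
  have hIcont : ContinuousOn I (Set.Icc 0 t) := intervalIntegral.continuousOn_primitive_Icc hF
  obtain ⟨C, hC⟩ : ∃ C, ∀ x ∈ Set.Icc (0:ℝ) t, ‖I x‖ ≤ C :=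
    isCompact_Icc.exists_bound_of_continuousOn hIcont
  have hIm : AEStronglyMeasurable I (volume.restrict (Set.Icc (0:ℝ) t)) :=
    hIcont.aestronglyMeasurable measurableSet_Icc
  have hFm : AEStronglyMeasurable F (volume.restrict (Set.Icc (0:ℝ) t)) := hF.1
  -- integrability of s ↦ ⟪F s, I s⟫
  have hFI : Integrable (fun s => ⟪F s, I s⟫) (volume.restrict (Set.Icc (0:ℝ) t)) := by
    refine Integrable.mono' (hF.norm.mul_const C) (hFm.inner hIm) ?_
    filter_upwards [ae_restrict_mem measurableSet_Icc] with s hs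
    calc ‖⟪F s, I s⟫‖ ≤ ‖F s‖ * ‖I s‖ := norm_inner_le_norm _ _
      _ ≤ ‖F s‖ * C := by
          have := hC s hs
          nlinarith [norm_nonneg (F s), norm_nonneg (I s)]
  -- integrability of s ↦ ⟪F s, I t⟫
  have hFIt : Integrable (fun s => ⟪F s, I t⟫) (volume.restrict (Set.Icc (0:ℝ) t)) := by
    refine Integrable.mono' (hF.norm.mul_const ‖I t‖) (hFm.inner aestronglyMeasurable_const) ?_
    filter_upwards with s
    exact norm_inner_le_norm _ _
  -- step A : ‖I t‖² = ∫ ⟪F s, I t⟫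
  have stepA : ‖I t‖ ^ 2 = ∫ s in Set.Icc (0:ℝ) t, ⟪F s, I t⟫ := by
    rw [← real_inner_self_eq_norm_sq]
    have := integral_inner (𝕜 := ℝ) (μ := volume.restrict (Set.Icc (0:ℝ) t)) hF (I t)
    rw [← this]
    exact integral_congr_ae (by filter_upwards with s using real_inner_comm _ _)
  -- splitting I t = I s + ∫_{Ioc s t} F for s ∈ [0, t]
  have hsplit : ∀ s ∈ Set.Icc (0:ℝ) t, I t = I s + ∫ r in Set.Ioc s t, F r := by
    intro s hs
    show (∫ r in Set.Icc (0:ℝ) t, F r) = (∫ r in Set.Icc (0:ℝ) s, F r) + ∫ r in Set.Ioc s t, F r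
    have hunion : Set.Icc (0:ℝ) s ∪ Set.Ioc s t = Set.Icc (0:ℝ) t :=
      Set.Icc_union_Ioc_eq_Icc hs.1 hs.2
    rw [← hunion, setIntegral_union (Set.disjoint_left.mpr (fun x hx hx' => absurd hx.2 (not_le.mpr hx'.1))) measurableSet_Ioc
      (hF.mono_set (hunion ▸ Set.subset_union_left))
      (hF.mono_set (hunion ▸ Set.subset_union_right))]
  -- hence ⟪F s, I t⟫ = ⟪F s, I s⟫ + ∫_{r ∈ Ioc s t} ⟪F s, F r⟫
  have hptwise : ∀ s ∈ Set.Icc (0:ℝ) t,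
      ⟪F s, I t⟫ = ⟪F s, I s⟫ + ∫ r in Set.Icc s t, ⟪F s, F r⟫ := by
    intro s hs
    rw [hsplit s hs, inner_add_right]
    congr 1
    rw [integral_Icc_eq_integral_Ioc]
    have hsub : IntegrableOn F (Set.Ioc s t) :=
      hF.mono_set (fun x hx => ⟨hs.1.trans hx.1.le, hx.2⟩)
    exact (integral_inner (𝕜 := ℝ) hsub (F s)).symm
  -- product integrability
  set μ := volume.restrict (Set.Icc (0:ℝ) t) with hμ
  have hprod : Integrable (fun p : ℝ × ℝ => ⟪F p.2, F p.1⟫) (μ.prod μ) := by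
    have hm1 : AEStronglyMeasurable (fun p : ℝ × ℝ => F p.1) (μ.prod μ) :=
      hFm.comp_quasiMeasurePreserving Measure.quasiMeasurePreserving_fst
    have hm2 : AEStronglyMeasurable (fun p : ℝ × ℝ => F p.2) (μ.prod μ) :=
      hFm.comp_quasiMeasurePreserving Measure.quasiMeasurePreserving_snd
    refine Integrable.mono' (hF.norm.mul_prod hF.norm) (hm2.inner hm1) ?_
    filter_upwards with p
    calc ‖⟪F p.2, F p.1⟫‖ ≤ ‖F p.2‖ * ‖F p.1‖ := norm_inner_le_norm _ _
      _ = ‖F p.1‖ * ‖F p.2‖ := mul_comm _ _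
  have hswap := tri_swap ht (fun a b => ⟪F b, F a⟫) hprod
  -- LHS of hswap equals ∫ ⟪F s, I s⟫
  have hswapL : ∫ s in Set.Icc (0:ℝ) t, ∫ r in Set.Icc (0:ℝ) s, ⟪F r, F s⟫
      = ∫ s in Set.Icc (0:ℝ) t, ⟪F s, I s⟫ := by
    refine setIntegral_congr_fun measurableSet_Icc ?_
    intro s hs
    have hsub : IntegrableOn F (Set.Icc (0:ℝ) s) :=
      hF.mono_set (Set.Icc_subset_Icc le_rfl hs.2)
    calc ∫ r in Set.Icc (0:ℝ) s, ⟪F r, F s⟫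
        = ∫ r in Set.Icc (0:ℝ) s, ⟪F s, F r⟫ :=
          integral_congr_ae (by filter_upwards with r using real_inner_comm _ _)
      _ = ⟪F s, I s⟫ := integral_inner (𝕜 := ℝ) hsub (F s)
  -- difference identity
  have hdiff : (∫ s in Set.Icc (0:ℝ) t, ⟪F s, I t⟫) - ∫ s in Set.Icc (0:ℝ) t, ⟪F s, I s⟫
      = ∫ s in Set.Icc (0:ℝ) t, ∫ r in Set.Icc s t, ⟪F s, F r⟫ := by
    rw [← integral_sub hFIt hFI]
    refine setIntegral_congr_fun measurableSet_Icc ?_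
    intro s hs
    have := hptwise s hs
    simp only at this ⊢
    linarith [this]
  have hfinal : (∫ s in Set.Icc (0:ℝ) t, ⟪F s, I t⟫)
      = 2 * ∫ s in Set.Icc (0:ℝ) t, ⟪F s, I s⟫ := by
    have : ∫ s in Set.Icc (0:ℝ) t, ∫ r in Set.Icc s t, ⟪F s, F r⟫
        = ∫ s in Set.Icc (0:ℝ) t, ⟪F s, I s⟫ := by
      rw [← hswap] at *
      exact hswapL
    rw [this] at hdiff
    linarith [hdiff]
  rw [stepA, hfinal, ← MeasureTheory.integral_const_mul]

lemma exp_ftc (ν a b : ℝ) (hab : a ≤ b) :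
    ∫ s in Set.Icc a b, 2 * ν * Real.exp (2 * ν * s)
      = Real.exp (2 * ν * b) - Real.exp (2 * ν * a) := by
  have hderiv : ∀ x ∈ Set.uIcc a b, HasDerivAt (fun y => Real.exp (2 * ν * y))
      (2 * ν * Real.exp (2 * ν * x)) x := by
    intro x _
    have h1 : HasDerivAt (fun y : ℝ => 2 * ν * y) (2 * ν) x := by
      simpa using (hasDerivAt_id x).const_mul (2 * ν)
    have h2 := (Real.hasDerivAt_exp (2 * ν * x)).comp x h1
    have : (fun y => Real.exp (2 * ν * y)) = Real.exp ∘ (fun y : ℝ => 2 * ν * y) := rfl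
    rw [this]
    rw [show 2 * ν * Real.exp (2 * ν * x) = Real.exp (2 * ν * x) * (2 * ν) by ring]
    exact h2
  have hcont : Continuous fun s : ℝ => 2 * ν * Real.exp (2 * ν * s) := by continuity
  have := intervalIntegral.integral_eq_sub_of_hasDerivAt
    (f := fun y => Real.exp (2 * ν * y)) (fun x hx => hderiv x hx)
    (hcont.intervalIntegrable a b)
  rw [integral_Icc_eq_integral_Ioc, ← intervalIntegral.integral_of_le hab, this]

lemma parts {t ν : ℝ} (ht : 0 ≤ t) (hν : 0 ≤ ν) {h : ℝ → ℝ}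
    (hh : IntegrableOn h (Set.Icc 0 t)) :
    ∫ s in Set.Icc (0:ℝ) t, 2 * ν * Real.exp (2 * ν * s) * (∫ r in Set.Icc (0:ℝ) s, h r)
      = Real.exp (2 * ν * t) * (∫ r in Set.Icc (0:ℝ) t, h r)
        - ∫ r in Set.Icc (0:ℝ) t, Real.exp (2 * ν * r) * h r := by
  set μ := volume.restrict (Set.Icc (0:ℝ) t) with hμ
  have hexp_bound : ∀ r ∈ Set.Icc (0:ℝ) t, Real.exp (2 * ν * r) ≤ Real.exp (2 * ν * t) := by
    intro r hr
    exact Real.exp_le_exp.mpr (by nlinarith [hr.1, hr.2])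
  have hexph : Integrable (fun r => Real.exp (2 * ν * r) * h r) μ := by
    refine Integrable.mono' (hh.norm.const_mul (Real.exp (2 * ν * t)))
      ((Continuous.aestronglyMeasurable (by continuity)).mul hh.1) ?_
    filter_upwards [ae_restrict_mem measurableSet_Icc] with r hr
    rw [norm_mul, Real.norm_of_nonneg (Real.exp_pos _).le]
    exact mul_le_mul_of_nonneg_right (hexp_bound r hr) (norm_nonneg _)
  have hprod : Integrable (fun p : ℝ × ℝ => 2 * ν * Real.exp (2 * ν * p.1) * h p.2)
      (μ.prod μ) := by
    have : Integrable (fun s : ℝ => 2 * ν * Real.exp (2 * ν * s)) μ :=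
      (Continuous.integrableOn_Icc (by continuity))
    simpa using this.mul_prod hh
  have hswap := tri_swap ht (fun s r => 2 * ν * Real.exp (2 * ν * s) * h r) hprod
  calc ∫ s in Set.Icc (0:ℝ) t, 2 * ν * Real.exp (2 * ν * s) * (∫ r in Set.Icc (0:ℝ) s, h r)
      = ∫ s in Set.Icc (0:ℝ) t, ∫ r in Set.Icc (0:ℝ) s, 2 * ν * Real.exp (2 * ν * s) * h r := by
        refine setIntegral_congr_fun measurableSet_Icc ?_
        intro s _
        exact (MeasureTheory.integral_const_mul _ _).symm
    _ = ∫ r in Set.Icc (0:ℝ) t, ∫ s in Set.Icc r t, 2 * ν * Real.exp (2 * ν * s) * h r := hswap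
    _ = ∫ r in Set.Icc (0:ℝ) t, (Real.exp (2 * ν * t) - Real.exp (2 * ν * r)) * h r := by
        refine setIntegral_congr_fun measurableSet_Icc ?_
        intro r hr
        show (∫ s in Set.Icc r t, 2 * ν * Real.exp (2 * ν * s) * h r)
          = (Real.exp (2 * ν * t) - Real.exp (2 * ν * r)) * h r
        rw [← exp_ftc ν r t hr.2, ← integral_mul_const]
    _ = Real.exp (2 * ν * t) * (∫ r in Set.Icc (0:ℝ) t, h r)
        - ∫ r in Set.Icc (0:ℝ) t, Real.exp (2 * ν * r) * h r := by
        rw [← MeasureTheory.integral_const_mul, ← integral_sub (hh.const_mul _) hexph]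
        congr 1
        ext r
        ring

lemma real_inner_mul (a b : ℝ) : ⟪a, b⟫ = a * b := by
  simp [RCLike.inner_apply, starRingEnd_apply]
  ring

lemma comp_id {T ν : ℝ} (hT : 0 ≤ T) (hν : 0 ≤ ν) {g : ℝ → ℝ} (hg0 : ∀ t, 0 ≤ g t)
    (hg : IntegrableOn g (Set.Icc 0 T)) (A' : ℝ) :
    ∀ t ∈ Set.Icc (0:ℝ) T,
      (Real.exp (ν * t) * (A' + ∫ s in Set.Icc (0:ℝ) t, g s)) ^ 2
        = A' ^ 2 + ∫ s in Set.Icc (0:ℝ) t,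
            (2 * ν * (Real.exp (ν * s) * (A' + ∫ r in Set.Icc (0:ℝ) s, g r)) ^ 2
              + 2 * Real.exp (ν * s) * g s
                * (Real.exp (ν * s) * (A' + ∫ r in Set.Icc (0:ℝ) s, g r))) := by
  intro t htT
  set G : ℝ → ℝ := fun x => ∫ r in Set.Icc (0:ℝ) x, g r with hGdef
  have hgt : IntegrableOn g (Set.Icc 0 t) := hg.mono_set (Set.Icc_subset_Icc le_rfl htT.2)
  have hGc : ContinuousOn G (Set.Icc 0 t) := intervalIntegral.continuousOn_primitive_Icc hgt
  obtain ⟨CG, hCG⟩ := isCompact_Icc.exists_bound_of_continuousOn hGc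
  have hGm : AEStronglyMeasurable G (volume.restrict (Set.Icc (0:ℝ) t)) :=
    hGc.aestronglyMeasurable measurableSet_Icc
  -- step 1
  have step1 : ∀ x ∈ Set.Icc (0:ℝ) t, (A' + G x) ^ 2
      = A' ^ 2 + ∫ s in Set.Icc (0:ℝ) x, (2 * g s * (A' + G s)) := by
    intro x hx
    have hgx : IntegrableOn g (Set.Icc 0 x) := hgt.mono_set (Set.Icc_subset_Icc le_rfl hx.2)
    have htri := energy_tri (E := ℝ) hx.1 hgx
    have htri' : G x ^ 2 = ∫ s in Set.Icc (0:ℝ) x, 2 * (g s * G s) := by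
      rw [hGdef]
      simp only [real_inner_mul] at htri
      rw [← htri]
      rw [Real.norm_eq_abs, sq_abs]
    -- integrability pieces on Icc 0 x
    have hGcx : ContinuousOn G (Set.Icc 0 x) := hGc.mono (Set.Icc_subset_Icc le_rfl hx.2)
    have hGmx : AEStronglyMeasurable G (volume.restrict (Set.Icc (0:ℝ) x)) :=
      hGcx.aestronglyMeasurable measurableSet_Icc
    have hgG : Integrable (fun s => g s * G s) (volume.restrict (Set.Icc (0:ℝ) x)) := by
      refine Integrable.mono' (hgx.norm.mul_const CG) (hgx.1.mul hGmx) ?_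
      filter_upwards [ae_restrict_mem measurableSet_Icc] with s hs
      have h1 := hCG s (Set.Icc_subset_Icc le_rfl hx.2 hs)
      rw [norm_mul]
      exact mul_le_mul_of_nonneg_left h1 (norm_nonneg _)
    have hsum : Integrable (fun s => 2 * A' * g s + 2 * (g s * G s))
        (volume.restrict (Set.Icc (0:ℝ) x)) := (hgx.const_mul _).add (hgG.const_mul 2)
    have expand : ∀ s, 2 * g s * (A' + G s) = 2 * A' * g s + 2 * (g s * G s) := by
      intro s; ring
    calc (A' + G x) ^ 2 = A' ^ 2 + (2 * A' * G x + G x ^ 2) := by ring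
      _ = A' ^ 2 + ∫ s in Set.Icc (0:ℝ) x, (2 * A' * g s + 2 * (g s * G s)) := by
          rw [integral_add (hgx.const_mul _) (hgG.const_mul 2)]
          rw [MeasureTheory.integral_const_mul, ← htri', hGdef]
      _ = A' ^ 2 + ∫ s in Set.Icc (0:ℝ) x, (2 * g s * (A' + G s)) := by
          simp_rw [expand]
  -- step 2
  set h : ℝ → ℝ := fun s => 2 * g s * (A' + G s) with hhdef
  set H : ℝ → ℝ := fun x => ∫ s in Set.Icc (0:ℝ) x, h s with hHdef
  have hht : IntegrableOn h (Set.Icc 0 t) := by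
    have : Integrable (fun s => 2 * (g s * G s)) (volume.restrict (Set.Icc (0:ℝ) t)) := by
      refine Integrable.const_mul ?_ 2
      refine Integrable.mono' (hgt.norm.mul_const CG) (hgt.1.mul hGm) ?_
      filter_upwards [ae_restrict_mem measurableSet_Icc] with s hs
      rw [norm_mul]
      exact mul_le_mul_of_nonneg_left (hCG s hs) (norm_nonneg _)
    have := (hgt.const_mul (2 * A')).add this
    refine this.congr ?_
    filter_upwards with s
    simp only [Pi.add_apply]
    ring
  have hHc : ContinuousOn H (Set.Icc 0 t) := intervalIntegral.continuousOn_primitive_Icc hht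
  obtain ⟨CH, hCH⟩ := isCompact_Icc.exists_bound_of_continuousOn hHc
  have hHm : AEStronglyMeasurable H (volume.restrict (Set.Icc (0:ℝ) t)) :=
    hHc.aestronglyMeasurable measurableSet_Icc
  have hparts := parts htT.1 hν hht
  have hftc := exp_ftc ν 0 t htT.1
  -- integrability of the three pieces
  have hint1 : Integrable (fun s => 2 * ν * Real.exp (2 * ν * s) * A' ^ 2)
      (volume.restrict (Set.Icc (0:ℝ) t)) := Continuous.integrableOn_Icc (by fun_prop)
  have hint2 : Integrable (fun s => 2 * ν * Real.exp (2 * ν * s) * H s)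
      (volume.restrict (Set.Icc (0:ℝ) t)) := by
    have hec : Continuous (fun s : ℝ => 2 * ν * Real.exp (2 * ν * s)) := by fun_prop
    obtain ⟨CE, hCE⟩ := isCompact_Icc.exists_bound_of_continuousOn
      (hec.continuousOn (s := Set.Icc (0:ℝ) t))
    refine Integrable.mono' (integrable_const (CE * CH))
      ((hec.aestronglyMeasurable).mul hHm) ?_
    filter_upwards [ae_restrict_mem measurableSet_Icc] with s hs
    rw [norm_mul]
    have h1 := hCE s hs
    have h2 := hCH s hs
    have : (0:ℝ) ≤ CE := le_trans (norm_nonneg _) h1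
    nlinarith [norm_nonneg (2 * ν * Real.exp (2 * ν * s)), norm_nonneg (H s)]
  have hint3 : Integrable (fun s => Real.exp (2 * ν * s) * h s)
      (volume.restrict (Set.Icc (0:ℝ) t)) := by
    refine Integrable.mono' (hht.norm.const_mul (Real.exp (2 * ν * t)))
      ((Continuous.aestronglyMeasurable (by fun_prop)).mul hht.1) ?_
    filter_upwards [ae_restrict_mem measurableSet_Icc] with s hs
    rw [norm_mul, Real.norm_of_nonneg (Real.exp_pos _).le]
    have : Real.exp (2 * ν * s) ≤ Real.exp (2 * ν * t) :=
      Real.exp_le_exp.mpr (by nlinarith [hs.1, hs.2])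
    exact mul_le_mul_of_nonneg_right this (norm_nonneg _)
  -- identify target integrand
  have hintegrand : ∀ s ∈ Set.Icc (0:ℝ) t,
      2 * ν * (Real.exp (ν * s) * (A' + G s)) ^ 2
        + 2 * Real.exp (ν * s) * g s * (Real.exp (ν * s) * (A' + G s))
      = 2 * ν * Real.exp (2 * ν * s) * A' ^ 2 + 2 * ν * Real.exp (2 * ν * s) * H s
        + Real.exp (2 * ν * s) * h s := by
    intro s hs
    have hsq : Real.exp (ν * s) * Real.exp (ν * s) = Real.exp (2 * ν * s) := by
      rw [← Real.exp_add]; ring_nf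
    have hs1 : (A' + G s) ^ 2 = A' ^ 2 + H s := by
      rw [hHdef]; exact step1 s hs
    calc 2 * ν * (Real.exp (ν * s) * (A' + G s)) ^ 2
          + 2 * Real.exp (ν * s) * g s * (Real.exp (ν * s) * (A' + G s))
        = 2 * ν * (Real.exp (ν * s) * Real.exp (ν * s)) * (A' + G s) ^ 2
          + (Real.exp (ν * s) * Real.exp (ν * s)) * (2 * g s * (A' + G s)) := by ring
      _ = 2 * ν * Real.exp (2 * ν * s) * (A' ^ 2 + H s)
          + Real.exp (2 * ν * s) * h s := by rw [hsq, hs1, hhdef]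
      _ = 2 * ν * Real.exp (2 * ν * s) * A' ^ 2 + 2 * ν * Real.exp (2 * ν * s) * H s
          + Real.exp (2 * ν * s) * h s := by ring
  have hsq_t : Real.exp (ν * t) * Real.exp (ν * t) = Real.exp (2 * ν * t) := by
    rw [← Real.exp_add]; ring_nf
  have hs1t : (A' + G t) ^ 2 = A' ^ 2 + H t := step1 t ⟨htT.1, le_rfl⟩
  have e1 : ∫ s in Set.Icc (0:ℝ) t, 2 * ν * Real.exp (2 * ν * s) * A' ^ 2
      = A' ^ 2 * (Real.exp (2 * ν * t) - 1) := by
    rw [MeasureTheory.integral_mul_const, hftc]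
    simp [Real.exp_zero]
    ring
  have e2 : ∫ s in Set.Icc (0:ℝ) t, 2 * ν * Real.exp (2 * ν * s) * H s
      = Real.exp (2 * ν * t) * H t - ∫ s in Set.Icc (0:ℝ) t, Real.exp (2 * ν * s) * h s := by
    simp only [hHdef]
    exact hparts
  have hint12 : Integrable (fun s => 2 * ν * Real.exp (2 * ν * s) * A' ^ 2
      + 2 * ν * Real.exp (2 * ν * s) * H s) (volume.restrict (Set.Icc (0:ℝ) t)) :=
    hint1.add hint2
  have E := MeasureTheory.integral_add hint12 hint3
  have E2 := MeasureTheory.integral_add hint1 hint2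
  calc (Real.exp (ν * t) * (A' + G t)) ^ 2
      = Real.exp (2 * ν * t) * (A' ^ 2 + H t) := by
        rw [← hs1t, ← hsq_t]; ring
    _ = A' ^ 2 + ((∫ s in Set.Icc (0:ℝ) t, 2 * ν * Real.exp (2 * ν * s) * A' ^ 2)
          + (∫ s in Set.Icc (0:ℝ) t, 2 * ν * Real.exp (2 * ν * s) * H s)
          + ∫ s in Set.Icc (0:ℝ) t, Real.exp (2 * ν * s) * h s) := by
        rw [e1, e2]; ring
    _ = A' ^ 2 + ∫ s in Set.Icc (0:ℝ) t,
          (2 * ν * Real.exp (2 * ν * s) * A' ^ 2 + 2 * ν * Real.exp (2 * ν * s) * H s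
            + Real.exp (2 * ν * s) * h s) := by rw [E, E2]
    _ = A' ^ 2 + ∫ s in Set.Icc (0:ℝ) t,
          (2 * ν * (Real.exp (ν * s) * (A' + G s)) ^ 2
            + 2 * Real.exp (ν * s) * g s * (Real.exp (ν * s) * (A' + G s))) := by
        congr 1
        refine setIntegral_congr_fun measurableSet_Icc ?_
        intro s hs
        exact (hintegrand s hs).symm

lemma gronwall {T A ν : ℝ} (hT : 0 ≤ T) (hA : 0 ≤ A) (hν : 0 ≤ ν)
    {g : ℝ → ℝ} (hg0 : ∀ t, 0 ≤ g t) (hg : IntegrableOn g (Set.Icc 0 T))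
    {r : ℝ → ℝ} (hrc : ContinuousOn r (Set.Icc 0 T)) (hr0 : ∀ t, 0 ≤ r t)
    (key : ∀ t ∈ Set.Icc (0:ℝ) T,
      r t ^ 2 ≤ A ^ 2 + ∫ s in Set.Icc (0:ℝ) t, (2 * ν * r s ^ 2 + 2 * g s * r s)) :
    ∀ t ∈ Set.Icc (0:ℝ) T, r t ≤ Real.exp (ν * t) * (A + ∫ s in Set.Icc (0:ℝ) t, g s) := by
  have hGc : ContinuousOn (fun x => ∫ s in Set.Icc (0:ℝ) x, g s) (Set.Icc 0 T) :=
    intervalIntegral.continuousOn_primitive_Icc hg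
  have hG0 : ∀ x, 0 ≤ ∫ s in Set.Icc (0:ℝ) x, g s := fun x =>
    setIntegral_nonneg measurableSet_Icc (fun s _ => hg0 s)
  obtain ⟨Cr, hCr⟩ := isCompact_Icc.exists_bound_of_continuousOn hrc
  -- main claim with slack δ
  have main : ∀ δ > (0:ℝ), ∀ t ∈ Set.Icc (0:ℝ) T,
      r t < Real.exp (ν * t) * (A + δ + ∫ s in Set.Icc (0:ℝ) t, g s) := by
    intro δ hδ
    by_contra hcon
    push_neg at hcon
    obtain ⟨t₀, ht₀, ht₀le⟩ := hcon
    set C : ℝ → ℝ := fun x => Real.exp (ν * x) * (A + δ + ∫ s in Set.Icc (0:ℝ) x, g s)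
      with hCdef
    have hCpos : ∀ x, 0 ≤ x → 0 < C x := by
      intro x hx
      have h1 : 0 < A + δ + ∫ s in Set.Icc (0:ℝ) x, g s := by
        have := hG0 x; linarith
      exact mul_pos (Real.exp_pos _) h1
    have hCc : ContinuousOn C (Set.Icc 0 T) :=
      ((Real.continuous_exp.comp (continuous_const.mul continuous_id)).continuousOn).mul
        (continuousOn_const.add hGc)
    set S : Set ℝ := Set.Icc 0 T ∩ (fun x => r x - C x) ⁻¹' Set.Ici 0 with hSdef
    have hS_closed : IsClosed S :=
      (hrc.sub hCc).preimage_isClosed_of_isClosed isClosed_Icc isClosed_Ici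
    have hS_ne : S.Nonempty := ⟨t₀, ht₀, by
      simp only [Set.mem_preimage, Set.mem_Ici, hCdef]
      linarith⟩
    have hS_bdd : BddBelow S := ⟨0, fun x hx => hx.1.1⟩
    set t₁ := sInf S with ht₁def
    have ht₁S : t₁ ∈ S := hS_closed.csInf_mem hS_ne hS_bdd
    have ht₁Icc : t₁ ∈ Set.Icc (0:ℝ) T := ht₁S.1
    have hCr₁ : C t₁ ≤ r t₁ := by
      have := ht₁S.2
      simp only [Set.mem_preimage, Set.mem_Ici] at this
      linarith
    have hbefore : ∀ x, 0 ≤ x → x < t₁ → r x < C x := by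
      intro x hx hxt
      by_contra hxc
      push_neg at hxc
      have hxS : x ∈ S := by
        refine ⟨⟨hx, hxt.le.trans ht₁Icc.2⟩, ?_⟩
        simp only [Set.mem_preimage, Set.mem_Ici]
        linarith
      exact absurd (csInf_le hS_bdd hxS) (not_le.mpr hxt)
    -- integrability of both integrands on Icc 0 t₁
    have hsub : Set.Icc (0:ℝ) t₁ ⊆ Set.Icc (0:ℝ) T := Set.Icc_subset_Icc le_rfl ht₁Icc.2
    have hg₁ : IntegrableOn g (Set.Icc 0 t₁) := hg.mono_set hsub
    have hrc₁ : ContinuousOn r (Set.Icc 0 t₁) := hrc.mono hsub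
    have hCc₁ : ContinuousOn C (Set.Icc 0 t₁) := hCc.mono hsub
    have hrm : AEStronglyMeasurable r (volume.restrict (Set.Icc (0:ℝ) t₁)) :=
      hrc₁.aestronglyMeasurable measurableSet_Icc
    have hCm : AEStronglyMeasurable C (volume.restrict (Set.Icc (0:ℝ) t₁)) :=
      hCc₁.aestronglyMeasurable measurableSet_Icc
    obtain ⟨CC, hCC⟩ := isCompact_Icc.exists_bound_of_continuousOn hCc₁
    have hi1 : IntegrableOn (fun s => 2 * ν * r s ^ 2 + 2 * g s * r s) (Set.Icc 0 t₁) := by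
      refine Integrable.add ?_ ?_
      · exact ContinuousOn.integrableOn_Icc (by
          exact (continuousOn_const.mul ((hrc₁.pow 2))))
      · refine Integrable.mono' (hg₁.norm.const_mul (2 * Cr)) ((hg₁.1.const_mul 2).mul hrm) ?_
        filter_upwards [ae_restrict_mem measurableSet_Icc] with x hx
        have h1 := hCr x (hsub hx)
        have h2 := hg0 x
        have h3 := hr0 x
        rw [Real.norm_of_nonneg h2]
        rw [Real.norm_eq_abs, abs_mul, abs_mul]
        rw [abs_of_nonneg h2, abs_of_nonneg h3, abs_of_nonneg (by norm_num : (0:ℝ) ≤ 2)]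
        have h4 : r x ≤ Cr := by
          have := h1; rw [Real.norm_of_nonneg h3] at this; exact this
        nlinarith
    have hi2 : IntegrableOn (fun s => 2 * ν * C s ^ 2
        + 2 * Real.exp (ν * s) * g s * C s) (Set.Icc 0 t₁) := by
      refine Integrable.add ?_ ?_
      · exact ContinuousOn.integrableOn_Icc (continuousOn_const.mul (hCc₁.pow 2))
      · have hec : ContinuousOn (fun s : ℝ => 2 * Real.exp (ν * s)) (Set.Icc (0:ℝ) t₁) := by
          fun_prop
        obtain ⟨CE, hCE⟩ := isCompact_Icc.exists_bound_of_continuousOn hec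
        refine Integrable.mono' (hg₁.norm.const_mul (CE * CC))
          (((hec.aestronglyMeasurable measurableSet_Icc).mul hg₁.1).mul hCm) ?_
        filter_upwards [ae_restrict_mem measurableSet_Icc] with x hx
        have h1 := hCE x hx
        have h2 := hCC x hx
        have h3 := hg0 x
        rw [Real.norm_of_nonneg h3]
        have hCE0 : (0:ℝ) ≤ CE := le_trans (norm_nonneg _) h1
        have hCC0 : (0:ℝ) ≤ CC := le_trans (norm_nonneg _) h2
        calc ‖2 * Real.exp (ν * x) * g x * C x‖
            = ‖2 * Real.exp (ν * x)‖ * g x * ‖C x‖ := by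
              rw [norm_mul, norm_mul, Real.norm_of_nonneg h3]
          _ ≤ CE * g x * CC := by
              have := mul_le_mul_of_nonneg_right h1 h3
              exact mul_le_mul (by exact this) h2 (norm_nonneg _)
                (by positivity)
          _ = CE * CC * g x := by ring
    -- comparison of integrands a.e. on Icc 0 t₁
    have hae : ∀ᵐ x ∂(volume.restrict (Set.Icc (0:ℝ) t₁)),
        (2 * ν * r x ^ 2 + 2 * g x * r x) ≤ 2 * ν * C x ^ 2
          + 2 * Real.exp (ν * x) * g x * C x := by
      have hne : ∀ᵐ x ∂(volume : Measure ℝ), x ≠ t₁ := by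
        rw [ae_iff]
        simpa using measure_singleton t₁
      filter_upwards [ae_restrict_mem measurableSet_Icc, ae_restrict_of_ae hne] with x hx hxne
      have hxlt : x < t₁ := lt_of_le_of_ne hx.2 hxne
      have hrC : r x ≤ C x := (hbefore x hx.1 hxlt).le
      have h1 : r x ^ 2 ≤ C x ^ 2 := pow_le_pow_left₀ (hr0 x) hrC 2
      have h2 : 1 ≤ Real.exp (ν * x) := Real.one_le_exp (mul_nonneg hν hx.1)
      have h3 := hg0 x
      have h4 := hr0 x
      have h5 := (hCpos x hx.1).le
      have e1 : 2 * ν * r x ^ 2 ≤ 2 * ν * C x ^ 2 := by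
        have := mul_le_mul_of_nonneg_left h1 (by linarith : (0:ℝ) ≤ 2 * ν)
        linarith
      have e2 : 2 * g x * r x ≤ 2 * Real.exp (ν * x) * g x * C x := by
        nlinarith [mul_nonneg (sub_nonneg.mpr h2) (mul_nonneg h3 h5),
          mul_le_mul_of_nonneg_left hrC (mul_nonneg (by norm_num : (0:ℝ) ≤ 2) h3)]
      linarith
    have hmono := setIntegral_mono_ae_restrict hi1 hi2 hae
    -- comparison identity
    have hcomp := comp_id hT hν hg0 hg (A + δ) t₁ ht₁Icc
    have hk := key t₁ ht₁Icc
    have hCsq : C t₁ ^ 2 ≤ r t₁ ^ 2 := pow_le_pow_left₀ (hCpos t₁ ht₁Icc.1).le hCr₁ 2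
    have hAδ : A ^ 2 < (A + δ) ^ 2 := by nlinarith
    rw [hCdef] at hCsq
    simp only at hCsq hmono hcomp hk
    nlinarith [hk, hmono, hcomp, hCsq]
  -- remove the slack
  intro t htT
  refine le_of_forall_pos_le_add ?_
  intro ε hε
  have hδ : (0:ℝ) < ε / Real.exp (ν * t) := by positivity
  have := main _ hδ t htT
  have hexp : Real.exp (ν * t) * (ε / Real.exp (ν * t)) = ε := by
    field_simp
  nlinarith [this, Real.exp_pos (ν * t)]

/-- Hölder continuity with exponent `1/2` of the Carathéodory
solution `u` of `u̇(t) = f(t,u(t))`, `u(0) = u₀`, under Assumption A: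
`|u(s) − u(t)| ≤ (1 + sup_{z∈[0,T]} |u(z)|) ‖L_{K_u} + g‖_{L²(0,T)} |s−t|^{1/2}`,
where `K_u` is the closed ball of radius `e^{νT}(|u₀| + ∫₀ᵀ g)` around the origin. -/
theorem stmt1
    (T : ℝ) (hT : 0 < T) (d : ℕ) (u₀ : EuclideanSpace ℝ (Fin d))
    (f : ℝ → EuclideanSpace ℝ (Fin d) → EuclideanSpace ℝ (Fin d))
    (hf_meas : Measurable (Function.uncurry f))
    (Nf : Set ℝ) (hNf_null : volume Nf = 0)
    (ν : ℝ) (hν : 0 ≤ ν)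
    (hf_onesided : ∀ t ∈ Set.Icc (0:ℝ) T \ Nf, ∀ x y : EuclideanSpace ℝ (Fin d),
      ⟪f t x - f t y, x - y⟫ ≤ ν * ‖x - y‖ ^ 2)
    (g : ℝ → ℝ) (hg_meas : Measurable g) (hg_nonneg : ∀ t, 0 ≤ g t)
    (hg_L2 : MemLp g 2 (volume.restrict (Set.Icc (0:ℝ) T)))
    (hf_bound : ∀ t ∈ Set.Icc (0:ℝ) T \ Nf, ‖f t 0‖ ≤ g t)
    -- Assumption A (iii): local Lipschitz condition on every compact set
    (hf_lip : ∀ K : Set (EuclideanSpace ℝ (Fin d)), IsCompact K →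
      ∃ LK : ℝ → ℝ, Measurable LK ∧ (∀ t, 0 ≤ LK t) ∧
        MemLp LK 2 (volume.restrict (Set.Icc (0:ℝ) T)) ∧
        ∀ t ∈ Set.Icc (0:ℝ) T \ Nf, ∀ x ∈ K, ∀ y ∈ K,
          ‖f t x - f t y‖ ≤ LK t * ‖x - y‖)
    -- a Lipschitz function `L = L_{K_u}` associated to the compact set `K_u`
    (L : ℝ → ℝ) (hL_meas : Measurable L) (hL_nonneg : ∀ t, 0 ≤ L t)
    (hL_L2 : MemLp L 2 (volume.restrict (Set.Icc (0:ℝ) T)))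
    (hL_lip : ∀ t ∈ Set.Icc (0:ℝ) T \ Nf,
      ∀ x ∈ Metric.closedBall (0 : EuclideanSpace ℝ (Fin d))
          (Real.exp (ν * T) * (‖u₀‖ + ∫ s in (0:ℝ)..T, g s)),
      ∀ y ∈ Metric.closedBall (0 : EuclideanSpace ℝ (Fin d))
          (Real.exp (ν * T) * (‖u₀‖ + ∫ s in (0:ℝ)..T, g s)),
        ‖f t x - f t y‖ ≤ L t * ‖x - y‖)
    (u : ℝ → EuclideanSpace ℝ (Fin d))
    (hu_int : IntegrableOn (fun s => f s (u s)) (Set.Icc (0:ℝ) T))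
    (hu_sol : ∀ t ∈ Set.Icc (0:ℝ) T, u t = u₀ + ∫ s in (0:ℝ)..t, f s (u s)) :
    ∀ s ∈ Set.Icc (0:ℝ) T, ∀ t ∈ Set.Icc (0:ℝ) T,
      ‖u s - u t‖ ≤ (1 + sSup ((fun z => ‖u z‖) '' Set.Icc (0:ℝ) T)) *
        Real.sqrt (∫ r in Set.Icc (0:ℝ) T, (L r + g r) ^ 2) *
        Real.sqrt |s - t| := by
  haveI hfin : IsFiniteMeasure (volume.restrict (Set.Icc (0:ℝ) T)) := by
    constructor
    rw [Measure.restrict_apply_univ, Real.volume_Icc]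
    exact ENNReal.ofReal_lt_top
  have hgInt : IntegrableOn g (Set.Icc 0 T) := hg_L2.integrable one_le_two
  have hLInt : IntegrableOn L (Set.Icc 0 T) := hL_L2.integrable one_le_two
  have hiv : ∀ t : ℝ, 0 ≤ t →
      (∫ s in (0:ℝ)..t, f s (u s)) = ∫ s in Set.Icc (0:ℝ) t, f s (u s) := by
    intro t ht
    rw [intervalIntegral.integral_of_le ht, integral_Icc_eq_integral_Ioc]
  have hivg : (∫ s in (0:ℝ)..T, g s) = ∫ s in Set.Icc (0:ℝ) T, g s := by
    rw [intervalIntegral.integral_of_le hT.le, integral_Icc_eq_integral_Ioc]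
  have hu_eq : ∀ t ∈ Set.Icc (0:ℝ) T, u t = u₀ + ∫ s in Set.Icc (0:ℝ) t, f s (u s) := by
    intro t ht
    rw [hu_sol t ht, hiv t ht.1]
  have hucont : ContinuousOn u (Set.Icc 0 T) := by
    have h1 : ContinuousOn (fun t => u₀ + ∫ s in Set.Icc (0:ℝ) t, f s (u s))
        (Set.Icc 0 T) :=
      continuousOn_const.add (intervalIntegral.continuousOn_primitive_Icc hu_int)
    exact h1.congr hu_eq
  have hrc : ContinuousOn (fun t => ‖u t‖) (Set.Icc 0 T) := hucont.norm
  obtain ⟨M0, hM0⟩ := isCompact_Icc.exists_bound_of_continuousOn hucont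
  have hNfae : ∀ᵐ s ∂(volume : Measure ℝ), s ∉ Nf := by
    rw [ae_iff]
    simpa [Set.setOf_mem_eq, not_not] using hNf_null
  -- energy inequality
  have key : ∀ t ∈ Set.Icc (0:ℝ) T, ‖u t‖ ^ 2 ≤ ‖u₀‖ ^ 2
      + ∫ s in Set.Icc (0:ℝ) t, (2 * ν * ‖u s‖ ^ 2 + 2 * g s * ‖u s‖) := by
    intro t htT
    have hsubT : Set.Icc (0:ℝ) t ⊆ Set.Icc (0:ℝ) T := Set.Icc_subset_Icc le_rfl htT.2
    have hFt : IntegrableOn (fun s => f s (u s)) (Set.Icc 0 t) := hu_int.mono_set hsubT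
    have energy := energy_tri htT.1 hFt
    have hIcont : ContinuousOn (fun x => ∫ r in Set.Icc (0:ℝ) x, f r (u r))
        (Set.Icc 0 t) := intervalIntegral.continuousOn_primitive_Icc hFt
    obtain ⟨CI, hCI⟩ := isCompact_Icc.exists_bound_of_continuousOn hIcont
    have hIm : AEStronglyMeasurable (fun x => ∫ r in Set.Icc (0:ℝ) x, f r (u r))
        (volume.restrict (Set.Icc (0:ℝ) t)) :=
      hIcont.aestronglyMeasurable measurableSet_Icc
    have hFm := hFt.1
    have hFI : Integrable
        (fun s => ⟪f s (u s), ∫ r in Set.Icc (0:ℝ) s, f r (u r)⟫)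
        (volume.restrict (Set.Icc (0:ℝ) t)) := by
      refine Integrable.mono' (hFt.norm.mul_const CI) (hFm.inner hIm) ?_
      filter_upwards [ae_restrict_mem measurableSet_Icc] with s hs
      calc ‖⟪f s (u s), ∫ r in Set.Icc (0:ℝ) s, f r (u r)⟫‖
          ≤ ‖f s (u s)‖ * ‖∫ r in Set.Icc (0:ℝ) s, f r (u r)‖ := norm_inner_le_norm _ _
        _ ≤ ‖f s (u s)‖ * CI :=
            mul_le_mul_of_nonneg_left (hCI s hs) (norm_nonneg _)
    have hFu0 : Integrable (fun s => ⟪u₀, f s (u s)⟫)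
        (volume.restrict (Set.Icc (0:ℝ) t)) := by
      refine Integrable.mono' (hFt.norm.const_mul ‖u₀‖)
        (aestronglyMeasurable_const.inner hFm) ?_
      filter_upwards with s
      exact norm_inner_le_norm _ _
    have e2 := MeasureTheory.integral_add (μ := volume.restrict (Set.Icc (0:ℝ) t))
      (hFu0.const_mul 2) (hFI.const_mul 2)
    have hid : ‖u t‖ ^ 2 = ‖u₀‖ ^ 2 + ∫ s in Set.Icc (0:ℝ) t,
        (2 * ⟪u₀, f s (u s)⟫
          + 2 * ⟪f s (u s), ∫ r in Set.Icc (0:ℝ) s, f r (u r)⟫) := by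
      rw [hu_eq t htT, norm_add_sq_real]
      have e1 : ⟪u₀, ∫ s in Set.Icc (0:ℝ) t, f s (u s)⟫
          = ∫ s in Set.Icc (0:ℝ) t, ⟪u₀, f s (u s)⟫ :=
        (integral_inner (𝕜 := ℝ) hFt u₀).symm
      rw [e1, energy]
      have e3 : (∫ s in Set.Icc (0:ℝ) t, 2 * ⟪u₀, f s (u s)⟫)
          = 2 * ∫ s in Set.Icc (0:ℝ) t, ⟪u₀, f s (u s)⟫ :=
        MeasureTheory.integral_const_mul 2 _
      linarith [e2, e3]
    have hid2 : ‖u t‖ ^ 2 = ‖u₀‖ ^ 2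
        + ∫ s in Set.Icc (0:ℝ) t, 2 * ⟪f s (u s), u s⟫ := by
      rw [hid]
      congr 1
      refine setIntegral_congr_fun measurableSet_Icc ?_
      intro s hs
      have husi := hu_eq s (hsubT hs)
      show 2 * ⟪u₀, f s (u s)⟫ + 2 * ⟪f s (u s), ∫ r in Set.Icc (0:ℝ) s, f r (u r)⟫
        = 2 * ⟪f s (u s), u s⟫
      set v := f s (u s) with hv
      rw [husi, inner_add_right, real_inner_comm u₀ v]
      ring
    have haeb : ∀ᵐ s ∂(volume.restrict (Set.Icc (0:ℝ) t)),
        2 * ⟪f s (u s), u s⟫ ≤ 2 * ν * ‖u s‖ ^ 2 + 2 * g s * ‖u s‖ := by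
      filter_upwards [ae_restrict_mem measurableSet_Icc, ae_restrict_of_ae hNfae]
        with s hs hsnf
      have hmem : s ∈ Set.Icc (0:ℝ) T \ Nf := ⟨hsubT hs, hsnf⟩
      have h1 := hf_onesided s hmem (u s) 0
      rw [sub_zero] at h1
      have h2 : ⟪f s 0, u s⟫ ≤ g s * ‖u s‖ :=
        le_trans (real_inner_le_norm _ _)
          (mul_le_mul_of_nonneg_right (hf_bound s hmem) (norm_nonneg _))
      have h3 : ⟪f s (u s), u s⟫ = ⟪f s (u s) - f s 0, u s⟫ + ⟪f s 0, u s⟫ := by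
        rw [inner_sub_left]; ring
      linarith
    have hLHSint : Integrable (fun s => 2 * ⟪f s (u s), u s⟫)
        (volume.restrict (Set.Icc (0:ℝ) t)) := by
      refine Integrable.mono' (hFt.norm.const_mul (2 * M0))
        ((hFm.inner (hucont.mono hsubT |>.aestronglyMeasurable measurableSet_Icc)).const_mul 2) ?_
      filter_upwards [ae_restrict_mem measurableSet_Icc] with s hs
      have hb := hM0 s (hsubT hs)
      calc ‖2 * ⟪f s (u s), u s⟫‖ = 2 * ‖⟪f s (u s), u s⟫‖ := by
            rw [norm_mul]; norm_num
        _ ≤ 2 * (‖f s (u s)‖ * ‖u s‖) := by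
            have := norm_inner_le_norm (𝕜 := ℝ) (f s (u s)) (u s)
            linarith
        _ ≤ 2 * M0 * ‖f s (u s)‖ := by nlinarith [norm_nonneg (f s (u s)), norm_nonneg (u s)]
    have hRHSint : Integrable (fun s => 2 * ν * ‖u s‖ ^ 2 + 2 * g s * ‖u s‖)
        (volume.restrict (Set.Icc (0:ℝ) t)) := by
      refine Integrable.add ?_ ?_
      · exact ContinuousOn.integrableOn_Icc
          (continuousOn_const.mul ((hrc.mono hsubT).pow 2))
      · refine Integrable.mono' ((hgInt.mono_set hsubT).norm.const_mul (2 * M0))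
          (((hg_meas.aestronglyMeasurable.restrict.const_mul 2)).mul
            ((hrc.mono hsubT).aestronglyMeasurable measurableSet_Icc)) ?_
        filter_upwards [ae_restrict_mem measurableSet_Icc] with s hs
        have hb := hM0 s (hsubT hs)
        have h2 := hg_nonneg s
        rw [Real.norm_of_nonneg (mul_nonneg (mul_nonneg (by norm_num) h2) (norm_nonneg _)),
          Real.norm_of_nonneg h2]
        nlinarith [norm_nonneg (u s), mul_le_mul_of_nonneg_left hb h2]
    have hmono := setIntegral_mono_ae_restrict hLHSint hRHSint haeb
    rw [hid2]
    linarith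
  -- Gronwall a-priori bound
  have hbound := gronwall hT.le (norm_nonneg u₀) hν hg_nonneg hgInt hrc
    (fun z => norm_nonneg (u z)) key
  -- sup bound
  have himg : BddAbove ((fun z => ‖u z‖) '' Set.Icc (0:ℝ) T) :=
    (isCompact_Icc.image_of_continuousOn hrc).bddAbove
  set M := sSup ((fun z => ‖u z‖) '' Set.Icc (0:ℝ) T) with hMdef
  have hM : ∀ z ∈ Set.Icc (0:ℝ) T, ‖u z‖ ≤ M := fun z hz =>
    le_csSup himg ⟨z, hz, rfl⟩
  have hM0' : (0:ℝ) ≤ M := le_trans (norm_nonneg (u 0)) (hM 0 ⟨le_rfl, hT.le⟩)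
  -- ball membership
  have hgiv_nonneg : 0 ≤ ∫ s in (0:ℝ)..T, g s :=
    intervalIntegral.integral_nonneg hT.le (fun s _ => hg_nonneg s)
  have hR0 : 0 ≤ Real.exp (ν * T) * (‖u₀‖ + ∫ s in (0:ℝ)..T, g s) :=
    mul_nonneg (Real.exp_pos _).le (by linarith [norm_nonneg u₀])
  have huball : ∀ z ∈ Set.Icc (0:ℝ) T,
      ‖u z‖ ≤ Real.exp (ν * T) * (‖u₀‖ + ∫ s in (0:ℝ)..T, g s) := by
    intro z hz
    have h1 := hbound z hz
    have h2 : (∫ s in Set.Icc (0:ℝ) z, g s) ≤ ∫ s in Set.Icc (0:ℝ) T, g s := by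
      refine setIntegral_mono_set hgInt ?_ ?_
      · filter_upwards with s using hg_nonneg s
      · exact HasSubset.Subset.eventuallyLE (Set.Icc_subset_Icc le_rfl hz.2)
    have h3 : Real.exp (ν * z) ≤ Real.exp (ν * T) :=
      Real.exp_le_exp.mpr (mul_le_mul_of_nonneg_left hz.2 hν)
    have hb : (0:ℝ) ≤ ‖u₀‖ + ∫ s in Set.Icc (0:ℝ) z, g s :=
      add_nonneg (norm_nonneg _) (setIntegral_nonneg measurableSet_Icc fun s _ => hg_nonneg s)
    rw [hivg]
    calc ‖u z‖ ≤ Real.exp (ν * z) * (‖u₀‖ + ∫ s in Set.Icc (0:ℝ) z, g s) := h1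
      _ ≤ Real.exp (ν * T) * (‖u₀‖ + ∫ s in Set.Icc (0:ℝ) T, g s) :=
          mul_le_mul h3 (by linarith) hb (Real.exp_pos _).le
  -- the main claim for ordered pairs
  have hLgsq : IntegrableOn (fun s => (L s + g s) ^ 2) (Set.Icc (0:ℝ) T) :=
    (hL_L2.add hg_L2).integrable_sq
  have claim : ∀ a ∈ Set.Icc (0:ℝ) T, ∀ b ∈ Set.Icc (0:ℝ) T, a ≤ b →
      ‖u b - u a‖ ≤ (1 + M) * Real.sqrt (∫ r in Set.Icc (0:ℝ) T, (L r + g r) ^ 2)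
        * Real.sqrt (b - a) := by
    intro a ha b hb hab
    have hIocsub : Set.Ioc a b ⊆ Set.Icc (0:ℝ) T := fun x hx =>
      ⟨ha.1.trans hx.1.le, hx.2.trans hb.2⟩
    have hFIoc : IntegrableOn (fun s => f s (u s)) (Set.Ioc a b) := hu_int.mono_set hIocsub
    have hLgIcc : IntegrableOn (fun s => L s + g s) (Set.Icc (0:ℝ) T) := hLInt.add hgInt
    have hLgIoc : IntegrableOn (fun s => L s + g s) (Set.Ioc a b) :=
      hLgIcc.mono_set hIocsub
    have hdiffsol : u b - u a = ∫ s in Set.Ioc a b, f s (u s) := by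
      rw [hu_eq b hb, hu_eq a ha]
      have hunion : Set.Icc (0:ℝ) a ∪ Set.Ioc a b = Set.Icc (0:ℝ) b :=
        Set.Icc_union_Ioc_eq_Icc ha.1 hab
      have hsplit : (∫ s in Set.Icc (0:ℝ) b, f s (u s))
          = (∫ s in Set.Icc (0:ℝ) a, f s (u s)) + ∫ s in Set.Ioc a b, f s (u s) := by
        rw [← hunion, setIntegral_union
          (Set.disjoint_left.mpr (fun x hx hx' => absurd hx.2 (not_le.mpr hx'.1)))
          measurableSet_Ioc
          (hu_int.mono_set (Set.Icc_subset_Icc le_rfl ha.2)) hFIoc]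
      rw [hsplit]
      abel
    rw [hdiffsol]
    calc ‖∫ s in Set.Ioc a b, f s (u s)‖
        ≤ ∫ s in Set.Ioc a b, ‖f s (u s)‖ := norm_integral_le_integral_norm _
      _ ≤ ∫ s in Set.Ioc a b, (1 + M) * (L s + g s) := by
          refine setIntegral_mono_ae_restrict hFIoc.norm (hLgIoc.const_mul _) ?_
          filter_upwards [ae_restrict_mem measurableSet_Ioc, ae_restrict_of_ae hNfae]
            with s hs hsnf
          have hmem : s ∈ Set.Icc (0:ℝ) T \ Nf := ⟨hIocsub hs, hsnf⟩
          have hu_in : u s ∈ Metric.closedBall (0 : EuclideanSpace ℝ (Fin d))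
              (Real.exp (ν * T) * (‖u₀‖ + ∫ s in (0:ℝ)..T, g s)) := by
            rw [Metric.mem_closedBall, dist_zero_right]
            exact huball s (hIocsub hs)
          have h0_in : (0 : EuclideanSpace ℝ (Fin d)) ∈ Metric.closedBall
              (0 : EuclideanSpace ℝ (Fin d))
              (Real.exp (ν * T) * (‖u₀‖ + ∫ s in (0:ℝ)..T, g s)) :=
            Metric.mem_closedBall_self hR0
          have hlip := hL_lip s hmem (u s) hu_in 0 h0_in
          rw [sub_zero] at hlip
          have h4 : ‖f s (u s)‖ ≤ L s * ‖u s‖ + g s := by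
            have h5 := norm_add_le (f s (u s) - f s 0) (f s 0)
            simp only [sub_add_cancel] at h5
            have h6 := hf_bound s hmem
            linarith
          have h7 := hM s (hIocsub hs)
          have h8 := hL_nonneg s
          have h9 := hg_nonneg s
          nlinarith [mul_le_mul_of_nonneg_left h7 h8, mul_nonneg hM0' h9]
      _ = (1 + M) * ∫ s in Set.Ioc a b, (L s + g s) := MeasureTheory.integral_const_mul _ _
      _ ≤ (1 + M) * (Real.sqrt (∫ r in Set.Icc (0:ℝ) T, (L r + g r) ^ 2)
            * Real.sqrt (b - a)) := by
          refine mul_le_mul_of_nonneg_left ?_ (by linarith)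
          haveI : IsFiniteMeasure (volume.restrict (Set.Ioc a b)) := by
            constructor
            rw [Measure.restrict_apply_univ, Real.volume_Ioc]
            exact ENNReal.ofReal_lt_top
          have hpq : Real.HolderConjugate 2 2 := Real.holderConjugate_iff.mpr ⟨one_lt_two, by norm_num⟩
          have hmem2 : MemLp (fun s => L s + g s) (ENNReal.ofReal 2)
              (volume.restrict (Set.Ioc a b)) := by
            have h := (hL_L2.add hg_L2).mono_measure
              (Measure.restrict_mono hIocsub le_rfl)
            simpa [Pi.add_def] using h
          have hone : MemLp (fun _ : ℝ => (1:ℝ)) (ENNReal.ofReal 2)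
              (volume.restrict (Set.Ioc a b)) := memLp_const 1
          have hCS := integral_mul_le_Lp_mul_Lq_of_nonneg hpq
            (ae_of_all _ fun s => add_nonneg (hL_nonneg s) (hg_nonneg s))
            (ae_of_all _ fun _ => zero_le_one) hmem2 hone
          simp only [mul_one, Real.rpow_two, one_pow] at hCS
          have hconst : (∫ _ in Set.Ioc a b, (1:ℝ)) = b - a := by
            rw [integral_const, measureReal_def, Measure.restrict_apply_univ, Real.volume_Ioc,
              smul_eq_mul, mul_one, ENNReal.toReal_ofReal (by linarith)]
          rw [hconst] at hCS
          have hsqmono : (∫ s in Set.Ioc a b, (L s + g s) ^ 2)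
              ≤ ∫ r in Set.Icc (0:ℝ) T, (L r + g r) ^ 2 := by
            refine setIntegral_mono_set hLgsq ?_ ?_
            · filter_upwards with s using sq_nonneg _
            · exact HasSubset.Subset.eventuallyLE hIocsub
          calc (∫ s in Set.Ioc a b, (L s + g s))
              ≤ (∫ s in Set.Ioc a b, (L s + g s) ^ 2) ^ ((1:ℝ)/2)
                * (b - a) ^ ((1:ℝ)/2) := hCS
            _ = Real.sqrt (∫ s in Set.Ioc a b, (L s + g s) ^ 2) * Real.sqrt (b - a) := by
                rw [Real.sqrt_eq_rpow, Real.sqrt_eq_rpow]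
            _ ≤ Real.sqrt (∫ r in Set.Icc (0:ℝ) T, (L r + g r) ^ 2)
                * Real.sqrt (b - a) :=
                mul_le_mul_of_nonneg_right (Real.sqrt_le_sqrt hsqmono) (Real.sqrt_nonneg _)
      _ = (1 + M) * Real.sqrt (∫ r in Set.Icc (0:ℝ) T, (L r + g r) ^ 2)
            * Real.sqrt (b - a) := by ring
  -- conclude
  intro s hs t ht
  rcases le_total s t with h | h
  · rw [norm_sub_rev, abs_sub_comm, abs_of_nonneg (sub_nonneg.mpr h)]
    exact claim s hs t ht h
  · rw [abs_of_nonneg (sub_nonneg.mpr h)]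
    exact claim t ht s hs h
end

section
/- Let (Ω, F, P) be a probability space, let F̃ ⊆ F be a sub-σ-algebra that is complete with respect to P (contains all P-null sets of F), let M ∈ F̃ with P(M) = 1, and let h : Ω × ℝ^d → ℝ^d satisfy: (i) for every ω ∈ M the map x ↦ h(ω,x) is continuous; (ii) for every x ∈ ℝ^d the map ω ↦ h(ω,x) is F̃-measurable; (iii) for every ω ∈ M there exists a unique x ∈ ℝ^d with h(ω,x) = 0. Let U : Ω → ℝ^d be any map such that U(ω) is the unique root of h(ω,·) for every ω ∈ M (and U is arbitrary on Ω ∖ M). Then U is F̃-measurable. -/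
open MeasureTheory

/-- Measurable selection of the unique root: if `h(ω,·)` is
continuous for `ω` in a set `M` of full measure, `h(·,x)` is `F̃`-measurable for
every `x`, where `F̃` is a sub-σ-algebra containing all `P`-null sets, and for
every `ω ∈ M` the map `h(ω,·)` has a unique root `U(ω)`, then `U` is
`F̃`-measurable. -/
theorem stmt4
    {Ω : Type*} (d : ℕ) {F : MeasurableSpace Ω} (P : Measure Ω) [IsProbabilityMeasure P]
    (F' : MeasurableSpace Ω) (hF'le : F' ≤ F)
    (hF'complete : ∀ s : Set Ω, P s = 0 → MeasurableSet[F'] s)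
    (M : Set Ω) (hM_meas : MeasurableSet[F'] M) (hM_full : P M = 1)
    (h : Ω → EuclideanSpace ℝ (Fin d) → EuclideanSpace ℝ (Fin d))
    (hcont : ∀ ω ∈ M, Continuous (h ω))
    (hmeas : ∀ x : EuclideanSpace ℝ (Fin d), Measurable[F'] (fun ω => h ω x))
    (hroot : ∀ ω ∈ M, ∃! x : EuclideanSpace ℝ (Fin d), h ω x = 0)
    (U : Ω → EuclideanSpace ℝ (Fin d))
    (hU : ∀ ω ∈ M, h ω (U ω) = 0) :
    Measurable[F'] U := by
  classical
  
  -- Mᶜ is a null set, so every subset of Mᶜ is F'-measurable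
  have hMcnull : P Mᶜ = 0 := by
    have hMF : MeasurableSet[F] M := hF'le M hM_meas
    rw [measure_compl hMF (measure_ne_top P M), hM_full, measure_univ]
    simp
  have hnull : ∀ s : Set Ω, s ⊆ Mᶜ → MeasurableSet[F'] s := fun s hs =>
    hF'complete s (le_antisymm (hMcnull ▸ measure_mono hs) zero_le)
  refine measurable_of_isClosed fun C hC => ?_
  -- countable dense subsets of the compact pieces K n = C ∩ closedBall 0 n
  have hsep : ∀ n : ℕ, ∃ t : Set (EuclideanSpace ℝ (Fin d)), t ⊆ C ∩ Metric.closedBall 0 n ∧ t.Countable ∧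
      C ∩ Metric.closedBall 0 n ⊆ closure t := fun n =>
    (TopologicalSpace.IsSeparable.of_separableSpace _).exists_countable_dense_subset
  choose D hDsub hDcount hDdense using hsep
  -- the measurable approximation of U ⁻¹' C on M
  set T : ℕ → Set Ω := fun n => ⋂ m : ℕ, ⋃ x ∈ D n, {ω | ‖h ω x‖ < ((m : ℝ) + 1)⁻¹} with hT
  have hTmeas : ∀ n, MeasurableSet[F'] (T n) := by
    intro n
    exact MeasurableSet.iInter fun m => MeasurableSet.biUnion (hDcount n) fun x _ =>
      measurableSet_lt (Measurable.norm (hmeas x)) measurable_const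
  have hKcompact : ∀ n : ℕ, IsCompact (C ∩ Metric.closedBall (0 : EuclideanSpace ℝ (Fin d)) n) :=
    fun n => (isCompact_closedBall (0 : EuclideanSpace ℝ (Fin d)) n).inter_left hC
  -- the key identity on M
  have key : M ∩ U ⁻¹' C = M ∩ ⋃ n : ℕ, T n := by
    ext ω
    simp only [Set.mem_inter_iff, Set.mem_preimage, Set.mem_iUnion, and_congr_right_iff]
    intro hωM
    constructor
    · intro hUC
      refine ⟨⌈‖U ω‖⌉₊, Set.mem_iInter.2 fun m => ?_⟩
      have hUK : U ω ∈ C ∩ Metric.closedBall (0 : EuclideanSpace ℝ (Fin d)) ⌈‖U ω‖⌉₊ := by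
        refine ⟨hUC, ?_⟩
        simp only [Metric.mem_closedBall, dist_zero_right]
        exact Nat.le_ceil _
      have hUcl : U ω ∈ closure (D ⌈‖U ω‖⌉₊) := hDdense _ hUK
      -- the set where ‖h ω ·‖ < 1/(m+1) is an open neighborhood of U ω
      have hopen : IsOpen {x : EuclideanSpace ℝ (Fin d) | ‖h ω x‖ < ((m : ℝ) + 1)⁻¹} :=
        isOpen_lt ((hcont ω hωM).norm) continuous_const
      have hmem : U ω ∈ {x : EuclideanSpace ℝ (Fin d) | ‖h ω x‖ < ((m : ℝ) + 1)⁻¹} := by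
        rw [Set.mem_setOf_eq, hU ω hωM, norm_zero]
        positivity
      rcases mem_closure_iff.1 hUcl _ hopen hmem with ⟨x, hx1, hx2⟩
      exact Set.mem_biUnion hx2 hx1
    · rintro ⟨n, hn⟩
      -- extract a sequence x m ∈ D n with ‖h ω (x m)‖ < 1/(m+1)
      have hseq : ∀ m : ℕ, ∃ x ∈ D n, ‖h ω x‖ < ((m : ℝ) + 1)⁻¹ := by
        intro m
        have := Set.mem_iInter.1 hn m
        simpa using this
      choose x hxD hxlt using hseq
      have hxK : ∀ m, x m ∈ C ∩ Metric.closedBall (0 : EuclideanSpace ℝ (Fin d)) n := fun m => hDsub n (hxD m)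
      obtain ⟨a, haK, φ, hφ, hφtendsto⟩ := (hKcompact n).tendsto_subseq hxK
      -- h ω a = 0
      have htendsto0 : Filter.Tendsto (fun m => h ω (x (φ m))) Filter.atTop (nhds 0) := by
        rw [tendsto_zero_iff_norm_tendsto_zero]
        have hle : ∀ m, ‖h ω (x (φ m))‖ ≤ ((φ m : ℝ) + 1)⁻¹ := fun m => (hxlt (φ m)).le
        refine squeeze_zero (fun m => norm_nonneg _) hle ?_
        have h1 : Filter.Tendsto (fun m : ℕ => ((m : ℝ) + 1)⁻¹) Filter.atTop (nhds 0) :=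
          tendsto_one_div_add_atTop_nhds_zero_nat.congr (by simp [one_div])
        exact h1.comp hφ.tendsto_atTop
      have htendstoa : Filter.Tendsto (fun m => h ω (x (φ m))) Filter.atTop (nhds (h ω a)) :=
        Filter.Tendsto.comp ((hcont ω hωM).tendsto a) hφtendsto
      have ha0 : h ω a = 0 := tendsto_nhds_unique htendstoa htendsto0
      obtain ⟨z, hz, hzuniq⟩ := hroot ω hωM
      have h1 : a = z := hzuniq a ha0
      have h2 : U ω = z := hzuniq (U ω) (hU ω hωM)
      rw [h2, ← h1]
      exact haK.1
  -- conclude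
  have hdecomp : U ⁻¹' C = (M ∩ ⋃ n : ℕ, T n) ∪ (U ⁻¹' C \ M) := by
    rw [← key]
    ext ω
    by_cases hω : ω ∈ M <;> simp [hω]
  rw [hdecomp]
  exact ((hM_meas.inter (MeasurableSet.iUnion hTmeas)).union
    (hnull _ fun ω hω => hω.2))
end

section
/- Let f satisfy Assumption A and let u₀ ∈ ℝ^d. For every N ∈ ℕ with k·ν < 1, where k = T/N, there exists a unique grid function (U^n)_{n=0,…,N} in the class G²_N solving the randomized backward Euler scheme, i.e. U^0 = u₀ and, for every n ∈ {1,…,N}, U^n is F_n-measurable, U^n ∈ L²(Ω;ℝ^d), f(ξ_n, U^n) ∈ L²(Ω;ℝ^d), and U^n = U^{n−1} + k f(ξ_n, U^n) holds P-almost surely. -/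
set_option maxHeartbeats 1000000


open MeasureTheory RealInnerProductSpace
open Filter Topology

/-- A grid function `U` solves the randomized backward Euler scheme for `f`
with initial value `u₀`, `N` steps of size `k`, random evaluation points `ξ n`,
and filtration `𝓕`: `U 0 ≡ u₀` and, for every `n ∈ {1,…,N}`, `U n` is
`𝓕 n`-measurable and square-integrable, `f(ξ n, U n)` is `𝓕 n`-measurable and
square-integrable, and `U n = U (n-1) + k f(ξ n, U n)` almost surely. -/
def RBESolution {d : ℕ} {Ω : Type} [MeasurableSpace Ω] (P : Measure Ω)
    (N : ℕ) (k : ℝ) (𝓕 : ℕ → MeasurableSpace Ω) (ξ : ℕ → Ω → ℝ)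
    (f : ℝ → EuclideanSpace ℝ (Fin d) → EuclideanSpace ℝ (Fin d))
    (u₀ : EuclideanSpace ℝ (Fin d)) (U : ℕ → Ω → EuclideanSpace ℝ (Fin d)) : Prop :=
  (∀ ω, U 0 ω = u₀) ∧
  ∀ n, 1 ≤ n → n ≤ N →
    Measurable[𝓕 n] (U n) ∧ MemLp (U n) 2 P ∧
    Measurable[𝓕 n] (fun ω => f (ξ n ω) (U n ω)) ∧
    MemLp (fun ω => f (ξ n ω) (U n ω)) 2 P ∧
    (∀ᵐ ω ∂P, U n ω = U (n - 1) ω + k • f (ξ n ω) (U n ω))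

lemma rbe_key {d : ℕ} {k ν : ℝ} (hk : 0 ≤ k) (hν : 0 ≤ ν) (hkν : k * ν < 1)
    (φ : EuclideanSpace ℝ (Fin d) → EuclideanSpace ℝ (Fin d))
    (hmono : ∀ x y, ⟪φ x - φ y, x - y⟫ ≤ ν * ‖x - y‖ ^ 2)
    (hlip : ∀ K : Set (EuclideanSpace ℝ (Fin d)), IsCompact K →
       ∃ L : ℝ, 0 ≤ L ∧ ∀ x ∈ K, ∀ y ∈ K, ‖φ x - φ y‖ ≤ L * ‖x - y‖)
    (b : EuclideanSpace ℝ (Fin d)) :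
    ∃! x, x = b + k • φ x := by
  set c : ℝ := 1 - k * ν with hc
  have hc0 : 0 < c := by simp [hc]; linarith
  have hc1 : c ≤ 1 := by simp [hc]; positivity
  set F : EuclideanSpace ℝ (Fin d) → EuclideanSpace ℝ (Fin d) := fun x => x - k • φ x with hF
  have hFmono : ∀ x y, c * ‖x - y‖ ^ 2 ≤ ⟪F x - F y, x - y⟫ := by
    intro x y
    have h1 : F x - F y = (x - y) - k • (φ x - φ y) := by
      simp only [hF, smul_sub]; abel
    rw [h1, inner_sub_left, real_inner_smul_left, real_inner_self_eq_norm_sq]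
    have := mul_le_mul_of_nonneg_left (hmono x y) hk
    nlinarith [this]
  -- uniqueness
  have huniq : ∀ x y, x = b + k • φ x → y = b + k • φ y → x = y := by
    intro x y hx hy
    have hbx : F x = b := by show x - k • φ x = b; nth_rewrite 1 [hx]; abel
    have hby : F y = b := by show y - k • φ y = b; nth_rewrite 1 [hy]; abel
    have hFx : F x = F y := by rw [hbx, hby]
    have := hFmono x y
    rw [hFx, sub_self] at this
    simp only [inner_zero_left] at this
    have : ‖x - y‖ ^ 2 ≤ 0 := by nlinarith
    have : ‖x - y‖ = 0 := by nlinarith [sq_nonneg ‖x - y‖, norm_nonneg (x - y)]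
    exact sub_eq_zero.mp (norm_eq_zero.mp this)
  -- existence via Banach fixed point on a closed ball
  have hex : ∃ x, x = b + k • φ x := by
    set R : ℝ := 2 * ‖F b - b‖ / c + 1 with hR
    have hR0 : 0 < R := by positivity
    have hR2 : 2 * ‖F b - b‖ / c ≤ R := by linarith
    set K : Set (EuclideanSpace ℝ (Fin d)) := Metric.closedBall b R with hK
    have hKcompact : IsCompact K := isCompact_closedBall b R
    obtain ⟨L₀, hL₀0, hL₀⟩ := hlip K hKcompact
    set L : ℝ := 1 + k * L₀ with hL
    have hL1 : 1 ≤ L := by nlinarith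
    have hL0 : 0 < L := by linarith
    have hFlip : ∀ x ∈ K, ∀ y ∈ K, ‖F x - F y‖ ≤ L * ‖x - y‖ := by
      intro x hx y hy
      have h1 : F x - F y = (x - y) - k • (φ x - φ y) := by
        simp only [hF, smul_sub]; abel
      rw [h1]
      calc ‖(x - y) - k • (φ x - φ y)‖ ≤ ‖x - y‖ + ‖k • (φ x - φ y)‖ := norm_sub_le _ _
        _ ≤ ‖x - y‖ + k * (L₀ * ‖x - y‖) := by
            rw [norm_smul, Real.norm_eq_abs, abs_of_nonneg hk]
            gcongr; exact hL₀ x hx y hy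
        _ = L * ‖x - y‖ := by ring
    set lam : ℝ := c / L ^ 2 with hlam
    have hlam0 : 0 < lam := by positivity
    have hlamL : lam * L ^ 2 = c := by rw [hlam]; exact div_mul_cancel₀ c (by positivity)
    have hlamc : lam * c ≤ 1 := by
      have : c ≤ L := le_trans hc1 hL1
      rw [hlam, div_mul_eq_mul_div, div_le_one (by positivity)]
      nlinarith
    set q : ℝ := Real.sqrt (1 - lam * c) with hq
    have hq0 : 0 ≤ q := Real.sqrt_nonneg _
    have hqsq : q ^ 2 = 1 - lam * c := Real.sq_sqrt (by linarith)
    have hq1 : q < 1 := by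
      rw [hq, show √(1 - lam * c) < 1 ↔ 1 - lam * c < 1 ^ 2 from Real.sqrt_lt' one_pos]
      linarith [mul_pos hlam0 hc0]
    set TT : EuclideanSpace ℝ (Fin d) → EuclideanSpace ℝ (Fin d) :=
      fun x => x - lam • (F x - b) with hTT
    have hcontr : ∀ x ∈ K, ∀ y ∈ K, ‖TT x - TT y‖ ≤ q * ‖x - y‖ := by
      intro x hx y hy
      have h1 : TT x - TT y = (x - y) - lam • (F x - F y) := by
        simp only [hTT, smul_sub]; abel
      have h2 : ‖TT x - TT y‖ ^ 2 ≤ (1 - lam * c) * ‖x - y‖ ^ 2 := by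
        rw [h1, norm_sub_sq_real, real_inner_smul_right, real_inner_comm, norm_smul,
          Real.norm_eq_abs, abs_of_nonneg hlam0.le]
        have hin := hFmono x y
        have hnrm := hFlip x hx y hy
        have h4 : (lam * ‖F x - F y‖) ^ 2 ≤ lam * c * ‖x - y‖ ^ 2 := by
          have h5 : ‖F x - F y‖ ^ 2 ≤ L ^ 2 * ‖x - y‖ ^ 2 := by
            have := norm_nonneg (F x - F y)
            nlinarith
          calc (lam * ‖F x - F y‖) ^ 2 = lam ^ 2 * ‖F x - F y‖ ^ 2 := by ring
            _ ≤ lam ^ 2 * (L ^ 2 * ‖x - y‖ ^ 2) := by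
                exact mul_le_mul_of_nonneg_left h5 (by positivity)
            _ = lam * (lam * L ^ 2) * ‖x - y‖ ^ 2 := by ring
            _ = lam * c * ‖x - y‖ ^ 2 := by rw [hlamL]
        have h6 : lam * (c * ‖x - y‖ ^ 2) ≤ lam * ⟪F x - F y, x - y⟫ :=
          mul_le_mul_of_nonneg_left hin hlam0.le
        nlinarith [h4, h6]
      have h3 : ‖TT x - TT y‖ ^ 2 ≤ (q * ‖x - y‖) ^ 2 := by
        rw [mul_pow, hqsq]; exact h2
      calc ‖TT x - TT y‖ = Real.sqrt (‖TT x - TT y‖ ^ 2) := (Real.sqrt_sq (norm_nonneg _)).symm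
        _ ≤ Real.sqrt ((q * ‖x - y‖) ^ 2) := Real.sqrt_le_sqrt h3
        _ = q * ‖x - y‖ := Real.sqrt_sq (by positivity)
    -- 1 - q ≥ lam * c / 2
    have hqgap : lam * c / 2 ≤ 1 - q := by
      have h1 : (1 - q) * (1 + q) = lam * c := by nlinarith [hqsq]
      nlinarith [hq0, hq1]
    have hbK : b ∈ K := Metric.mem_closedBall_self hR0.le
    -- invariance of the ball
    have hTb : ‖TT b - b‖ = lam * ‖F b - b‖ := by
      have : TT b - b = -(lam • (F b - b)) := by simp only [hTT]; abel
      rw [this, norm_neg, norm_smul, Real.norm_eq_abs, abs_of_nonneg hlam0.le]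
    have hinv : ∀ x ∈ K, TT x ∈ K := by
      intro x hx
      rw [hK, Metric.mem_closedBall, dist_eq_norm]
      have hxK : ‖x - b‖ ≤ R := by
        rw [hK, Metric.mem_closedBall, dist_eq_norm] at hx; exact hx
      have h1 : ‖TT x - b‖ ≤ ‖TT x - TT b‖ + ‖TT b - b‖ := by
        have : TT x - b = (TT x - TT b) + (TT b - b) := by abel
        rw [this]; exact norm_add_le _ _
      have h2 : ‖TT x - TT b‖ ≤ q * R := by
        calc ‖TT x - TT b‖ ≤ q * ‖x - b‖ := hcontr x hx b hbK
          _ ≤ q * R := by exact mul_le_mul_of_nonneg_left hxK hq0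
      have h3 : lam * ‖F b - b‖ ≤ (1 - q) * R := by
        calc lam * ‖F b - b‖ = (lam * c / 2) * (2 * ‖F b - b‖ / c) := by
              field_simp
          _ ≤ (1 - q) * R := by
              apply mul_le_mul hqgap hR2 (by positivity) (by linarith)
      calc ‖TT x - b‖ ≤ q * R + lam * ‖F b - b‖ := by rw [hTb] at h1; linarith
        _ ≤ q * R + (1 - q) * R := by linarith
        _ = R := by ring
    -- Banach fixed point on the closed ball
    have hKclosed : IsClosed K := Metric.isClosed_closedBall
    have hmaps : Set.MapsTo TT K K := hinv
    have hcontrW : ContractingWith ⟨q, hq0⟩ (hmaps.restrict TT K K) := by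
      constructor
      · exact_mod_cast hq1
      · apply LipschitzWith.of_dist_le_mul
        intro x y
        rw [Subtype.dist_eq, Subtype.dist_eq, Set.MapsTo.val_restrict_apply,
          Set.MapsTo.val_restrict_apply, dist_eq_norm, dist_eq_norm]
        exact hcontr x.1 x.2 y.1 y.2
    obtain ⟨y, hyK, hyfix, -, -⟩ :=
      hcontrW.exists_fixedPoint' hKclosed.isComplete hmaps hbK (edist_ne_top _ _)
    refine ⟨y, ?_⟩
    have h0 : lam • (F y - b) = 0 := by
      have : y - lam • (F y - b) = y := hyfix
      have := sub_eq_self.mp this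
      exact this
    have h1 : F y = b := by
      rcases smul_eq_zero.mp h0 with h | h
      · exact absurd h (ne_of_gt hlam0)
      · exact sub_eq_zero.mp h
    have h2 : y - k • φ y = b := h1
    calc y = (y - k • φ y) + k • φ y := by abel
      _ = b + k • φ y := by rw [h2]
  obtain ⟨x, hx⟩ := hex
  exact ⟨x, hx, fun y hy => huniq y x hy hx⟩

lemma rbe_Phi {d : ℕ} {k ν : ℝ} (hk : 0 ≤ k) (hν : 0 ≤ ν) (hkν : k * ν < 1)
    (f : ℝ → EuclideanSpace ℝ (Fin d) → EuclideanSpace ℝ (Fin d))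
    (hf_meas : Measurable (Function.uncurry f))
    (Good : Set ℝ) (hGood : MeasurableSet Good)
    (hmono : ∀ t ∈ Good, ∀ x y : EuclideanSpace ℝ (Fin d),
      ⟪f t x - f t y, x - y⟫ ≤ ν * ‖x - y‖ ^ 2)
    (hlip : ∀ t ∈ Good, ∀ K : Set (EuclideanSpace ℝ (Fin d)), IsCompact K →
       ∃ L : ℝ, 0 ≤ L ∧ ∀ x ∈ K, ∀ y ∈ K, ‖f t x - f t y‖ ≤ L * ‖x - y‖) :
    ∃ Φ : ℝ → EuclideanSpace ℝ (Fin d) → EuclideanSpace ℝ (Fin d),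
      Measurable (Function.uncurry Φ) ∧
      (∀ t ∉ Good, ∀ b, Φ t b = b) ∧
      (∀ t ∈ Good, ∀ b, Φ t b = b + k • f t (Φ t b)) ∧
      (∀ t ∈ Good, ∀ b x, x = b + k • f t x → x = Φ t b) := by
  classical
  have hc0 : (0:ℝ) < 1 - k * ν := by linarith
  set c : ℝ := 1 - k * ν with hc
  -- the solution map
  have hEU : ∀ t ∈ Good, ∀ b : EuclideanSpace ℝ (Fin d), ∃! x, x = b + k • f t x := fun t ht b =>
    rbe_key hk hν hkν (f t) (hmono t ht) (hlip t ht) b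
  set Φ : ℝ → EuclideanSpace ℝ (Fin d) → EuclideanSpace ℝ (Fin d) := fun t b =>
    if h : t ∈ Good then (hEU t h b).exists.choose else b with hΦ
  have hΦ_good : ∀ t ∈ Good, ∀ b, Φ t b = b + k • f t (Φ t b) := by
    intro t ht b
    simp only [hΦ, dif_pos ht]
    exact (hEU t ht b).exists.choose_spec
  have hΦ_bad : ∀ t ∉ Good, ∀ b, Φ t b = b := by
    intro t ht b; simp only [hΦ, dif_neg ht]
  have hΦ_uniq : ∀ t ∈ Good, ∀ b x, x = b + k • f t x → x = Φ t b := by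
    intro t ht b x hx
    exact (hEU t ht b).unique hx (hΦ_good t ht b)
  -- strong monotonicity of x ↦ x - k • f t x
  have hFmono : ∀ t ∈ Good, ∀ x y : EuclideanSpace ℝ (Fin d),
      c * ‖x - y‖ ^ 2 ≤ ⟪(x - k • f t x) - (y - k • f t y), x - y⟫ := by
    intro t ht x y
    have h1 : (x - k • f t x) - (y - k • f t y) = (x - y) - k • (f t x - f t y) := by
      rw [smul_sub]; abel
    rw [h1, inner_sub_left, real_inner_smul_left, real_inner_self_eq_norm_sq]
    have := mul_le_mul_of_nonneg_left (hmono t ht x y) hk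
    nlinarith [this]
  -- dense sequence
  have : Nonempty (EuclideanSpace ℝ (Fin d)) := ⟨0⟩
  set e : ℕ → EuclideanSpace ℝ (Fin d) := TopologicalSpace.denseSeq (EuclideanSpace ℝ (Fin d)) with he
  have hdense : DenseRange e := TopologicalSpace.denseRange_denseSeq (EuclideanSpace ℝ (Fin d))
  -- approximation predicate
  set p : ℕ → ℕ → ℝ × EuclideanSpace ℝ (Fin d) → Prop := fun m j x =>
    ‖e j - k • f x.1 (e j) - x.2‖ < 1 / (m + 1) ∨ x.1 ∉ Good with hp
  have hpex : ∀ m x, ∃ j, p m j x := by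
    rintro m ⟨t, b⟩
    by_cases hx : t ∈ Good
    · -- density + local Lipschitz continuity near the solution
      set z := Φ t b with hz
      have hzfix : z - k • f t z = b := by
        rw [hz]; nth_rewrite 1 [hΦ_good t hx b]; abel
      obtain ⟨L, hL0, hL⟩ := hlip t hx (Metric.closedBall z 1) (isCompact_closedBall _ _)
      have hεpos : (0:ℝ) < 1 / (m + 1) := by positivity
      set δ : ℝ := min 1 ((1 / (m + 1)) / (1 + k * L) / 2) with hδ
      have hδpos : 0 < δ := by
        apply lt_min one_pos; positivity
      obtain ⟨j, hj⟩ := hdense.exists_dist_lt z hδpos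
      refine ⟨j, Or.inl ?_⟩
      show ‖e j - k • f t (e j) - b‖ < 1 / (m + 1)
      have hjz : ‖e j - z‖ < δ := by
        rw [← dist_eq_norm]; rw [dist_comm]; exact hj
      have hjK : e j ∈ Metric.closedBall z 1 := by
        rw [Metric.mem_closedBall, dist_eq_norm]
        exact le_trans hjz.le (min_le_left _ _)
      have hzK : z ∈ Metric.closedBall z 1 := Metric.mem_closedBall_self one_pos.le
      have h1 : e j - k • f t (e j) - b = (e j - z) - k • (f t (e j) - f t z) := by
        rw [← hzfix, smul_sub]; abel
      rw [h1]
      calc ‖(e j - z) - k • (f t (e j) - f t z)‖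
          ≤ ‖e j - z‖ + ‖k • (f t (e j) - f t z)‖ := norm_sub_le _ _
        _ ≤ ‖e j - z‖ + k * (L * ‖e j - z‖) := by
            rw [norm_smul, Real.norm_eq_abs, abs_of_nonneg hk]
            gcongr
            exact hL (e j) hjK z hzK
        _ = (1 + k * L) * ‖e j - z‖ := by ring
        _ ≤ (1 + k * L) * δ := by
            have h2 : (0:ℝ) ≤ 1 + k * L := by positivity
            exact mul_le_mul_of_nonneg_left hjz.le h2
        _ ≤ (1 + k * L) * ((1 / (m + 1)) / (1 + k * L) / 2) := by
            have h2 : (0:ℝ) ≤ 1 + k * L := by positivity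
            exact mul_le_mul_of_nonneg_left (min_le_right _ _) h2
        _ < 1 / (m + 1) := by
            have h3 : (0:ℝ) < 1 + k * L := by positivity
            have h4 : (1 + k * L) * ((1 / (m + 1)) / (1 + k * L) / 2) = (1 / (m + 1)) / 2 := by
              field_simp
            rw [h4]
            linarith [hεpos]
    · exact ⟨0, Or.inr hx⟩
  set Ψ : ℕ → ℝ × EuclideanSpace ℝ (Fin d) → EuclideanSpace ℝ (Fin d) := fun m x =>
    if x.1 ∈ Good then e (Nat.find (hpex m x)) else x.2 with hΨ
  -- measurability of each Ψ m
  have hΨmeas : ∀ m, Measurable (Ψ m) := by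
    intro m
    have hS : ∀ j, MeasurableSet {x : ℝ × EuclideanSpace ℝ (Fin d) | p m j x} := by
      intro j
      have h1 : Measurable fun x : ℝ × EuclideanSpace ℝ (Fin d) => e j - k • f x.1 (e j) - x.2 := by
        apply Measurable.sub
        · apply Measurable.const_sub
          exact (hf_meas.comp (measurable_fst.prodMk measurable_const)).const_smul k
        · exact measurable_snd
      have h2 : MeasurableSet {x : ℝ × EuclideanSpace ℝ (Fin d) | ‖e j - k • f x.1 (e j) - x.2‖ < 1 / (m + 1)} :=
        measurableSet_lt (h1.norm) measurable_const
      have h3 : MeasurableSet {x : ℝ × EuclideanSpace ℝ (Fin d) | x.1 ∉ Good} :=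
        (hGood.preimage measurable_fst).compl
      exact h2.union h3
    have h4 : Measurable fun x : ℝ × EuclideanSpace ℝ (Fin d) => e (Nat.find (hpex m x)) :=
      Measurable.find (f := fun j _ => e j) (fun j => measurable_const) (fun j => hS j) (hpex m)
    exact Measurable.ite (hGood.preimage measurable_fst) h4 measurable_snd
  -- pointwise convergence of Ψ m to Φ
  have hconv : ∀ x : ℝ × EuclideanSpace ℝ (Fin d), Tendsto (fun m => Ψ m x) atTop (𝓝 (Φ x.1 x.2)) := by
    rintro ⟨t, b⟩
    show Tendsto (fun m => Ψ m (t, b)) atTop (𝓝 (Φ t b))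
    by_cases hx : t ∈ Good
    · set z := Φ t b with hz
      have hzfix : z - k • f t z = b := by
        rw [hz]; nth_rewrite 1 [hΦ_good t hx b]; abel
      have hbound : ∀ m, ‖Ψ m (t, b) - z‖ ≤ (1 / (m + 1)) / c := by
        intro m
        have hΨx : Ψ m (t, b) = e (Nat.find (hpex m (t, b))) := by
          simp only [hΨ, if_pos hx]
        set j := Nat.find (hpex m (t, b)) with hj
        have hjp : p m j (t, b) := Nat.find_spec (hpex m (t, b))
        have hjp' : ‖e j - k • f t (e j) - b‖ < 1 / (m + 1) := by
          rcases hjp with h | h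
          · exact h
          · exact absurd hx h
        have hmono' := hFmono t hx (e j) z
        have h5 : (e j - k • f t (e j)) - (z - k • f t z) = e j - k • f t (e j) - b := by
          rw [hzfix]
        rw [h5] at hmono'
        have h6 : ⟪e j - k • f t (e j) - b, e j - z⟫ ≤ ‖e j - k • f t (e j) - b‖ * ‖e j - z‖ :=
          real_inner_le_norm _ _
        have h7 : c * ‖e j - z‖ ^ 2 ≤ (1 / (m + 1)) * ‖e j - z‖ := by
          calc c * ‖e j - z‖ ^ 2 ≤ ‖e j - k • f t (e j) - b‖ * ‖e j - z‖ := le_trans hmono' h6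
            _ ≤ (1 / (m + 1)) * ‖e j - z‖ := by
                apply mul_le_mul_of_nonneg_right hjp'.le (norm_nonneg _)
        rw [hΨx]
        rw [le_div_iff₀ hc0]
        rcases eq_or_lt_of_le (norm_nonneg (e j - z)) with h8 | h8
        · rw [← h8, zero_mul]; positivity
        · nlinarith [h7, h8]
      rw [tendsto_iff_norm_sub_tendsto_zero]
      apply squeeze_zero (fun m => norm_nonneg _) hbound
      rw [show (0:ℝ) = 0 / c by ring]
      apply Tendsto.div_const
      exact tendsto_one_div_add_atTop_nhds_zero_nat
    · have h9 : ∀ m, Ψ m (t, b) = b := fun m => by simp only [hΨ, if_neg hx]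
      simp only [h9, hΦ_bad t hx b]
      exact tendsto_const_nhds
  have hΦmeas : Measurable (Function.uncurry Φ) := by
    apply measurable_of_tendsto_metrizable hΨmeas
    rw [tendsto_pi_nhds]
    intro x
    exact hconv x
  exact ⟨Φ, hΦmeas, hΦ_bad, hΦ_good, hΦ_uniq⟩

/-- Under Assumption A, if `kν < 1` with `k = T/N`, the
randomized backward Euler scheme has a unique solution in the class `G²_N` of
square-integrable adapted grid functions (uniqueness holding almost surely). -/
theorem stmt5
    (T : ℝ) (hT : 0 < T) (d : ℕ) (u₀ : EuclideanSpace ℝ (Fin d))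
    (f : ℝ → EuclideanSpace ℝ (Fin d) → EuclideanSpace ℝ (Fin d))
    (hf_meas : Measurable (Function.uncurry f))
    (Nf : Set ℝ) (hNf_null : volume Nf = 0)
    (ν : ℝ) (hν : 0 ≤ ν)
    (hf_onesided : ∀ t ∈ Set.Icc (0:ℝ) T \ Nf, ∀ x y : EuclideanSpace ℝ (Fin d),
      ⟪f t x - f t y, x - y⟫ ≤ ν * ‖x - y‖ ^ 2)
    (g : ℝ → ℝ) (hg_meas : Measurable g) (hg_nonneg : ∀ t, 0 ≤ g t)
    (hg_L2 : MemLp g 2 (volume.restrict (Set.Icc (0:ℝ) T)))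
    (hf_bound : ∀ t ∈ Set.Icc (0:ℝ) T \ Nf, ‖f t 0‖ ≤ g t)
    (hf_lip : ∀ K : Set (EuclideanSpace ℝ (Fin d)), IsCompact K →
      ∃ LK : ℝ → ℝ, Measurable LK ∧ (∀ t, 0 ≤ LK t) ∧
        MemLp LK 2 (volume.restrict (Set.Icc (0:ℝ) T)) ∧
        ∀ t ∈ Set.Icc (0:ℝ) T \ Nf, ∀ x ∈ K, ∀ y ∈ K,
          ‖f t x - f t y‖ ≤ LK t * ‖x - y‖)
    -- the randomized temporal setting
    (N : ℕ) (hN : 0 < N) (k : ℝ) (hk : k = T / N) (hkν : k * ν < 1)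
    (Ω : Type) [mΩ : MeasurableSpace Ω] (P : Measure Ω) [IsProbabilityMeasure P]
    (hP_complete : ∀ s : Set Ω, P s = 0 → MeasurableSet s)
    (τ : ℕ → Ω → ℝ) (hτ_meas : ∀ n, Measurable (τ n))
    (hτ_indep : ProbabilityTheory.iIndepFun
      (m := fun _ : Fin N => (inferInstance : MeasurableSpace ℝ))
      (fun i : Fin N => τ (i + 1)) P)
    (hτ_unif : ∀ n, 1 ≤ n → n ≤ N →
      Measure.map (τ n) P = volume.restrict (Set.Icc (0:ℝ) 1))
    (ξ : ℕ → Ω → ℝ) (hξ : ∀ n ω, ξ n ω = ((n : ℝ) - 1) * k + k * τ n ω)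
    (𝓕 : ℕ → MeasurableSpace Ω)
    (h𝓕 : ∀ n, 𝓕 n = MeasurableSpace.generateFrom {s : Set Ω | P s = 0} ⊔
      ⨆ j ∈ Finset.Icc 1 n, MeasurableSpace.comap (τ j)
        (inferInstance : MeasurableSpace ℝ)) :
    ∃ U : ℕ → Ω → EuclideanSpace ℝ (Fin d),
      RBESolution P N k 𝓕 ξ f u₀ U ∧
      ∀ U' : ℕ → Ω → EuclideanSpace ℝ (Fin d),
        RBESolution P N k 𝓕 ξ f u₀ U' → ∀ n ≤ N, U' n =ᵐ[P] U n := by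
  classical
  have hk0 : 0 < k := by rw [hk]; positivity
  have hc0 : (0:ℝ) < 1 - k * ν := by linarith
  set c : ℝ := 1 - k * ν with hc
  -- a measurable null superset of Nf
  obtain ⟨N', hNfN', hN'meas, hN'null⟩ := exists_measurable_superset_of_null hNf_null
  set Good : Set ℝ := Set.Icc 0 T \ N' with hGood_def
  have hGoodmeas : MeasurableSet Good := measurableSet_Icc.diff hN'meas
  have hGood_sub : Good ⊆ Set.Icc 0 T \ Nf := fun t ht =>
    ⟨ht.1, fun h => ht.2 (hNfN' h)⟩
  -- the measurable solution map
  obtain ⟨Φ, hΦmeas, hΦbad, hΦgood, hΦuniq⟩ :=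
    rbe_Phi (d := d) hk0.le hν hkν f hf_meas Good hGoodmeas
      (fun t ht x y => hf_onesided t (hGood_sub ht) x y)
      (fun t ht K hK => by
        obtain ⟨LK, _, hLK0, _, hLKlip⟩ := hf_lip K hK
        exact ⟨LK t, hLK0 t, fun x hx y hy => hLKlip t (hGood_sub ht) x hx y hy⟩)
  -- the scheme
  set U : ℕ → Ω → EuclideanSpace ℝ (Fin d) := fun n => Nat.rec
      (motive := fun _ => Ω → EuclideanSpace ℝ (Fin d))
      (fun _ => u₀) (fun m Um ω => Φ (ξ (m + 1) ω) (Um ω)) n with hU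
  have hU0 : ∀ ω, U 0 ω = u₀ := fun ω => rfl
  have hUsucc : ∀ m ω, U (m + 1) ω = Φ (ξ (m + 1) ω) (U m ω) := fun m ω => rfl
  -- filtration facts
  have h𝓕le : ∀ n, 𝓕 n ≤ mΩ := by
    intro n
    rw [h𝓕 n]
    apply sup_le
    · exact MeasurableSpace.generateFrom_le fun s hs => hP_complete s hs
    · exact iSup₂_le fun j _ => (hτ_meas j).comap_le
  have h𝓕mono : ∀ m n : ℕ, m ≤ n → 𝓕 m ≤ 𝓕 n := by
    intro m n hmn
    rw [h𝓕 m, h𝓕 n]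
    apply sup_le_sup_left
    exact iSup₂_le fun j hj => le_iSup₂ (f := fun (j : ℕ) (_ : j ∈ Finset.Icc 1 n) =>
      MeasurableSpace.comap (τ j) inferInstance) j
      (Finset.Icc_subset_Icc_right hmn hj)
  have hτ𝓕 : ∀ n, 1 ≤ n → Measurable[𝓕 n] (τ n) := by
    intro n hn
    have hle : MeasurableSpace.comap (τ n) inferInstance ≤ 𝓕 n := by
      rw [h𝓕 n]
      exact le_sup_of_le_right (le_iSup₂ (f := fun (j : ℕ) (_ : j ∈ Finset.Icc 1 n) =>
        MeasurableSpace.comap (τ j) inferInstance) n (Finset.mem_Icc.mpr ⟨hn, le_refl n⟩))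
    exact fun s hs => hle _ ⟨s, hs, rfl⟩
  have hξ𝓕 : ∀ n, 1 ≤ n → Measurable[𝓕 n] (ξ n) := by
    intro n hn
    have : ξ n = fun ω => ((n : ℝ) - 1) * k + k * τ n ω := funext (hξ n)
    rw [this]
    exact (measurable_const.add ((hτ𝓕 n hn).const_mul k))
  -- measurability and integrability of U, by induction
  have hUmeas : ∀ n, Measurable[𝓕 n] (U n) := by
    intro n
    induction n with
    | zero => exact measurable_const
    | succ m ih =>
      have hpair : Measurable[𝓕 (m + 1)] fun ω => (ξ (m + 1) ω, U m ω) :=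
        (hξ𝓕 (m + 1) (Nat.succ_le_succ (Nat.zero_le m))).prodMk
          (ih.mono (h𝓕mono m (m + 1) (Nat.le_succ m)) le_rfl)
      have : Measurable[𝓕 (m + 1)] fun ω => Function.uncurry Φ (ξ (m + 1) ω, U m ω) :=
        hΦmeas.comp hpair
      exact this
  have hUmeasΩ : ∀ n, Measurable (U n) := fun n => (hUmeas n).mono (h𝓕le n) le_rfl
  -- τ is a.s. in [0,1]
  have hτIcc : ∀ n, 1 ≤ n → n ≤ N → ∀ᵐ ω ∂P, τ n ω ∈ Set.Icc (0:ℝ) 1 := by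
    intro n h1 h2
    have hmap := hτ_unif n h1 h2
    rw [ae_iff]
    have : {ω | ¬ τ n ω ∈ Set.Icc (0:ℝ) 1} = τ n ⁻¹' (Set.Icc (0:ℝ) 1)ᶜ := rfl
    rw [this, ← Measure.map_apply (hτ_meas n) measurableSet_Icc.compl, hmap,
      Measure.restrict_apply measurableSet_Icc.compl, Set.compl_inter_self,
      measure_empty]
  -- ξ n is a.s. in Good
  have haff_meas : ∀ n : ℕ, Measurable (fun s : ℝ => ((n : ℝ) - 1) * k + k * s) :=
    fun n => measurable_const.add (measurable_id.const_mul k)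
  have hmapaff : ∀ n : ℕ, Measure.map (fun s : ℝ => ((n : ℝ) - 1) * k + k * s) volume
      = ENNReal.ofReal |k⁻¹| • volume := by
    intro n
    have h1 : (fun s : ℝ => ((n : ℝ) - 1) * k + k * s)
        = (fun x : ℝ => ((n : ℝ) - 1) * k + x) ∘ (fun s : ℝ => k * s) := rfl
    have hmm := Measure.map_map (μ := volume) (g := fun x : ℝ => ((n : ℝ) - 1) * k + x)
      (f := fun s : ℝ => k * s) (measurable_id.const_add _) (measurable_id.const_mul k)
    have h2 : Measure.map (fun s : ℝ => k * s) volume = ENNReal.ofReal |k⁻¹| • volume :=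
      Real.map_volume_mul_left (ne_of_gt hk0)
    rw [h1, ← hmm, h2, Measure.map_smul,
      MeasureTheory.map_add_left_eq_self volume (((n : ℝ) - 1) * k)]
  have hTk : (N : ℝ) * k = T := by
    rw [hk]; field_simp
  -- ξ n is a.s. in Good
  have hξGood : ∀ n, 1 ≤ n → n ≤ N → ∀ᵐ ω ∂P, ξ n ω ∈ Good := by
    intro n h1 h2
    have hIcc := hτIcc n h1 h2
    have hN'ae : ∀ᵐ ω ∂P, ξ n ω ∉ N' := by
      set A : Set ℝ := (fun s : ℝ => ((n : ℝ) - 1) * k + k * s) ⁻¹' N' with hA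
      have hAmeas : MeasurableSet A := (haff_meas n) hN'meas
      have hAvol : volume A = 0 := by
        have h3 := Measure.map_apply (μ := volume) (haff_meas n) hN'meas
        rw [hmapaff n] at h3
        have h4 : volume A = ENNReal.ofReal |k⁻¹| * volume N' := by
          rw [← h3]; rfl
        rw [h4, hN'null, mul_zero]
      rw [ae_iff]
      have hset : {ω | ¬ ξ n ω ∉ N'} = τ n ⁻¹' A := by
        ext ω
        simp only [Set.mem_setOf_eq, not_not, Set.mem_preimage, hA, hξ n ω]
      rw [hset, ← Measure.map_apply (hτ_meas n) hAmeas, hτ_unif n h1 h2,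
        Measure.restrict_apply hAmeas]
      exact measure_mono_null Set.inter_subset_left hAvol
    filter_upwards [hIcc, hN'ae] with ω hω1 hω2
    refine ⟨⟨?_, ?_⟩, hω2⟩
    · rw [hξ n ω]
      have hn1 : (1:ℝ) ≤ (n:ℝ) := by exact_mod_cast h1
      have h9 := hω1.1
      have h10 : 0 ≤ ((n:ℝ) - 1) * k := mul_nonneg (by linarith) hk0.le
      have h11 : 0 ≤ k * τ n ω := mul_nonneg hk0.le h9
      linarith
    · rw [hξ n ω]
      have hnN : (n:ℝ) ≤ (N:ℝ) := by exact_mod_cast h2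
      have h9 := hω1.2
      have h10 : k * τ n ω ≤ k * 1 := mul_le_mul_of_nonneg_left h9 hk0.le
      have h11 : 0 ≤ ((N:ℝ) - (n:ℝ)) * k := mul_nonneg (by linarith) hk0.le
      nlinarith [hTk]
  -- ξ n is measurable (w.r.t. mΩ)
  have hξmeasΩ : ∀ n, Measurable (ξ n) := by
    intro n
    have : ξ n = fun ω => ((n : ℝ) - 1) * k + k * τ n ω := funext (hξ n)
    rw [this]
    exact measurable_const.add ((hτ_meas n).const_mul k)
  -- law of ξ n is dominated by a multiple of Lebesgue on [0,T]
  have hmapξ_le : ∀ n, 1 ≤ n → n ≤ N →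
      Measure.map (ξ n) P ≤ ENNReal.ofReal |k⁻¹| • volume.restrict (Set.Icc (0:ℝ) T) := by
    intro n h1 h2
    have hcomp : ξ n = (fun s : ℝ => ((n : ℝ) - 1) * k + k * s) ∘ τ n := funext (hξ n)
    have hmm : Measure.map (ξ n) P
        = Measure.map (fun s : ℝ => ((n : ℝ) - 1) * k + k * s) (Measure.map (τ n) P) := by
      rw [hcomp, ← Measure.map_map (haff_meas n) (hτ_meas n)]
    rw [hmm, hτ_unif n h1 h2]
    rw [Measure.le_iff]
    intro A hA
    rw [Measure.map_apply (haff_meas n) hA, Measure.restrict_apply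
      ((haff_meas n) hA)]
    have hsub : (fun s : ℝ => ((n : ℝ) - 1) * k + k * s) ⁻¹' A ∩ Set.Icc (0:ℝ) 1
        ⊆ (fun s : ℝ => ((n : ℝ) - 1) * k + k * s) ⁻¹' (A ∩ Set.Icc (0:ℝ) T) := by
      rintro s ⟨hs1, hs2⟩
      refine ⟨hs1, ?_, ?_⟩
      · show (0:ℝ) ≤ ((n:ℝ) - 1) * k + k * s
        have hn1 : (1:ℝ) ≤ (n:ℝ) := by exact_mod_cast h1
        have h9 := hs2.1
        have h10 : 0 ≤ ((n:ℝ) - 1) * k := mul_nonneg (by linarith) hk0.le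
        have h11 : 0 ≤ k * s := mul_nonneg hk0.le h9
        linarith
      · show ((n:ℝ) - 1) * k + k * s ≤ T
        have hnN : (n:ℝ) ≤ (N:ℝ) := by exact_mod_cast h2
        have h9 := hs2.2
        have h10 : k * s ≤ k * 1 := mul_le_mul_of_nonneg_left h9 hk0.le
        have h11 : 0 ≤ ((N:ℝ) - (n:ℝ)) * k := mul_nonneg (by linarith) hk0.le
        nlinarith [hTk]
    calc volume ((fun s : ℝ => ((n : ℝ) - 1) * k + k * s) ⁻¹' A ∩ Set.Icc (0:ℝ) 1)
        ≤ volume ((fun s : ℝ => ((n : ℝ) - 1) * k + k * s) ⁻¹' (A ∩ Set.Icc (0:ℝ) T)) :=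
          measure_mono hsub
      _ = ENNReal.ofReal |k⁻¹| * volume (A ∩ Set.Icc (0:ℝ) T) := by
          rw [← Measure.map_apply (haff_meas n) (hA.inter measurableSet_Icc), hmapaff n]
          rfl
      _ = (ENNReal.ofReal |k⁻¹| • volume.restrict (Set.Icc (0:ℝ) T)) A := by
          rw [Measure.smul_apply, Measure.restrict_apply hA]
          rfl
  -- g ∘ ξ n is square integrable
  have hgξ : ∀ n, 1 ≤ n → n ≤ N → MemLp (fun ω => g (ξ n ω)) 2 P := by
    intro n h1 h2
    have hmap : MemLp g 2 (Measure.map (ξ n) P) := by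
      apply MemLp.mono_measure (hmapξ_le n h1 h2)
      exact hg_L2.smul_measure ENNReal.ofReal_ne_top
    exact (memLp_map_measure_iff hg_meas.aestronglyMeasurable
      (hξmeasΩ n).aemeasurable).mp hmap
  -- a norm bound on Φ
  have hΦnorm : ∀ t ∈ Good, ∀ b : EuclideanSpace ℝ (Fin d),
      ‖Φ t b‖ ≤ (‖b‖ + k * g t) / c := by
    intro t ht b
    set x := Φ t b with hx
    have hxe : x = b + k • f t x := by rw [hx]; exact hΦgood t ht b
    have hb : x - k • f t x = b := by nth_rewrite 1 [hxe]; abel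
    have hrhs0 : 0 ≤ ‖b‖ + k * g t := by
      have := hg_nonneg t
      positivity
    have h5 : x - k • (f t x - f t 0) = b + k • f t 0 := by
      rw [smul_sub, ← hb]; abel
    have h6 : c * ‖x‖ ^ 2 ≤ ⟪b + k • f t 0, x⟫ := by
      rw [← h5, inner_sub_left, real_inner_smul_left, real_inner_self_eq_norm_sq]
      have hmono' := hf_onesided t (hGood_sub ht) x 0
      rw [sub_zero] at hmono'
      have := mul_le_mul_of_nonneg_left hmono' hk0.le
      nlinarith [this]
    have h7 : ⟪b + k • f t 0, x⟫ ≤ (‖b‖ + k * g t) * ‖x‖ := by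
      calc ⟪b + k • f t 0, x⟫ ≤ ‖b + k • f t 0‖ * ‖x‖ := real_inner_le_norm _ _
        _ ≤ (‖b‖ + k * g t) * ‖x‖ := by
            apply mul_le_mul_of_nonneg_right _ (norm_nonneg x)
            calc ‖b + k • f t 0‖ ≤ ‖b‖ + ‖k • f t 0‖ := norm_add_le _ _
              _ ≤ ‖b‖ + k * g t := by
                  rw [norm_smul, Real.norm_eq_abs, abs_of_nonneg hk0.le]
                  have := hf_bound t (hGood_sub ht)
                  gcongr
    rw [le_div_iff₀ hc0]
    rcases eq_or_lt_of_le (norm_nonneg x) with h8 | h8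
    · rw [← h8, zero_mul]; exact hrhs0
    · nlinarith [h6, h7, h8]
  -- square integrability of U, by induction
  have hUmem : ∀ n, n ≤ N → MemLp (U n) 2 P := by
    intro n
    induction n with
    | zero => exact fun _ => memLp_const u₀
    | succ m ih =>
      intro hmN
      have hm : m ≤ N := le_trans (Nat.le_succ m) hmN
      have ihm := ih hm
      have h1m : 1 ≤ m + 1 := Nat.succ_le_succ (Nat.zero_le m)
      set D : Ω → ℝ := fun ω =>
        (1 / c) * (‖U m ω‖ + k * g (ξ (m + 1) ω)) + ‖U m ω‖ with hD
      have hDmem : MemLp D 2 P := by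
        apply MemLp.add
        · exact ((ihm.norm.add ((hgξ (m + 1) h1m hmN).const_mul k)).const_mul (1 / c))
        · exact ihm.norm
      have hDbound : ∀ ω, ‖U (m + 1) ω‖ ≤ D ω := by
        intro ω
        have hD0 : 0 ≤ (1 / c) * (‖U m ω‖ + k * g (ξ (m + 1) ω)) := by
          have := hg_nonneg (ξ (m + 1) ω)
          have := norm_nonneg (U m ω)
          positivity
        by_cases hgood : ξ (m + 1) ω ∈ Good
        · rw [hUsucc]
          calc ‖Φ (ξ (m + 1) ω) (U m ω)‖
              ≤ (‖U m ω‖ + k * g (ξ (m + 1) ω)) / c := hΦnorm _ hgood _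
            _ = (1 / c) * (‖U m ω‖ + k * g (ξ (m + 1) ω)) := by ring
            _ ≤ D ω := by
                rw [hD]
                have := norm_nonneg (U m ω)
                simp only []
                linarith
        · rw [hUsucc, hΦbad _ hgood]
          rw [hD]; simp only []
          linarith [hD0]
      apply MemLp.of_le hDmem (hUmeasΩ (m + 1)).aestronglyMeasurable
      apply ae_of_all
      intro ω
      exact le_trans (hDbound ω) (le_abs_self _)
  -- the a.s. fixed point equation
  have hUeq : ∀ m, m + 1 ≤ N →
      ∀ᵐ ω ∂P, U (m + 1) ω = U m ω + k • f (ξ (m + 1) ω) (U (m + 1) ω) := by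
    intro m hmN
    filter_upwards [hξGood (m + 1) (Nat.succ_le_succ (Nat.zero_le m)) hmN] with ω hgood
    rw [hUsucc m ω]
    exact hΦgood _ hgood _
  -- measurability of the f-term
  have hfterm_meas : ∀ n, 1 ≤ n →
      Measurable[𝓕 n] fun ω => f (ξ n ω) (U n ω) := by
    intro n hn
    exact hf_meas.comp ((hξ𝓕 n hn).prodMk (hUmeas n))
  -- square integrability of the f-term
  have hfterm_mem : ∀ m, m + 1 ≤ N →
      MemLp (fun ω => f (ξ (m + 1) ω) (U (m + 1) ω)) 2 P := by
    intro m hmN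
    have hm : m ≤ N := le_trans (Nat.le_succ m) hmN
    set D₂ : Ω → ℝ := fun ω => k⁻¹ * (‖U (m + 1) ω‖ + ‖U m ω‖) with hD₂
    have hD₂mem : MemLp D₂ 2 P :=
      ((hUmem (m + 1) hmN).norm.add (hUmem m hm).norm).const_mul k⁻¹
    apply MemLp.of_le hD₂mem
      (((hfterm_meas (m + 1) (Nat.succ_le_succ (Nat.zero_le m))).mono
        (h𝓕le (m + 1)) le_rfl).aestronglyMeasurable)
    filter_upwards [hUeq m hmN] with ω heq
    have h1 : U (m + 1) ω - U m ω = k • f (ξ (m + 1) ω) (U (m + 1) ω) := by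
      nth_rewrite 1 [heq]; abel
    have h2 : f (ξ (m + 1) ω) (U (m + 1) ω) = k⁻¹ • (U (m + 1) ω - U m ω) := by
      rw [h1, smul_smul, inv_mul_cancel₀ (ne_of_gt hk0), one_smul]
    rw [h2]
    calc ‖k⁻¹ • (U (m + 1) ω - U m ω)‖
        = k⁻¹ * ‖U (m + 1) ω - U m ω‖ := by
          rw [norm_smul, Real.norm_eq_abs, abs_of_nonneg (by positivity)]
      _ ≤ k⁻¹ * (‖U (m + 1) ω‖ + ‖U m ω‖) := by
          have := norm_sub_le (U (m + 1) ω) (U m ω)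
          have hk' : (0:ℝ) ≤ k⁻¹ := by positivity
          exact mul_le_mul_of_nonneg_left this hk'
      _ ≤ ‖D₂ ω‖ := le_abs_self _
  -- conclusion
  refine ⟨U, ⟨hU0, ?_⟩, ?_⟩
  · intro n h1 h2
    obtain ⟨m, rfl⟩ : ∃ m, n = m + 1 := ⟨n - 1, (Nat.succ_pred_eq_of_pos h1).symm⟩
    refine ⟨hUmeas (m + 1), hUmem (m + 1) h2, hfterm_meas (m + 1) h1,
      hfterm_mem m h2, ?_⟩
    have := hUeq m h2
    simpa only [Nat.add_sub_cancel] using this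
  · intro U' hU' n
    induction n with
    | zero =>
      intro _
      apply ae_of_all
      intro ω
      rw [hU'.1 ω, hU0 ω]
    | succ m ih =>
      intro hmN
      have hm : m ≤ N := le_trans (Nat.le_succ m) hmN
      have ihm := ih hm
      have heq' := (hU'.2 (m + 1) (Nat.succ_le_succ (Nat.zero_le m)) hmN).2.2.2.2
      simp only [Nat.add_sub_cancel] at heq'
      filter_upwards [heq', hξGood (m + 1) (Nat.succ_le_succ (Nat.zero_le m)) hmN,
        ihm] with ω h1 h2 h3
      have h4 : U' (m + 1) ω = Φ (ξ (m + 1) ω) (U' m ω) :=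
        hΦuniq _ h2 _ _ h1
      rw [h4, h3, ← hUsucc]
end

section
/- Let 𝒜 satisfy Assumption B, let f ∈ L²(0,T;H), u₀ ∈ H, let V_h ⊆ V be a finite-dimensional subspace, and let N ∈ ℕ with step size k = T/N. Then there exists a unique solution (U_h^n)_{n=0,…,N} of the fully discrete randomized backward Euler–Galerkin scheme such that for every n ∈ {1,…,N} the random variable U_h^n : Ω → V_h is F_n-measurable and P-almost surely V_h-valued; i.e., U_h^0 ∈ V_h is the unique element with (j U_h^0, j w)_H = (u₀, j w)_H for all w ∈ V_h, and P-almost surely, for every n ∈ {1,…,N}, (j U_h^n, j w)_H + k ⟨𝒜(ξ_n) U_h^n, w⟩ = k (f(ξ_n), j w)_H + (j U_h^{n−1}, j w)_H for all w ∈ V_h. -/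
open MeasureTheory RealInnerProductSpace

section Aux

variable {E : Type*} [NormedAddCommGroup E] [InnerProductSpace ℝ E]

/-- One step of the Zarantonello iteration. -/
noncomputable def phiAux (ρ : ℝ) (B : E → E) (F : E) (x : E) : E := x - ρ • (B x - F)

lemma phiAux_fixed_iff {ρ : ℝ} (hρ : ρ ≠ 0) {B : E → E} {F x : E} :
    Function.IsFixedPt (phiAux ρ B F) x ↔ B x = F := by
  unfold Function.IsFixedPt phiAux
  rw [sub_eq_self, smul_eq_zero, sub_eq_zero]
  simp [hρ]

lemma phiAux_sub (ρ : ℝ) (B : E → E) (F : E) (x y : E) :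
    phiAux ρ B F x - phiAux ρ B F y = (x - y) - ρ • (B x - B y) := by
  simp only [phiAux, smul_sub]
  abel

lemma phiAux_contracting {B : E → E} {C m : ℝ} (hC : 0 < C) (hm : 0 < m) (hmC : m ≤ C)
    (hlip : ∀ x y, ‖B x - B y‖ ≤ C * ‖x - y‖)
    (hmono : ∀ x y, m * ‖x - y‖ ^ 2 ≤ ⟪B x - B y, x - y⟫) (F : E) :
    ContractingWith (Real.toNNReal (Real.sqrt (1 - (m / C) ^ 2)))
      (phiAux (m / C ^ 2) B F) := by
  have hmC2 : (m / C) ^ 2 ≤ 1 := by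
    rw [div_pow]
    rw [div_le_one (by positivity)]
    exact pow_le_pow_left₀ hm.le hmC 2
  have hk1 : 0 ≤ 1 - (m / C) ^ 2 := by linarith
  set κ : ℝ := Real.sqrt (1 - (m / C) ^ 2) with hκ
  have hκ0 : 0 ≤ κ := Real.sqrt_nonneg _
  constructor
  · have hlt : κ < 1 := by
      rw [hκ, Real.sqrt_lt' one_pos]
      have : 0 < (m / C) ^ 2 := by positivity
      nlinarith
    exact Real.toNNReal_lt_one.mpr hlt
  · apply LipschitzWith.of_dist_le_mul
    intro x y
    rw [dist_eq_norm, dist_eq_norm, Real.coe_toNNReal _ hκ0]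
    set ρ : ℝ := m / C ^ 2 with hρ
    have hρ0 : 0 < ρ := by positivity
    have key : ‖phiAux ρ B F x - phiAux ρ B F y‖ ^ 2 ≤ (κ * ‖x - y‖) ^ 2 := by
      rw [phiAux_sub]
      rw [@norm_sub_sq_real E]
      have h1 : m * ‖x - y‖ ^ 2 ≤ ⟪B x - B y, x - y⟫ := hmono x y
      have h2 : ‖B x - B y‖ ≤ C * ‖x - y‖ := hlip x y
      have h2' : ‖B x - B y‖ ^ 2 ≤ C ^ 2 * ‖x - y‖ ^ 2 := by
        rw [show C ^ 2 * ‖x - y‖ ^ 2 = (C * ‖x - y‖) ^ 2 by ring]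
        exact pow_le_pow_left₀ (norm_nonneg _) h2 2
      have hinner : ⟪x - y, ρ • (B x - B y)⟫ = ρ * ⟪B x - B y, x - y⟫ := by
        rw [real_inner_smul_right, real_inner_comm]
      have hnr : ‖ρ • (B x - B y)‖ ^ 2 = ρ ^ 2 * ‖B x - B y‖ ^ 2 := by
        rw [norm_smul]
        simp [abs_of_pos hρ0, mul_pow]
      rw [hinner, hnr]
      have hκsq : κ ^ 2 = 1 - (m / C) ^ 2 := Real.sq_sqrt hk1
      have hCne : (C : ℝ) ≠ 0 := ne_of_gt hC
      rw [mul_pow, hκsq]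
      have expand : ‖x - y‖ ^ 2 - 2 * (ρ * ⟪B x - B y, x - y⟫) + ρ ^ 2 * ‖B x - B y‖ ^ 2
          ≤ ‖x - y‖ ^ 2 - 2 * ρ * (m * ‖x - y‖ ^ 2) + ρ ^ 2 * (C ^ 2 * ‖x - y‖ ^ 2) := by
        nlinarith [hρ0.le]
      refine expand.trans (le_of_eq ?_)
      rw [hρ]
      field_simp
      ring
    have h := Real.sqrt_le_sqrt key
    rwa [Real.sqrt_sq (norm_nonneg _), Real.sqrt_sq (by positivity)] at h

variable {ι : Type*} [Fintype ι]

/-- The vector representing a continuous linear functional w.r.t. an orthonormal basis. -/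
noncomputable def dualVec (b : OrthonormalBasis ι ℝ E) (ℓ : E →L[ℝ] ℝ) : E :=
  ∑ i, ℓ (b i) • b i

lemma inner_dualVec (b : OrthonormalBasis ι ℝ E) (ℓ : E →L[ℝ] ℝ) (w : E) :
    ⟪dualVec b ℓ, w⟫ = ℓ w := by
  unfold dualVec
  rw [sum_inner]
  simp_rw [real_inner_smul_left]
  conv_rhs => rw [← b.sum_repr' w]
  rw [map_sum]
  simp_rw [_root_.map_smul, smul_eq_mul]
  exact Finset.sum_congr rfl fun i _ => mul_comm _ _

lemma dualVec_sub (b : OrthonormalBasis ι ℝ E) (ℓ₁ ℓ₂ : E →L[ℝ] ℝ) :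
    dualVec b (ℓ₁ - ℓ₂) = dualVec b ℓ₁ - dualVec b ℓ₂ := by
  unfold dualVec
  rw [← Finset.sum_sub_distrib]
  simp [sub_smul]

lemma norm_dualVec_le (b : OrthonormalBasis ι ℝ E) (ℓ : E →L[ℝ] ℝ) :
    ‖dualVec b ℓ‖ ≤ ‖ℓ‖ := by
  rcases eq_or_ne (dualVec b ℓ) 0 with h | h
  · simp [h]
  · have h1 : ‖dualVec b ℓ‖ ^ 2 = ℓ (dualVec b ℓ) := by
      rw [← real_inner_self_eq_norm_sq, inner_dualVec]
    have h2 : ℓ (dualVec b ℓ) ≤ ‖ℓ‖ * ‖dualVec b ℓ‖ :=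
      (le_abs_self _).trans (ℓ.le_opNorm _)
    have h3 : 0 < ‖dualVec b ℓ‖ := norm_pos_iff.mpr h
    nlinarith

end Aux

/-- The grid function `U` solves the fully discrete randomized backward
Euler–Galerkin scheme for `u̇ + 𝒜(t)u = f` in the Galerkin space `Vh`:
`U 0` is the `H`-orthogonal projection of `u₀` onto `Vh`, each `U n`
(`1 ≤ n ≤ N`) is `𝓕 n`-measurable and, almost surely, `Vh`-valued with
`(j Uⁿ, j w)_H + k ⟨𝒜(ξₙ) Uⁿ, w⟩ = k (f(ξₙ), j w)_H + (j Uⁿ⁻¹, j w)_H`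
for all `w ∈ Vh`. -/
def SolvesRBEGalerkin {V H : Type} [NormedAddCommGroup V] [InnerProductSpace ℝ V]
    [MeasurableSpace V]
    [NormedAddCommGroup H] [InnerProductSpace ℝ H]
    {Ω : Type} [MeasurableSpace Ω] (P : Measure Ω)
    (j : V →L[ℝ] H) (𝒜 : ℝ → V → StrongDual ℝ V) (f : ℝ → H) (u₀ : H)
    (Vh : Submodule ℝ V) (N : ℕ) (k : ℝ)
    (𝓕 : ℕ → MeasurableSpace Ω) (ξ : ℕ → Ω → ℝ) (U : ℕ → Ω → V) : Prop :=
  (∀ ω, U 0 ω ∈ Vh ∧ ∀ w ∈ Vh, ⟪j (U 0 ω), j w⟫ = ⟪u₀, j w⟫) ∧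
  (∀ n, 1 ≤ n → n ≤ N → Measurable[𝓕 n] (U n)) ∧
  (∀ n, 1 ≤ n → n ≤ N → ∀ᵐ ω ∂P, U n ω ∈ Vh ∧
    ∀ w ∈ Vh, ⟪j (U n ω), j w⟫ + k * 𝒜 (ξ n ω) (U n ω) w
      = k * ⟪f (ξ n ω), j w⟫ + ⟪j (U (n - 1) ω), j w⟫)

set_option maxHeartbeats 1600000 in
/-- Under Assumption B, for every `f ∈ L²(0,T;H)`,
`u₀ ∈ H`, every finite-dimensional subspace `V_h ⊆ V` and every step size
`k = T/N`, the fully discrete randomized backward Euler–Galerkin scheme has a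
unique solution `(U_h^n)_{n=0,…,N}` (uniqueness holding almost surely). -/
theorem stmt11
    (V H : Type) [NormedAddCommGroup V] [InnerProductSpace ℝ V] [CompleteSpace V]
    [SecondCountableTopology V] [MeasurableSpace V] [BorelSpace V]
    [NormedAddCommGroup H] [InnerProductSpace ℝ H] [CompleteSpace H]
    [SecondCountableTopology H]
    (j : V →L[ℝ] H) (hj_inj : Function.Injective j) (hj_dense : DenseRange j)
    (T : ℝ) (hT : 0 < T)
    (𝒜 : ℝ → V → StrongDual ℝ V)
    (hA_meas : ∀ v₁ v₂ : V, Measurable fun t => 𝒜 t v₁ v₂)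
    (M : ℝ) (hM : 0 ≤ M) (hA_bdd : ∀ t ∈ Set.Icc (0:ℝ) T, ‖𝒜 t 0‖ ≤ M)
    (L : ℝ) (hL : 0 < L)
    (hA_lip : ∀ t ∈ Set.Icc (0:ℝ) T, ∀ v₁ v₂ : V,
      ‖𝒜 t v₁ - 𝒜 t v₂‖ ≤ L * ‖v₁ - v₂‖)
    (μ : ℝ) (hμ : 0 < μ)
    (hA_mono : ∀ t ∈ Set.Icc (0:ℝ) T, ∀ v₁ v₂ : V,
      μ * ‖v₁ - v₂‖ ^ 2 ≤ (𝒜 t v₁ - 𝒜 t v₂) (v₁ - v₂))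
    (f : ℝ → H) (hf : MemLp f 2 (volume.restrict (Set.Icc (0:ℝ) T)))
    (u₀ : H)
    (Vh : Submodule ℝ V) [FiniteDimensional ℝ Vh]
    -- the randomized temporal setting
    (N : ℕ) (hN : 0 < N) (k : ℝ) (hk : k = T / N)
    (Ω : Type) [mΩ : MeasurableSpace Ω] (P : Measure Ω) [IsProbabilityMeasure P]
    (hP_complete : ∀ s : Set Ω, P s = 0 → MeasurableSet s)
    (τ : ℕ → Ω → ℝ) (hτ_meas : ∀ n, Measurable (τ n))
    (hτ_indep : ProbabilityTheory.iIndepFun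
      (m := fun _ : Fin N => (inferInstance : MeasurableSpace ℝ))
      (fun i : Fin N => τ (i + 1)) P)
    (hτ_unif : ∀ n, 1 ≤ n → n ≤ N →
      Measure.map (τ n) P = volume.restrict (Set.Icc (0:ℝ) 1))
    (ξ : ℕ → Ω → ℝ) (hξ : ∀ n ω, ξ n ω = ((n : ℝ) - 1) * k + k * τ n ω)
    (𝓕 : ℕ → MeasurableSpace Ω)
    (h𝓕 : ∀ n, 𝓕 n = MeasurableSpace.generateFrom {s : Set Ω | P s = 0} ⊔
      ⨆ i ∈ Finset.Icc 1 n, MeasurableSpace.comap (τ i)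
        (inferInstance : MeasurableSpace ℝ)) :
    ∃ U : ℕ → Ω → V, SolvesRBEGalerkin P j 𝒜 f u₀ Vh N k 𝓕 ξ U ∧
      ∀ U' : ℕ → Ω → V, SolvesRBEGalerkin P j 𝒜 f u₀ Vh N k 𝓕 ξ U' →
        ∀ n ≤ N, U' n =ᵐ[P] U n := by
  classical
  have hk0 : 0 < k := by rw [hk]; positivity
  have hT0 : (0:ℝ) ≤ T := hT.le
  letI mE : MeasurableSpace ↥Vh := borel ↥Vh
  haveI hBE : BorelSpace ↥Vh := ⟨rfl⟩
  haveI : Nonempty ↥Vh := ⟨0⟩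
  set J : ↥Vh →L[ℝ] H := j.comp Vh.subtypeL with hJdef
  set b := stdOrthonormalBasis ℝ ↥Vh with hb
  set clamp : ℝ → ℝ := fun t => max 0 (min t T) with hclampdef
  have hclamp_mem : ∀ t, clamp t ∈ Set.Icc (0:ℝ) T := by
    intro t
    constructor
    · exact le_max_left _ _
    · exact max_le hT0 (min_le_right _ _)
  have hclamp_eq : ∀ t ∈ Set.Icc (0:ℝ) T, clamp t = t := by
    rintro t ⟨h1, h2⟩
    rw [hclampdef]
    simp only []
    rw [min_eq_left h2, max_eq_right h1]
  have hclamp_meas : Measurable clamp :=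
    (continuous_const.max (continuous_id.min continuous_const)).measurable
  -- the functionals appearing in the scheme
  set ℓB : ℝ → ↥Vh → (↥Vh →L[ℝ] ℝ) := fun t x =>
    (innerSL ℝ (j ↑x)).comp J + k • ((𝒜 (clamp t) ↑x).comp Vh.subtypeL) with hℓB
  set ℓF : H → ↥Vh → (↥Vh →L[ℝ] ℝ) := fun g p =>
    k • ((innerSL ℝ g).comp J) + (innerSL ℝ (j ↑p)).comp J with hℓF
  have ℓB_apply : ∀ t (x w : ↥Vh),
      ℓB t x w = ⟪j ↑x, j ↑w⟫ + k * 𝒜 (clamp t) ↑x ↑w := by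
    intro t x w
    simp [hℓB, hJdef, Submodule.subtypeL_apply]
  have ℓF_apply : ∀ (g : H) (p w : ↥Vh),
      ℓF g p w = k * ⟪g, j ↑w⟫ + ⟪j ↑p, j ↑w⟫ := by
    intro g p w
    simp [hℓF, hJdef, Submodule.subtypeL_apply]
  set Bfun : ℝ → ↥Vh → ↥Vh := fun t x => dualVec b (ℓB t x) with hBfun
  set Ffun : H → ↥Vh → ↥Vh := fun g p => dualVec b (ℓF g p) with hFfun
  have Binner : ∀ t (x w : ↥Vh),
      ⟪Bfun t x, w⟫ = ⟪j ↑x, j ↑w⟫ + k * 𝒜 (clamp t) ↑x ↑w := by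
    intro t x w
    rw [hBfun]
    rw [inner_dualVec, ℓB_apply]
  have Finner : ∀ (g : H) (p w : ↥Vh),
      ⟪Ffun g p, w⟫ = k * ⟪g, j ↑w⟫ + ⟪j ↑p, j ↑w⟫ := by
    intro g p w
    rw [hFfun]
    rw [inner_dualVec, ℓF_apply]
  -- constants
  set C : ℝ := ‖J‖ ^ 2 + k * (L + μ) with hCdef
  have hC0 : 0 < C := by
    have : 0 < k * (L + μ) := by positivity
    have h2 : (0:ℝ) ≤ ‖J‖ ^ 2 := by positivity
    linarith
  have hm0 : 0 < k * μ := by positivity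
  have hmC : k * μ ≤ C := by
    have h2 : (0:ℝ) ≤ ‖J‖ ^ 2 := by positivity
    have h4 : k * μ ≤ k * (L + μ) :=
      mul_le_mul_of_nonneg_left (by linarith : μ ≤ L + μ) hk0.le
    rw [hCdef]; linarith
  have hnormcoe : ∀ x : ↥Vh, ‖(↑x : V)‖ = ‖x‖ := fun x => rfl
  have hcoe_sub : ∀ x y : ↥Vh, ((↑(x - y) : V)) = ↑x - ↑y := fun x y => rfl
  -- Lipschitz bound for Bfun
  have hℓBdiff : ∀ t (x y w : ↥Vh), (ℓB t x - ℓB t y) w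
      = ⟪j (↑x - ↑y), j ↑w⟫ + k * (𝒜 (clamp t) ↑x ↑w - 𝒜 (clamp t) ↑y ↑w) := by
    intro t x y w
    rw [ContinuousLinearMap.sub_apply, ℓB_apply, ℓB_apply, map_sub j, inner_sub_left]
    ring
  have Blip : ∀ t (x y : ↥Vh), ‖Bfun t x - Bfun t y‖ ≤ C * ‖x - y‖ := by
    intro t x y
    rw [hBfun]
    simp only []
    rw [← dualVec_sub]
    refine (norm_dualVec_le b _).trans ?_
    refine ContinuousLinearMap.opNorm_le_bound _ (by positivity) fun w => ?_
    rw [hℓBdiff]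
    have h1 : |⟪j (↑x - ↑y), j ↑w⟫| ≤ (‖J‖ * ‖x - y‖) * (‖J‖ * ‖w‖) := by
      refine (abs_real_inner_le_norm _ _).trans ?_
      have e1 : j (↑x - ↑y) = J (x - y) := by rw [hJdef]; simp [hcoe_sub]
      have e2 : j (↑w : V) = J w := by rw [hJdef]; simp
      rw [e1, e2]
      exact mul_le_mul (J.le_opNorm _) (J.le_opNorm _) (norm_nonneg _)
        (by positivity)
    have h2 : |𝒜 (clamp t) ↑x ↑w - 𝒜 (clamp t) ↑y ↑w| ≤ (L * ‖x - y‖) * ‖w‖ := by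
      have e : 𝒜 (clamp t) ↑x ↑w - 𝒜 (clamp t) ↑y ↑w
          = (𝒜 (clamp t) ↑x - 𝒜 (clamp t) ↑y) ↑w := by
        rw [ContinuousLinearMap.sub_apply]
      rw [e]
      refine ((𝒜 (clamp t) ↑x - 𝒜 (clamp t) ↑y).le_opNorm _).trans ?_
      have := hA_lip (clamp t) (hclamp_mem t) ↑x ↑y
      have hxy : ‖(↑x : V) - ↑y‖ = ‖x - y‖ := by rw [← hcoe_sub, hnormcoe]
      rw [hxy] at this
      have hwn : ‖(↑w : V)‖ = ‖w‖ := hnormcoe w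
      rw [hwn]
      exact mul_le_mul_of_nonneg_right this (norm_nonneg _)
    calc ‖⟪j (↑x - ↑y), j ↑w⟫ + k * (𝒜 (clamp t) ↑x ↑w - 𝒜 (clamp t) ↑y ↑w)‖
        ≤ |⟪j (↑x - ↑y), j ↑w⟫| + k * |𝒜 (clamp t) ↑x ↑w - 𝒜 (clamp t) ↑y ↑w| := by
          rw [Real.norm_eq_abs]
          refine (abs_add_le _ _).trans ?_
          rw [abs_mul, abs_of_pos hk0]
      _ ≤ (‖J‖ * ‖x - y‖) * (‖J‖ * ‖w‖) + k * ((L * ‖x - y‖) * ‖w‖) := by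
          refine add_le_add h1 (mul_le_mul_of_nonneg_left h2 hk0.le)
      _ = (‖J‖ ^ 2 + k * L) * ‖x - y‖ * ‖w‖ := by ring
      _ ≤ C * ‖x - y‖ * ‖w‖ := by
          refine mul_le_mul_of_nonneg_right
            (mul_le_mul_of_nonneg_right ?_ (norm_nonneg _)) (norm_nonneg _)
          rw [hCdef]
          have : k * L ≤ k * (L + μ) :=
            mul_le_mul_of_nonneg_left (by linarith) hk0.le
          linarith
  -- strong monotonicity of Bfun
  have Bmono : ∀ t (x y : ↥Vh), (k * μ) * ‖x - y‖ ^ 2 ≤ ⟪Bfun t x - Bfun t y, x - y⟫ := by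
    intro t x y
    have e : ⟪Bfun t x - Bfun t y, x - y⟫ = (ℓB t x - ℓB t y) (x - y) := by
      rw [hBfun]
      simp only []
      rw [← dualVec_sub, inner_dualVec]
    rw [e, hℓBdiff]
    have e1 : j ((↑x : V) - ↑y) = j ↑(x - y) := by rw [hcoe_sub]
    have h1 : (0:ℝ) ≤ ⟪j (↑x - ↑y), j ↑(x - y)⟫ := by
      rw [e1]; exact real_inner_self_nonneg
    have h2 : μ * ‖x - y‖ ^ 2
        ≤ 𝒜 (clamp t) ↑x ↑(x - y) - 𝒜 (clamp t) ↑y ↑(x - y) := by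
      have := hA_mono (clamp t) (hclamp_mem t) ↑x ↑y
      rw [← ContinuousLinearMap.sub_apply]
      have hxy : ‖(↑x : V) - ↑y‖ = ‖x - y‖ := by rw [← hcoe_sub, hnormcoe]
      rw [hxy] at this
      have harg : ((↑(x - y) : V)) = ↑x - ↑y := hcoe_sub x y
      rw [harg]
      exact this
    have h3 : k * (μ * ‖x - y‖ ^ 2)
        ≤ k * (𝒜 (clamp t) ↑x ↑(x - y) - 𝒜 (clamp t) ↑y ↑(x - y)) :=
      mul_le_mul_of_nonneg_left h2 hk0.le
    rw [show (k * μ) * ‖x - y‖ ^ 2 = k * (μ * ‖x - y‖ ^ 2) by ring]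
    linarith
  -- the contraction and its fixed point
  set ρ : ℝ := (k * μ) / C ^ 2 with hρdef
  have hρ0 : 0 < ρ := by positivity
  set κ : NNReal := Real.toNNReal (Real.sqrt (1 - ((k * μ) / C) ^ 2)) with hκdef
  have hcontr : ∀ t (F : ↥Vh), ContractingWith κ (phiAux ρ (Bfun t) F) := by
    intro t F
    exact phiAux_contracting hC0 hm0 hmC (Blip t) (Bmono t) F
  set sol : ℝ → H → ↥Vh → ↥Vh :=
    fun t g p => ContractingWith.fixedPoint _ (hcontr t (Ffun g p)) with hsoldef
  have sol_fix : ∀ t g p, Bfun t (sol t g p) = Ffun g p := by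
    intro t g p
    exact (phiAux_fixed_iff hρ0.ne').mp ((hcontr t (Ffun g p)).fixedPoint_isFixedPt)
  have sol_weak : ∀ t (g : H) (p : ↥Vh), ∀ w ∈ Vh,
      ⟪j ↑(sol t g p), j w⟫ + k * 𝒜 (clamp t) ↑(sol t g p) w
        = k * ⟪g, j w⟫ + ⟪j ↑p, j w⟫ := by
    intro t g p w hw
    have h1 := Binner t (sol t g p) ⟨w, hw⟩
    have h2 := Finner g p ⟨w, hw⟩
    rw [sol_fix t g p] at h1
    rw [h2] at h1
    exact h1.symm
  -- measurable representative of f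
  have hgsm := hf.1
  set gm : ℝ → H := hgsm.mk f with hgmdef
  have hgm_sm : StronglyMeasurable gm := hgsm.stronglyMeasurable_mk
  have hgm_ae : f =ᵐ[volume.restrict (Set.Icc (0:ℝ) T)] gm := hgsm.ae_eq_mk
  -- initial value: orthogonal projection
  haveI : FiniteDimensional ℝ (Vh.map (j : V →ₗ[ℝ] H)) :=
    Module.Finite.map Vh (j : V →ₗ[ℝ] H)
  obtain ⟨v0, hv0, hjv0⟩ : ∃ v ∈ Vh,
      j v = (Submodule.orthogonalProjection (Vh.map (j : V →ₗ[ℝ] H)) u₀ : H) := by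
    have h := (Submodule.orthogonalProjection (Vh.map (j : V →ₗ[ℝ] H)) u₀).2
    obtain ⟨v, hv, hveq⟩ := Submodule.mem_map.mp h
    exact ⟨v, hv, hveq⟩
  have hU0 : ∀ w ∈ Vh, ⟪j v0, j w⟫ = ⟪u₀, j w⟫ := by
    intro w hw
    have hmemK : j w ∈ Vh.map (j : V →ₗ[ℝ] H) := Submodule.mem_map_of_mem hw
    have horth : u₀ - ↑(Submodule.orthogonalProjection (Vh.map (j : V →ₗ[ℝ] H)) u₀)
        ∈ (Vh.map (j : V →ₗ[ℝ] H))ᗮ :=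
      Submodule.sub_starProjection_mem_orthogonal u₀
    have h0 : ⟪j w, u₀ - ↑(Submodule.orthogonalProjection (Vh.map (j : V →ₗ[ℝ] H)) u₀)⟫ = 0 :=
      (Submodule.mem_orthogonal _ _).mp horth (j w) hmemK
    rw [inner_sub_right] at h0
    rw [← hjv0] at h0
    have e1 : ⟪j w, j v0⟫ = ⟪j v0, j w⟫ := real_inner_comm _ _
    have e2 : ⟪j w, u₀⟫ = ⟪u₀, j w⟫ := real_inner_comm _ _
    linarith
  -- the recursively defined solution
  obtain ⟨W, hW0, hWsucc⟩ : ∃ W : ℕ → Ω → ↥Vh,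
      (∀ ω, W 0 ω = (⟨v0, hv0⟩ : ↥Vh)) ∧
      (∀ m ω, W (m+1) ω = sol (ξ (m+1) ω) (gm (ξ (m+1) ω)) (W m ω)) :=
    ⟨fun n => Nat.rec (motive := fun _ => Ω → ↥Vh) (fun _ => (⟨v0, hv0⟩ : ↥Vh))
      (fun m Wm ω => sol (ξ (m+1) ω) (gm (ξ (m+1) ω)) (Wm ω)) n,
      fun _ => rfl, fun _ _ => rfl⟩
  set U : ℕ → Ω → V := fun n ω => ↑(W n ω) with hUdef
  -- measurability infrastructure
  have hval_meas : Measurable (fun x : ↥Vh => (x : V)) :=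
    continuous_subtype_val.measurable
  have hA_unc : ∀ i, Measurable (Function.uncurry
      (fun (v : V) (t : ℝ) => 𝒜 (clamp t) v ↑(b i))) := by
    intro i
    apply measurable_uncurry_of_continuous_of_measurable
    · intro t
      have hlip : LipschitzWith (Real.toNNReal (L * ‖(↑(b i) : V)‖))
          (fun v : V => 𝒜 (clamp t) v ↑(b i)) := by
        apply LipschitzWith.of_dist_le_mul
        intro v v'
        rw [Real.coe_toNNReal _ (by positivity), Real.dist_eq, dist_eq_norm]
        have e : 𝒜 (clamp t) v ↑(b i) - 𝒜 (clamp t) v' ↑(b i)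
            = (𝒜 (clamp t) v - 𝒜 (clamp t) v') ↑(b i) := by
          rw [ContinuousLinearMap.sub_apply]
        rw [e]
        refine ((𝒜 (clamp t) v - 𝒜 (clamp t) v').le_opNorm _).trans ?_
        have := hA_lip (clamp t) (hclamp_mem t) v v'
        calc ‖𝒜 (clamp t) v - 𝒜 (clamp t) v'‖ * ‖(↑(b i) : V)‖
            ≤ (L * ‖v - v'‖) * ‖(↑(b i) : V)‖ :=
              mul_le_mul_of_nonneg_right this (norm_nonneg _)
          _ = L * ‖(↑(b i) : V)‖ * ‖v - v'‖ := by ring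
      exact hlip.continuous
    · intro v
      exact (hA_meas v ↑(b i)).comp hclamp_meas
  have hB_meas : ∀ (m' : MeasurableSpace Ω) (t' : Ω → ℝ) (p : Ω → ↥Vh),
      Measurable[m'] t' → Measurable[m'] p →
      Measurable[m'] (fun ω => Bfun (t' ω) (p ω)) := by
    intro m' t' p ht hp
    have hcoef : ∀ i, Measurable[m'] (fun ω => (ℓB (t' ω) (p ω)) (b i)) := by
      intro i
      have h1 : Measurable[m'] (fun ω => (⟪j ↑(p ω), j ↑(b i)⟫ : ℝ)) := by
        have hc : Continuous (fun x : ↥Vh => (⟪j ↑x, j ↑(b i)⟫ : ℝ)) := by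
          exact (Continuous.inner ((j.continuous.comp continuous_subtype_val))
            continuous_const)
        exact hc.measurable.comp hp
      have h2 : Measurable[m'] (fun ω => 𝒜 (clamp (t' ω)) ↑(p ω) ↑(b i)) := by
        have hpair : Measurable[m'] (fun ω => ((↑(p ω) : V), t' ω)) :=
          (hval_meas.comp hp).prodMk ht
        exact (hA_unc i).comp hpair
      simp_rw [ℓB_apply]
      exact h1.add (h2.const_mul k)
    have : Measurable[m'] (fun ω => ∑ i, (ℓB (t' ω) (p ω)) (b i) • b i) := by
      refine Finset.measurable_sum _ (fun i _ => ?_)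
      exact (hcoef i).smul_const (b i)
    simpa [hBfun, dualVec] using this
  have hF_meas : ∀ (m' : MeasurableSpace Ω) (t' : Ω → ℝ) (p : Ω → ↥Vh),
      Measurable[m'] t' → Measurable[m'] p →
      Measurable[m'] (fun ω => Ffun (gm (t' ω)) (p ω)) := by
    intro m' t' p ht hp
    have hcoef : ∀ i, Measurable[m'] (fun ω => (ℓF (gm (t' ω)) (p ω)) (b i)) := by
      intro i
      have h1 : Measurable[m'] (fun ω => (⟪gm (t' ω), j ↑(b i)⟫ : ℝ)) := by
        have hsm : StronglyMeasurable (fun s : ℝ => (⟪gm s, j ↑(b i)⟫ : ℝ)) := by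
          exact (Continuous.inner continuous_id continuous_const).comp_stronglyMeasurable
            hgm_sm
        exact hsm.measurable.comp ht
      have h2 : Measurable[m'] (fun ω => (⟪j ↑(p ω), j ↑(b i)⟫ : ℝ)) := by
        have hc : Continuous (fun x : ↥Vh => (⟪j ↑x, j ↑(b i)⟫ : ℝ)) :=
          (Continuous.inner ((j.continuous.comp continuous_subtype_val))
            continuous_const)
        exact hc.measurable.comp hp
      simp_rw [ℓF_apply]
      exact (h1.const_mul k).add h2
    have : Measurable[m'] (fun ω => ∑ i, (ℓF (gm (t' ω)) (p ω)) (b i) • b i) := by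
      refine Finset.measurable_sum _ (fun i _ => ?_)
      exact (hcoef i).smul_const (b i)
    simpa [hFfun, dualVec] using this
  have hsol_meas : ∀ (m' : MeasurableSpace Ω) (t' : Ω → ℝ) (p : Ω → ↥Vh),
      Measurable[m'] t' → Measurable[m'] p →
      Measurable[m'] (fun ω => sol (t' ω) (gm (t' ω)) (p ω)) := by
    intro m' t' p ht hp
    set F' : Ω → ↥Vh := fun ω => Ffun (gm (t' ω)) (p ω) with hF'def
    have hF' : Measurable[m'] F' := hF_meas m' t' p ht hp
    set Θ : ℕ → Ω → ↥Vh :=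
      fun m ω => (phiAux ρ (Bfun (t' ω)) (F' ω))^[m] 0 with hΘdef
    have hΘ : ∀ m, Measurable[m'] (Θ m) := by
      intro m
      induction m with
      | zero => exact measurable_const
      | succ m ih =>
        have hstep : Θ (m+1) = fun ω => Θ m ω - ρ • (Bfun (t' ω) (Θ m ω) - F' ω) := by
          funext ω
          rw [hΘdef]
          simp only [Function.iterate_succ_apply']
          rfl
        rw [hstep]
        exact ih.sub (((hB_meas m' t' (Θ m) ht ih).sub hF').const_smul ρ)
    have htend : Filter.Tendsto Θ Filter.atTop
        (nhds (fun ω => sol (t' ω) (gm (t' ω)) (p ω))) := by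
      rw [tendsto_pi_nhds]
      intro ω
      exact (hcontr (t' ω) (F' ω)).tendsto_iterate_fixedPoint 0
    exact @measurable_of_tendsto_metrizable Ω ↥Vh m' _ _ mE hBE Θ _ hΘ htend
  -- filtration facts
  have h𝓕mono : ∀ {a c : ℕ}, a ≤ c → 𝓕 a ≤ 𝓕 c := by
    intro a c hac
    rw [h𝓕 a, h𝓕 c]
    refine sup_le_sup_left ?_ _
    refine iSup_le fun i => iSup_le fun hi => ?_
    have hi' : i ∈ Finset.Icc 1 c := by
      have := Finset.mem_Icc.mp hi
      exact Finset.mem_Icc.mpr ⟨this.1, this.2.trans hac⟩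
    exact le_biSup (fun i => MeasurableSpace.comap (τ i)
      (inferInstance : MeasurableSpace ℝ)) hi'
  have hτ𝓕 : ∀ n, 1 ≤ n → Measurable[𝓕 n] (τ n) := by
    intro n h1
    refine Measurable.of_comap_le ?_
    rw [h𝓕 n]
    refine le_trans ?_ le_sup_right
    exact le_biSup (fun i => MeasurableSpace.comap (τ i)
      (inferInstance : MeasurableSpace ℝ)) (Finset.mem_Icc.mpr ⟨h1, le_refl n⟩)
  have hξ𝓕 : ∀ n, 1 ≤ n → Measurable[𝓕 n] (ξ n) := by
    intro n h1
    have he : ξ n = fun ω => ((n:ℝ) - 1) * k + k * τ n ω := funext (hξ n)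
    rw [he]
    exact measurable_const.add ((hτ𝓕 n h1).const_mul k)
  have hW𝓕 : ∀ n, Measurable[𝓕 n] (W n) := by
    intro n
    induction n with
    | zero =>
      have : W 0 = fun _ => (⟨v0, hv0⟩ : ↥Vh) := funext hW0
      rw [this]
      exact measurable_const
    | succ n ih =>
      have : W (n+1) = fun ω => sol (ξ (n+1) ω) (gm (ξ (n+1) ω)) (W n ω) :=
        funext (hWsucc n)
      rw [this]
      exact hsol_meas (𝓕 (n+1)) (ξ (n+1)) (W n) (hξ𝓕 (n+1) (Nat.le_add_left 1 n))
        (ih.mono (h𝓕mono (Nat.le_succ n)) le_rfl)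
  -- a.e. events
  have hae_tau : ∀ n, 1 ≤ n → n ≤ N → ∀ᵐ ω ∂P, τ n ω ∈ Set.Icc (0:ℝ) 1 := by
    intro n h1 hN'
    have hmeas : MeasurableSet (Set.Icc (0:ℝ) 1) := measurableSet_Icc
    rw [ae_iff]
    have he : {ω | ¬ τ n ω ∈ Set.Icc (0:ℝ) 1} = τ n ⁻¹' (Set.Icc (0:ℝ) 1)ᶜ := rfl
    rw [he, ← Measure.map_apply (hτ_meas n) hmeas.compl, hτ_unif n h1 hN',
      Measure.restrict_apply hmeas.compl]
    simp
  have hae_xi : ∀ n, 1 ≤ n → n ≤ N → ∀ᵐ ω ∂P, ξ n ω ∈ Set.Icc (0:ℝ) T := by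
    intro n h1 hN'
    filter_upwards [hae_tau n h1 hN'] with ω hτω
    obtain ⟨ht0, ht1⟩ := hτω
    have hn1 : (1:ℝ) ≤ (n:ℝ) := by exact_mod_cast h1
    have hnN : (n:ℝ) ≤ (N:ℝ) := by exact_mod_cast hN'
    have hNk : (N:ℝ) * k = T := by
      rw [hk]
      field_simp
    rw [hξ n ω]
    constructor
    · have h01 : 0 ≤ ((n:ℝ) - 1) * k := mul_nonneg (by linarith) hk0.le
      have h02 : 0 ≤ k * τ n ω := mul_nonneg hk0.le ht0
      linarith
    · have h03 : k * τ n ω ≤ k := by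
        calc k * τ n ω ≤ k * 1 := mul_le_mul_of_nonneg_left ht1 hk0.le
          _ = k := mul_one k
      have h04 : ((n:ℝ) - 1) * k + k ≤ (N:ℝ) * k := by nlinarith
      linarith
  have hae_f : ∀ n, 1 ≤ n → n ≤ N → ∀ᵐ ω ∂P, f (ξ n ω) = gm (ξ n ω) := by
    intro n h1 hN'
    have hs0 : (volume.restrict (Set.Icc (0:ℝ) T)) {t | f t ≠ gm t} = 0 := by
      exact hgm_ae
    set s₂ : Set ℝ := toMeasurable (volume.restrict (Set.Icc (0:ℝ) T)) {t | f t ≠ gm t}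
      with hs₂def
    have hs₂meas : MeasurableSet s₂ := measurableSet_toMeasurable _ _
    have hs₂sup : {t | f t ≠ gm t} ⊆ s₂ := subset_toMeasurable _ _
    have hs₂0 : volume (s₂ ∩ Set.Icc (0:ℝ) T) = 0 := by
      have h := measure_toMeasurable (μ := volume.restrict (Set.Icc (0:ℝ) T))
        {t | f t ≠ gm t}
      rw [hs0] at h
      rw [← Measure.restrict_apply hs₂meas]
      exact h
    -- the affine map x ↦ (n-1)k + kx
    set aff : ℝ → ℝ := fun x => ((n:ℝ) - 1) * k + k * x with haffdef
    have haff_meas : Measurable aff :=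
      measurable_const.add (measurable_id.const_mul k)
    have haff_pre : volume (aff ⁻¹' (s₂ ∩ Set.Icc (0:ℝ) T)) = 0 := by
      have hpre : aff ⁻¹' (s₂ ∩ Set.Icc (0:ℝ) T)
          = (fun x => k * x) ⁻¹' ((fun y => ((n:ℝ) - 1) * k + y) ⁻¹' (s₂ ∩ Set.Icc (0:ℝ) T)) := rfl
      rw [hpre, Real.volume_preimage_mul_left hk0.ne', measure_preimage_add,
        hs₂0, mul_zero]
    have hkey : P {ω | ξ n ω ∈ s₂ ∧ τ n ω ∈ Set.Icc (0:ℝ) 1} = 0 := by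
      set B : Set ℝ := Set.Icc (0:ℝ) 1 ∩ aff ⁻¹' s₂ with hBdef
      have hBmeas : MeasurableSet B := measurableSet_Icc.inter (haff_meas hs₂meas)
      have hsub : {ω | ξ n ω ∈ s₂ ∧ τ n ω ∈ Set.Icc (0:ℝ) 1} ⊆ τ n ⁻¹' B := by
        intro ω hω
        refine ⟨hω.2, ?_⟩
        have : aff (τ n ω) = ξ n ω := by rw [haffdef, hξ n ω]
        simpa [Set.mem_preimage, this] using hω.1
      refine measure_mono_null hsub ?_
      rw [← Measure.map_apply (hτ_meas n) hBmeas, hτ_unif n h1 hN',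
        Measure.restrict_apply hBmeas]
      have hBsub : B ∩ Set.Icc (0:ℝ) 1 ⊆ aff ⁻¹' (s₂ ∩ Set.Icc (0:ℝ) T) := by
        rintro x ⟨⟨hx01, hxp⟩, -⟩
        refine ⟨hxp, ?_⟩
        obtain ⟨hx0, hx1⟩ := hx01
        have hn1 : (1:ℝ) ≤ (n:ℝ) := by exact_mod_cast h1
        have hnN : (n:ℝ) ≤ (N:ℝ) := by exact_mod_cast hN'
        have hNk : (N:ℝ) * k = T := by rw [hk]; field_simp
        constructor
        · have h01 : 0 ≤ ((n:ℝ) - 1) * k := mul_nonneg (by linarith) hk0.le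
          have h02 : 0 ≤ k * x := mul_nonneg hk0.le hx0
          simp only [haffdef]
          linarith
        · have h03 : k * x ≤ k := by
            calc k * x ≤ k * 1 := mul_le_mul_of_nonneg_left hx1 hk0.le
              _ = k := mul_one k
          have h04 : ((n:ℝ) - 1) * k + k ≤ (N:ℝ) * k := by nlinarith
          simp only [haffdef]
          linarith
      exact measure_mono_null hBsub haff_pre
    have hbad : {ω | ¬ f (ξ n ω) = gm (ξ n ω)}
        ⊆ {ω | ξ n ω ∈ s₂ ∧ τ n ω ∈ Set.Icc (0:ℝ) 1}
          ∪ {ω | ¬ τ n ω ∈ Set.Icc (0:ℝ) 1} := by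
      intro ω hω
      by_cases hτω : τ n ω ∈ Set.Icc (0:ℝ) 1
      · exact Or.inl ⟨hs₂sup hω, hτω⟩
      · exact Or.inr hτω
    rw [ae_iff]
    refine measure_mono_null hbad (measure_union_null hkey ?_)
    have := hae_tau n h1 hN'
    rwa [ae_iff] at this
  -- the scheme equations hold a.e.
  have hmain : ∀ n, 1 ≤ n → n ≤ N → ∀ᵐ ω ∂P, U n ω ∈ Vh ∧
      ∀ w ∈ Vh, ⟪j (U n ω), j w⟫ + k * 𝒜 (ξ n ω) (U n ω) w
        = k * ⟪f (ξ n ω), j w⟫ + ⟪j (U (n - 1) ω), j w⟫ := by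
    intro n h1 hN'
    filter_upwards [hae_xi n h1 hN', hae_f n h1 hN'] with ω hxi hfgm
    refine ⟨(W n ω).2, ?_⟩
    intro w hw
    obtain ⟨m, rfl⟩ : ∃ m, n = m + 1 := ⟨n - 1, by omega⟩
    have heq := sol_weak (ξ (m+1) ω) (gm (ξ (m+1) ω)) (W m ω) w hw
    rw [hclamp_eq _ hxi] at heq
    have hUn : U (m+1) ω = ↑(sol (ξ (m+1) ω) (gm (ξ (m+1) ω)) (W m ω)) := by
      rw [hUdef]
      simp only []
      rw [hWsucc m ω]
    have hUm : U (m+1-1) ω = ↑(W m ω) := rfl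
    rw [hUn, hUm, ← hfgm] at *
    rw [hUn]
    exact heq
  -- uniqueness
  have huniq : ∀ U' : ℕ → Ω → V, SolvesRBEGalerkin P j 𝒜 f u₀ Vh N k 𝓕 ξ U' →
      ∀ n ≤ N, U' n =ᵐ[P] U n := by
    intro U' hU' n
    induction n with
    | zero =>
      intro _
      refine Filter.Eventually.of_forall fun ω => ?_
      obtain ⟨hmem, hprop⟩ := hU'.1 ω
      have hU0ω : U 0 ω = v0 := by rw [hUdef]; simp only []; rw [hW0 ω]
      rw [hU0ω]
      have hd : U' 0 ω - v0 ∈ Vh := Submodule.sub_mem _ hmem hv0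
      have h1 := hprop _ hd
      have h2 := hU0 _ hd
      have h3 : ⟪j (U' 0 ω) - j v0, j (U' 0 ω - v0)⟫ = 0 := by
        rw [inner_sub_left]
        linarith
      rw [← map_sub j] at h3
      have h4 : j (U' 0 ω - v0) = 0 := inner_self_eq_zero.mp h3
      have h5 : U' 0 ω - v0 = 0 := by
        apply hj_inj
        rw [h4, map_zero]
      exact sub_eq_zero.mp h5
    | succ m ihm =>
      intro hle
      have ihm' := ihm (le_trans (Nat.le_succ m) hle)
      have h1' := hU'.2.2 (m+1) (Nat.le_add_left 1 m) hle
      have h2' := hmain (m+1) (Nat.le_add_left 1 m) hle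
      have h3' := hae_xi (m+1) (Nat.le_add_left 1 m) hle
      filter_upwards [h1', h2', h3', ihm'] with ω hu' hu hxi hprev
      obtain ⟨hmem', heq'⟩ := hu'
      obtain ⟨hmem, heq⟩ := hu
      have hdVh : U' (m+1) ω - U (m+1) ω ∈ Vh := Submodule.sub_mem _ hmem' hmem
      have e1 := heq' _ hdVh
      have e2 := heq _ hdVh
      have hm1 : (m+1) - 1 = m := rfl
      rw [hm1] at e1 e2
      rw [hprev] at e1
      have hsub : ⟪j (U' (m+1) ω) - j (U (m+1) ω), j (U' (m+1) ω - U (m+1) ω)⟫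
          + k * (𝒜 (ξ (m+1) ω) (U' (m+1) ω) (U' (m+1) ω - U (m+1) ω)
            - 𝒜 (ξ (m+1) ω) (U (m+1) ω) (U' (m+1) ω - U (m+1) ω)) = 0 := by
        rw [inner_sub_left]
        linarith
      rw [← map_sub j] at hsub
      have hip : (0:ℝ) ≤ ⟪j (U' (m+1) ω - U (m+1) ω), j (U' (m+1) ω - U (m+1) ω)⟫ :=
        real_inner_self_nonneg
      have hmono' := hA_mono (ξ (m+1) ω) hxi (U' (m+1) ω) (U (m+1) ω)
      rw [ContinuousLinearMap.sub_apply] at hmono'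
      have hk1 : k * (μ * ‖U' (m+1) ω - U (m+1) ω‖ ^ 2)
          ≤ k * (𝒜 (ξ (m+1) ω) (U' (m+1) ω) (U' (m+1) ω - U (m+1) ω)
            - 𝒜 (ξ (m+1) ω) (U (m+1) ω) (U' (m+1) ω - U (m+1) ω)) :=
        mul_le_mul_of_nonneg_left hmono' hk0.le
      have h6 : k * (μ * ‖U' (m+1) ω - U (m+1) ω‖ ^ 2) ≤ k * 0 := by
        rw [mul_zero]
        linarith
      have h7 : μ * ‖U' (m+1) ω - U (m+1) ω‖ ^ 2 ≤ 0 :=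
        le_of_mul_le_mul_left h6 hk0
      have h8 : 0 ≤ μ * ‖U' (m+1) ω - U (m+1) ω‖ ^ 2 :=
        mul_nonneg hμ.le (sq_nonneg _)
      have h9 : ‖U' (m+1) ω - U (m+1) ω‖ ^ 2 = 0 :=
        (mul_eq_zero.mp (le_antisymm h7 h8)).resolve_left hμ.ne'
      have hnz : ‖U' (m+1) ω - U (m+1) ω‖ = 0 :=
        (pow_eq_zero_iff two_ne_zero).mp h9
      have : U' (m+1) ω - U (m+1) ω = 0 := norm_eq_zero.mp hnz
      exact sub_eq_zero.mp this
  refine ⟨U, ⟨?_, ?_, hmain⟩, huniq⟩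
  · intro ω
    have hU0ω : U 0 ω = v0 := by rw [hUdef]; simp only []; rw [hW0 ω]
    rw [hU0ω]
    exact ⟨hv0, hU0⟩
  · intro n h1 _
    have : U n = fun ω => ↑(W n ω) := rfl
    rw [this]
    exact hval_meas.comp (hW𝓕 n)
end

section
/- Let 𝒜 satisfy Assumption B, let f ∈ L²(0,T;H), let V_h ⊆ V be a finite-dimensional subspace, let U_h^0 ∈ V_h, and let N ∈ ℕ with k = T/N. Let (U_h^n)_{n=0,…,N} be the unique solution of the fully discrete scheme: P-almost surely, for every n ∈ {1,…,N} and all w ∈ V_h, (j U_h^n, j w)_H + k ⟨𝒜(ξ_n) U_h^n, w⟩ = k (f(ξ_n), j w)_H + (j U_h^{n−1}, j w)_H. Then there exists a constant C ∈ (0,∞), depending only on M, μ and the norm of the embedding j : V → H, such that max_{n ∈ {0,…,N}} E[ ‖j U_h^n‖²_H ] + Σ_{m=1}^{N} E[ ‖j U_h^m − j U_h^{m−1}‖²_H ] + k μ Σ_{m=1}^{N} E[ ‖U_h^m‖²_V ] ≤ C ( T + ‖j U_h^0‖²_H + ∫₀ᵀ ‖f(t)‖²_H dt ). -/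
open MeasureTheory RealInnerProductSpace

lemma sum_Icc_one_eq_range' (N : ℕ) (f : ℕ → ℝ) :
    ∑ i ∈ Finset.Icc 1 N, f i = ∑ i ∈ Finset.range N, f (i + 1) := by
  induction N with
  | zero => simp
  | succ n ih => rw [Finset.sum_Icc_succ_top (Nat.le_add_left 1 n), ih, Finset.sum_range_succ]

lemma affine_preimage_Icc (c k : ℝ) (hk : 0 < k) :
    (fun t : ℝ => c + k * t) ⁻¹' Set.Icc c (c + k) = Set.Icc 0 1 := by
  ext t
  simp only [Set.mem_preimage, Set.mem_Icc]
  constructor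
  · rintro ⟨h1, h2⟩
    constructor <;> nlinarith
  · rintro ⟨h1, h2⟩
    constructor <;> nlinarith

lemma map_affine_volume (c k : ℝ) (hk : 0 < k) :
    Measure.map (fun t : ℝ => c + k * t) (volume.restrict (Set.Icc (0:ℝ) 1))
      = (ENNReal.ofReal k)⁻¹ • volume.restrict (Set.Icc c (c + k)) := by
  have hemb : MeasurableEmbedding (fun t : ℝ => c + k * t) :=
    ((Homeomorph.mulLeft₀ k hk.ne').trans (Homeomorph.addLeft c)).measurableEmbedding
  have hmapvol : Measure.map (fun t : ℝ => c + k * t) volume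
      = (ENNReal.ofReal k)⁻¹ • volume := by
    have h1 : (fun t : ℝ => c + k * t) = (fun t : ℝ => c + t) ∘ (fun t : ℝ => k * t) := rfl
    rw [h1, ← Measure.map_map (measurable_const_add c) (measurable_const_mul k),
      Real.map_volume_mul_left hk.ne', Measure.map_smul,
      (measurePreserving_add_left volume c).map_eq, abs_of_pos (inv_pos.mpr hk),
      ENNReal.ofReal_inv_of_pos hk]
  have := hemb.restrict_map volume (Set.Icc c (c + k))
  rw [affine_preimage_Icc c k hk] at this
  rw [← this, hmapvol, Measure.restrict_smul]

lemma sum_integral_partition (g : ℝ → ℝ) (k T : ℝ) (N : ℕ) (hk : 0 < k)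
    (hT : (N : ℝ) * k = T)
    (hint : Integrable g (volume.restrict (Set.Icc (0:ℝ) T))) :
    ∑ n ∈ Finset.Icc 1 N, (∫ t in Set.Icc (((n:ℝ)-1)*k) (((n:ℝ)-1)*k + k), g t)
      = ∫ t in Set.Icc (0:ℝ) T, g t := by
  have hii : ∀ i : ℕ, i < N →
      IntervalIntegrable g volume ((fun m : ℕ => (m:ℝ)*k) i) ((fun m : ℕ => (m:ℝ)*k) (i+1)) := by
    intro i hi
    rw [intervalIntegrable_iff, Set.uIoc_of_le (by push_cast; nlinarith [Nat.cast_nonneg (α := ℝ) i])]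
    refine hint.mono_measure (Measure.restrict_mono ?_ le_rfl)
    intro x hx
    simp only [Set.mem_Ioc, Set.mem_Icc] at hx ⊢
    have hi' : ((i:ℝ) + 1) ≤ (N : ℝ) := by exact_mod_cast Nat.succ_le_of_lt hi
    have h0i : (0:ℝ) ≤ (i:ℝ) := Nat.cast_nonneg i
    push_cast at hx
    constructor
    · nlinarith [hx.1]
    · nlinarith [hx.2]
  have hadj := intervalIntegral.sum_integral_adjacent_intervals (μ := volume) (f := g) hii
  rw [sum_Icc_one_eq_range']
  have hterm : ∀ i : ℕ,
      (∫ t in Set.Icc (((((i+1:ℕ)):ℝ) - 1) * k) ((((((i+1:ℕ)):ℝ) - 1) * k) + k), g t)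
        = ∫ t in ((i:ℝ)*k)..((((i+1:ℕ)):ℝ)*k), g t := by
    intro i
    have e1 : (((i+1:ℕ)):ℝ) - 1 = (i:ℝ) := by push_cast; ring
    have e2 : (i:ℝ)*k + k = (((i+1:ℕ)):ℝ)*k := by push_cast; ring
    rw [e1, e2, integral_Icc_eq_integral_Ioc,
      intervalIntegral.integral_of_le (by nlinarith [Nat.cast_nonneg (α := ℝ) i])]
  calc ∑ i ∈ Finset.range N,
        (∫ t in Set.Icc (((((i+1:ℕ)):ℝ) - 1) * k) ((((((i+1:ℕ)):ℝ) - 1) * k) + k), g t)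
      = ∑ i ∈ Finset.range N, ∫ t in ((i:ℝ)*k)..((((i+1:ℕ)):ℝ)*k), g t :=
        Finset.sum_congr rfl fun i _ => hterm i
    _ = ∫ t in (((0:ℕ):ℝ)*k)..(((N:ℕ):ℝ)*k), g t := hadj
    _ = ∫ t in Set.Icc (0:ℝ) T, g t := by
        rw [integral_Icc_eq_integral_Ioc,
          show ((0:ℕ):ℝ)*k = (0:ℝ) by push_cast; ring,
          show ((N:ℕ):ℝ)*k = T from hT,
          intervalIntegral.integral_of_le (by nlinarith)]

lemma pointwise_step (k μ M J x y d u F ip Auu A0u : ℝ)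
    (hk : 0 < k) (hμ : 0 < μ) (hF : 0 ≤ F)
    (e1 : x^2 + k * Auu = k * ip + (x^2 + y^2 - d^2)/2)
    (e5 : μ * u^2 ≤ Auu - A0u)
    (e6 : |A0u| ≤ M * u)
    (e7 : ip ≤ F * x)
    (e8 : x ≤ J * u) :
    (μ/2)*x^2 + (μ/2)*d^2 + (k*μ^2/2)*u^2 ≤ (μ/2)*y^2 + k*M^2 + (k*J^2)*F^2 := by
  have h7 : ip ≤ F * (J * u) := e7.trans (mul_le_mul_of_nonneg_left e8 hF)
  have h7k : k * ip ≤ k * (F * (J * u)) := mul_le_mul_of_nonneg_left h7 hk.le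
  have h5k : k * (μ * u^2) ≤ k * (Auu - A0u) := mul_le_mul_of_nonneg_left e5 hk.le
  have h6 : -(M*u) ≤ A0u := neg_le_of_abs_le e6
  have h6k : k * (-(M*u)) ≤ k * A0u := mul_le_mul_of_nonneg_left h6 hk.le
  have hcore : (1/2)*x^2 + (1/2)*d^2 + k*(μ*u^2) ≤ (1/2)*y^2 + k*(F*(J*u)) + k*(M*u) := by
    linarith [h7k, h5k, h6k, e1]
  have hcoreμ := mul_le_mul_of_nonneg_left hcore hμ.le
  have Y1 : μ*(F*(J*u)) ≤ μ^2*u^2/4 + J^2*F^2 := by nlinarith [sq_nonneg (2*F*J - μ*u)]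
  have Y1k := mul_le_mul_of_nonneg_left Y1 hk.le
  have Y2 : μ*(M*u) ≤ μ^2*u^2/4 + M^2 := by nlinarith [sq_nonneg (2*M - μ*u)]
  have Y2k := mul_le_mul_of_nonneg_left Y2 hk.le
  linarith [hcoreμ, Y1k, Y2k]

lemma telescope_bound (a b c I : ℕ → ℝ) (A K1 K2 : ℝ) (N : ℕ)
    (key : ∀ n, 1 ≤ n → n ≤ N → A*a n + A*b n + K1*c n ≤ A*a (n-1) + K2 + I n) :
    ∀ m, m ≤ N → A*a m + A*(∑ n ∈ Finset.Icc 1 m, b n) + K1*(∑ n ∈ Finset.Icc 1 m, c n)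
      ≤ A*a 0 + (m:ℝ)*K2 + ∑ n ∈ Finset.Icc 1 m, I n := by
  intro m
  induction m with
  | zero => intro _; simp
  | succ m ih =>
    intro hm
    have h1 := ih (Nat.le_of_succ_le hm)
    have h2 := key (m+1) (Nat.le_add_left 1 m) hm
    simp only [Nat.add_sub_cancel] at h2
    rw [Finset.sum_Icc_succ_top (Nat.le_add_left 1 m), Finset.sum_Icc_succ_top (Nat.le_add_left 1 m),
      Finset.sum_Icc_succ_top (Nat.le_add_left 1 m)]
    push_cast
    nlinarith [h1, h2]


set_option maxHeartbeats 1000000 in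
/-- A priori bound for the fully discrete randomized backward
Euler–Galerkin scheme: there is a constant `C > 0`, depending only on `M`, `μ`
and the embedding `j : V → H`, such that for every choice of the remaining data
the scheme's solution satisfies
`max_n E‖j Uⁿ‖²_H + Σₘ E‖j Uᵐ − j Uᵐ⁻¹‖²_H + kμ Σₘ E‖Uᵐ‖²_V
  ≤ C (T + ‖j U⁰‖²_H + ∫₀ᵀ ‖f‖²_H)`. -/
theorem stmt12
    (V H : Type) [NormedAddCommGroup V] [InnerProductSpace ℝ V] [CompleteSpace V]
    [SecondCountableTopology V] [MeasurableSpace V] [BorelSpace V]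
    [NormedAddCommGroup H] [InnerProductSpace ℝ H] [CompleteSpace H]
    [SecondCountableTopology H]
    (j : V →L[ℝ] H) (hj_inj : Function.Injective j) (hj_dense : DenseRange j)
    (M : ℝ) (hM : 0 ≤ M) (μ : ℝ) (hμ : 0 < μ) :
    ∃ C : ℝ, 0 < C ∧
      ∀ (T : ℝ), 0 < T →
      ∀ 𝒜 : ℝ → V → StrongDual ℝ V,
        (∀ v₁ v₂ : V, Measurable fun t => 𝒜 t v₁ v₂) →
        (∀ t ∈ Set.Icc (0:ℝ) T, ‖𝒜 t 0‖ ≤ M) →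
        (∃ L : ℝ, 0 < L ∧ ∀ t ∈ Set.Icc (0:ℝ) T, ∀ v₁ v₂ : V,
          ‖𝒜 t v₁ - 𝒜 t v₂‖ ≤ L * ‖v₁ - v₂‖) →
        (∀ t ∈ Set.Icc (0:ℝ) T, ∀ v₁ v₂ : V,
          μ * ‖v₁ - v₂‖ ^ 2 ≤ (𝒜 t v₁ - 𝒜 t v₂) (v₁ - v₂)) →
      ∀ f : ℝ → H, MemLp f 2 (volume.restrict (Set.Icc (0:ℝ) T)) →
      ∀ Vh : Submodule ℝ V, FiniteDimensional ℝ Vh →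
      ∀ U0 : V, U0 ∈ Vh →
      ∀ (N : ℕ), 0 < N → ∀ (k : ℝ), k = T / N →
      ∀ (Ω : Type) [mΩ : MeasurableSpace Ω] (P : Measure Ω)
        [IsProbabilityMeasure P],
        (∀ s : Set Ω, P s = 0 → MeasurableSet s) →
      ∀ τ : ℕ → Ω → ℝ, (∀ n, Measurable (τ n)) →
        ProbabilityTheory.iIndepFun
          (fun i : Fin N => τ (i + 1)) P →
        (∀ n, 1 ≤ n → n ≤ N →
          Measure.map (τ n) P = volume.restrict (Set.Icc (0:ℝ) 1)) →
      ∀ ξ : ℕ → Ω → ℝ, (∀ n ω, ξ n ω = ((n : ℝ) - 1) * k + k * τ n ω) →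
      ∀ 𝓕 : ℕ → MeasurableSpace Ω,
        (∀ n, 𝓕 n = MeasurableSpace.generateFrom {s : Set Ω | P s = 0} ⊔
          ⨆ i ∈ Finset.Icc 1 n, MeasurableSpace.comap (τ i)
            (inferInstance : MeasurableSpace ℝ)) →
      -- the unique solution of the fully discrete scheme
      ∀ U : ℕ → Ω → V,
        (∀ ω, U 0 ω = U0) →
        (∀ n, 1 ≤ n → n ≤ N → Measurable[𝓕 n] (U n) ∧ MemLp (U n) 2 P) →
        (∀ n, 1 ≤ n → n ≤ N → ∀ᵐ ω ∂P, U n ω ∈ Vh ∧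
          ∀ w ∈ Vh, ⟪j (U n ω), j w⟫ + k * 𝒜 (ξ n ω) (U n ω) w
            = k * ⟪f (ξ n ω), j w⟫ + ⟪j (U (n - 1) ω), j w⟫) →
      (⨆ n ∈ Finset.Icc 0 N, ∫ ω, ‖j (U n ω)‖ ^ 2 ∂P) +
        (∑ m ∈ Finset.Icc 1 N, ∫ ω, ‖j (U m ω) - j (U (m - 1) ω)‖ ^ 2 ∂P) +
        k * μ * ∑ m ∈ Finset.Icc 1 N, ∫ ω, ‖U m ω‖ ^ 2 ∂P ≤
      C * (T + ‖j U0‖ ^ 2 + ∫ t in Set.Icc (0:ℝ) T, ‖f t‖ ^ 2) := by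
  refine ⟨6*M^2/μ + 6*‖j‖^2/μ + 4, ?_, ?_⟩
  · have h1 : 0 ≤ 6*M^2/μ := div_nonneg (by positivity) hμ.le
    have h2 : 0 ≤ 6*‖j‖^2/μ := div_nonneg (by positivity) hμ.le
    linarith
  intro T hT 𝒜 _hmeas hM𝒜 _hLip hmono f hf Vh _hVh U0 _hU0 N hN k hk Ω mΩ P instP _hcomp
    τ hτmeas _hindep hτlaw ξ hξ 𝓕 _h𝓕 U hU0eq hUmem hUscheme
  have hN0 : (0:ℝ) < N := by exact_mod_cast hN
  have hk0 : 0 < k := by rw [hk]; exact div_pos hT hN0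
  have hNk : (N:ℝ) * k = T := by rw [hk]; field_simp
  -- MemLp facts
  have hmem : ∀ n, n ≤ N → MemLp (U n) 2 P := by
    intro n hn
    rcases Nat.eq_zero_or_pos n with h | h
    · subst h
      have hc : U 0 = fun _ => U0 := funext hU0eq
      rw [hc]; exact memLp_const U0
    · exact (hUmem n h hn).2
  have hjmem : ∀ n, n ≤ N → MemLp (fun ω => j (U n ω)) 2 P := by
    intro n hn
    have := j.comp_memLp' (hmem n hn)
    exact this
  have hIa : ∀ n, n ≤ N → Integrable (fun ω => ‖j (U n ω)‖^2) P := fun n hn =>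
    (memLp_two_iff_integrable_sq_norm (hjmem n hn).aestronglyMeasurable).mp (hjmem n hn)
  have hIc : ∀ n, n ≤ N → Integrable (fun ω => ‖U n ω‖^2) P := fun n hn =>
    (memLp_two_iff_integrable_sq_norm (hmem n hn).aestronglyMeasurable).mp (hmem n hn)
  have hIb : ∀ n, n ≤ N → Integrable (fun ω => ‖j (U n ω) - j (U (n-1) ω)‖^2) P := by
    intro n hn
    have h := (hjmem n hn).sub (hjmem (n-1) (le_trans (Nat.sub_le n 1) hn))
    exact (memLp_two_iff_integrable_sq_norm h.aestronglyMeasurable).mp h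
  have hfsq : Integrable (fun t => ‖f t‖^2) (volume.restrict (Set.Icc (0:ℝ) T)) :=
    (memLp_two_iff_integrable_sq_norm hf.aestronglyMeasurable).mp hf
  -- key per-step estimate
  have key : ∀ n, 1 ≤ n → n ≤ N →
      (μ/2) * (∫ ω, ‖j (U n ω)‖^2 ∂P)
        + (μ/2) * (∫ ω, ‖j (U n ω) - j (U (n-1) ω)‖^2 ∂P)
        + (k*μ^2/2) * (∫ ω, ‖U n ω‖^2 ∂P)
      ≤ (μ/2) * (∫ ω, ‖j (U (n-1) ω)‖^2 ∂P) + k*M^2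
        + ‖j‖^2 * (∫ t in Set.Icc (((n:ℝ)-1)*k) (((n:ℝ)-1)*k + k), ‖f t‖^2) := by
    intro n h1 hn
    set c : ℝ := ((n:ℝ)-1)*k with hcdef
    have hn1 : (1:ℝ) ≤ (n:ℝ) := by exact_mod_cast h1
    have hnN : (n:ℝ) ≤ (N:ℝ) := by exact_mod_cast hn
    have hc0 : 0 ≤ c := by
      rw [hcdef]
      exact mul_nonneg (by linarith) hk0.le
    have hck : c + k ≤ T := by
      rw [hcdef]
      have := mul_le_mul_of_nonneg_right hnN hk0.le
      nlinarith
    have hsub : Set.Icc c (c+k) ⊆ Set.Icc (0:ℝ) T := Set.Icc_subset_Icc hc0 hck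
    have hξeq : ξ n = fun ω => c + k * τ n ω := by
      funext ω; rw [hξ n ω]
    have hξmeas : Measurable (ξ n) := by
      rw [hξeq]; exact ((hτmeas n).const_mul k).const_add c
    have hmapξ : Measure.map (ξ n) P
        = (ENNReal.ofReal k)⁻¹ • volume.restrict (Set.Icc c (c+k)) := by
      have hmm : Measure.map (fun ω => c + k * τ n ω) P
          = Measure.map (fun t : ℝ => c + k*t) (Measure.map (τ n) P) :=
        (Measure.map_map ((measurable_const_mul k).const_add c) (hτmeas n)).symm
      rw [hξeq, hmm, hτlaw n h1 hn, map_affine_volume c k hk0]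
    have hfsq' : Integrable (fun t => ‖f t‖^2) (volume.restrict (Set.Icc c (c+k))) :=
      hfsq.mono_measure (Measure.restrict_mono hsub le_rfl)
    have hsm : AEStronglyMeasurable (fun t => ‖f t‖^2) (Measure.map (ξ n) P) := by
      rw [hmapξ]
      exact hfsq'.aestronglyMeasurable.mono_ac Measure.smul_absolutelyContinuous
    have hφeq : (∫ ω, ‖f (ξ n ω)‖^2 ∂P) = k⁻¹ * ∫ t in Set.Icc c (c+k), ‖f t‖^2 := by
      rw [← integral_map hξmeas.aemeasurable hsm, hmapξ, integral_smul_measure,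
        ENNReal.toReal_inv, ENNReal.toReal_ofReal hk0.le, smul_eq_mul]
    have hφint : Integrable (fun ω => ‖f (ξ n ω)‖^2) P := by
      have h2 : Integrable (fun t => ‖f t‖^2) (Measure.map (ξ n) P) := by
        rw [hmapξ]
        refine hfsq'.smul_measure ?_
        simp [ENNReal.inv_ne_top, ENNReal.ofReal_eq_zero, not_le, hk0]
      exact (integrable_map_measure hsm hξmeas.aemeasurable).mp h2
    have hτae : ∀ᵐ ω ∂P, τ n ω ∈ Set.Icc (0:ℝ) 1 := by
      have hms : MeasurableSet (Set.Icc (0:ℝ) 1)ᶜ := measurableSet_Icc.compl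
      have h0 : P ((τ n)⁻¹' (Set.Icc (0:ℝ) 1)ᶜ) = 0 := by
        rw [← Measure.map_apply (hτmeas n) hms, hτlaw n h1 hn,
          Measure.restrict_apply hms]
        simp
      rw [ae_iff]
      exact h0
    have hξae : ∀ᵐ ω ∂P, ξ n ω ∈ Set.Icc (0:ℝ) T := by
      filter_upwards [hτae] with ω hω
      rw [hξ n ω]
      rcases hω with ⟨hω1, hω2⟩
      simp only [Set.mem_Icc]
      constructor
      · have h1' := mul_nonneg hk0.le hω1
        nlinarith
      · have h2' := mul_le_mul_of_nonneg_left hω2 hk0.le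
        nlinarith
    have hstep : ∀ᵐ ω ∂P,
        (μ/2)*‖j (U n ω)‖^2 + (μ/2)*‖j (U n ω) - j (U (n-1) ω)‖^2 + (k*μ^2/2)*‖U n ω‖^2
          ≤ (μ/2)*‖j (U (n-1) ω)‖^2 + k*M^2 + (k*‖j‖^2)*‖f (ξ n ω)‖^2 := by
      filter_upwards [hUscheme n h1 hn, hξae] with ω hω ht
      obtain ⟨hVmem, heq⟩ := hω
      have heq' := heq (U n ω) hVmem
      have hip : ⟪j (U (n-1) ω), j (U n ω)⟫ = ⟪j (U n ω), j (U (n-1) ω)⟫ :=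
        real_inner_comm _ _
      have hd := norm_sub_sq_real (j (U n ω)) (j (U (n-1) ω))
      have hself := real_inner_self_eq_norm_sq (j (U n ω))
      have e1 : ‖j (U n ω)‖^2 + k * (𝒜 (ξ n ω) (U n ω)) (U n ω)
          = k * ⟪f (ξ n ω), j (U n ω)⟫
            + (‖j (U n ω)‖^2 + ‖j (U (n-1) ω)‖^2 - ‖j (U n ω) - j (U (n-1) ω)‖^2)/2 := by
        linarith [heq', hd, hip, hself]
      have e5 : μ * ‖U n ω‖^2
          ≤ (𝒜 (ξ n ω) (U n ω)) (U n ω) - (𝒜 (ξ n ω) 0) (U n ω) := by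
        have := hmono (ξ n ω) ht (U n ω) 0
        simpa [ContinuousLinearMap.sub_apply] using this
      have e6 : |(𝒜 (ξ n ω) 0) (U n ω)| ≤ M * ‖U n ω‖ := by
        have h := (𝒜 (ξ n ω) 0).le_opNorm (U n ω)
        rw [Real.norm_eq_abs] at h
        exact h.trans (mul_le_mul_of_nonneg_right (hM𝒜 (ξ n ω) ht) (norm_nonneg _))
      exact pointwise_step k μ M ‖j‖ ‖j (U n ω)‖ ‖j (U (n-1) ω)‖
        ‖j (U n ω) - j (U (n-1) ω)‖ ‖U n ω‖ ‖f (ξ n ω)‖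
        ⟪f (ξ n ω), j (U n ω)⟫ ((𝒜 (ξ n ω) (U n ω)) (U n ω)) ((𝒜 (ξ n ω) 0) (U n ω))
        hk0 hμ (norm_nonneg _) e1 e5 e6 (real_inner_le_norm _ _) (j.le_opNorm _)
    -- integrate the a.s. inequality
    have hn1' : n - 1 ≤ N := le_trans (Nat.sub_le n 1) hn
    have hGint : Integrable (fun ω =>
        (μ/2)*‖j (U n ω)‖^2 + (μ/2)*‖j (U n ω) - j (U (n-1) ω)‖^2
          + (k*μ^2/2)*‖U n ω‖^2) P :=
      (((hIa n hn).const_mul _).add ((hIb n hn).const_mul _)).add ((hIc n hn).const_mul _)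
    have hHint : Integrable (fun ω =>
        (μ/2)*‖j (U (n-1) ω)‖^2 + k*M^2 + (k*‖j‖^2)*‖f (ξ n ω)‖^2) P :=
      (((hIa (n-1) hn1').const_mul _).add (integrable_const _)).add (hφint.const_mul _)
    have hmono' := integral_mono_ae hGint hHint hstep
    have hIam := (hIa n hn).const_mul (μ/2)
    have hIbm := (hIb n hn).const_mul (μ/2)
    have hIcm := (hIc n hn).const_mul (k*μ^2/2)
    have hab : Integrable
        (fun ω => (μ/2)*‖j (U n ω)‖^2 + (μ/2)*‖j (U n ω) - j (U (n-1) ω)‖^2) P :=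
      hIam.add hIbm
    have hIprev := (hIa (n-1) hn1').const_mul (μ/2)
    have hconst : Integrable (fun _ : Ω => k*M^2) P := integrable_const _
    have hpc : Integrable (fun ω => (μ/2)*‖j (U (n-1) ω)‖^2 + k*M^2) P :=
      hIprev.add hconst
    have hφm := hφint.const_mul (k*‖j‖^2)
    have hGeq : ∫ ω, ((μ/2)*‖j (U n ω)‖^2 + (μ/2)*‖j (U n ω) - j (U (n-1) ω)‖^2
          + (k*μ^2/2)*‖U n ω‖^2) ∂P
        = (μ/2) * (∫ ω, ‖j (U n ω)‖^2 ∂P)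
          + (μ/2) * (∫ ω, ‖j (U n ω) - j (U (n-1) ω)‖^2 ∂P)
          + (k*μ^2/2) * (∫ ω, ‖U n ω‖^2 ∂P) := by
      rw [integral_add hab hIcm, integral_add hIam hIbm, integral_const_mul,
        integral_const_mul, integral_const_mul]
    have hHeq : ∫ ω, ((μ/2)*‖j (U (n-1) ω)‖^2 + k*M^2 + (k*‖j‖^2)*‖f (ξ n ω)‖^2) ∂P
        = (μ/2) * (∫ ω, ‖j (U (n-1) ω)‖^2 ∂P) + k*M^2
          + (k*‖j‖^2) * (k⁻¹ * ∫ t in Set.Icc c (c+k), ‖f t‖^2) := by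
      rw [integral_add hpc hφm, integral_add hIprev hconst, integral_const,
        integral_const_mul, integral_const_mul, hφeq]
      simp [measure_univ]
    rw [hGeq, hHeq] at hmono'
    have hkk : (k*‖j‖^2) * (k⁻¹ * ∫ t in Set.Icc c (c+k), ‖f t‖^2)
        = ‖j‖^2 * ∫ t in Set.Icc c (c+k), ‖f t‖^2 := by
      field_simp
    linarith [hmono']
  -- nonnegativity
  have hb0 : ∀ n : ℕ, 0 ≤ ∫ ω, ‖j (U n ω) - j (U (n-1) ω)‖^2 ∂P := fun n =>
    integral_nonneg fun ω => by positivity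
  have hc0 : ∀ n : ℕ, 0 ≤ ∫ ω, ‖U n ω‖^2 ∂P := fun n =>
    integral_nonneg fun ω => by positivity
  have hI0 : ∀ n : ℕ, 0 ≤ ∫ t in Set.Icc (((n:ℝ)-1)*k) (((n:ℝ)-1)*k + k), ‖f t‖^2 := fun n =>
    integral_nonneg fun t => by positivity
  have hF0 : 0 ≤ ∫ t in Set.Icc (0:ℝ) T, ‖f t‖^2 := integral_nonneg fun t => by positivity
  have hIsum := sum_integral_partition (fun t => ‖f t‖^2) k T N hk0 hNk hfsq
  -- telescoping
  have htel := telescope_bound (fun n => ∫ ω, ‖j (U n ω)‖^2 ∂P)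
    (fun n => ∫ ω, ‖j (U n ω) - j (U (n-1) ω)‖^2 ∂P)
    (fun n => ∫ ω, ‖U n ω‖^2 ∂P)
    (fun n => ‖j‖^2 * (∫ t in Set.Icc (((n:ℝ)-1)*k) (((n:ℝ)-1)*k + k), ‖f t‖^2))
    (μ/2) (k*μ^2/2) (k*M^2) N key
  have ha0eq : (∫ ω, ‖j (U 0 ω)‖^2 ∂P) = ‖j U0‖^2 := by
    simp only [hU0eq]
    simp
  have hbound : ∀ m, m ≤ N →
      (μ/2) * (∫ ω, ‖j (U m ω)‖^2 ∂P)
      + (μ/2) * (∑ n ∈ Finset.Icc 1 m, ∫ ω, ‖j (U n ω) - j (U (n-1) ω)‖^2 ∂P)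
      + (k*μ^2/2) * (∑ n ∈ Finset.Icc 1 m, ∫ ω, ‖U n ω‖^2 ∂P)
      ≤ (μ/2) * ‖j U0‖^2 + T*M^2 + ‖j‖^2 * (∫ t in Set.Icc (0:ℝ) T, ‖f t‖^2) := by
    intro m hm
    have h := htel m hm
    simp only [ha0eq] at h
    have hmk : (m:ℝ)*(k*M^2) ≤ T*M^2 := by
      have hmN : (m:ℝ) ≤ (N:ℝ) := by exact_mod_cast hm
      nlinarith [sq_nonneg M, mul_le_mul_of_nonneg_right hmN hk0.le]
    have hsum_le : ∑ n ∈ Finset.Icc 1 m,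
        ‖j‖^2 * (∫ t in Set.Icc (((n:ℝ)-1)*k) (((n:ℝ)-1)*k + k), ‖f t‖^2)
        ≤ ‖j‖^2 * (∫ t in Set.Icc (0:ℝ) T, ‖f t‖^2) := by
      rw [← Finset.mul_sum]
      refine mul_le_mul_of_nonneg_left ?_ (by positivity)
      rw [← hIsum]
      exact Finset.sum_le_sum_of_subset_of_nonneg (Finset.Icc_subset_Icc_right hm)
        (fun i _ _ => hI0 i)
    linarith [h, hmk, hsum_le]
  set R : ℝ := (μ/2) * ‖j U0‖^2 + T*M^2 + ‖j‖^2 * (∫ t in Set.Icc (0:ℝ) T, ‖f t‖^2) with hR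
  clear_value R
  have hR0 : 0 ≤ R := by
    rw [hR]
    have h1 : 0 ≤ (μ/2) * ‖j U0‖^2 := by positivity
    have h2 : 0 ≤ T*M^2 := by positivity
    have h3 : 0 ≤ ‖j‖^2 * (∫ t in Set.Icc (0:ℝ) T, ‖f t‖^2) :=
      mul_nonneg (by positivity) hF0
    linarith
  have hB0 : 0 ≤ 2*R/μ := div_nonneg (by linarith) hμ.le
  have hA : ∀ n, n ≤ N → (∫ ω, ‖j (U n ω)‖^2 ∂P) ≤ 2*R/μ := by
    intro n hn
    rw [le_div_iff₀ hμ]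
    have h := hbound n hn
    have hb' : 0 ≤ ∑ i ∈ Finset.Icc 1 n, ∫ ω, ‖j (U i ω) - j (U (i-1) ω)‖^2 ∂P :=
      Finset.sum_nonneg fun i _ => hb0 i
    have hc' : 0 ≤ ∑ i ∈ Finset.Icc 1 n, ∫ ω, ‖U i ω‖^2 ∂P :=
      Finset.sum_nonneg fun i _ => hc0 i
    have h2 : 0 ≤ (μ/2) * ∑ i ∈ Finset.Icc 1 n, ∫ ω, ‖j (U i ω) - j (U (i-1) ω)‖^2 ∂P :=
      mul_nonneg (by positivity) hb'
    have h3 : 0 ≤ (k*μ^2/2) * ∑ i ∈ Finset.Icc 1 n, ∫ ω, ‖U i ω‖^2 ∂P :=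
      mul_nonneg (by positivity) hc'
    linarith [hR]
  have haN : 0 ≤ ∫ ω, ‖j (U N ω)‖^2 ∂P := integral_nonneg fun ω => by positivity
  have hSbN : 0 ≤ ∑ i ∈ Finset.Icc 1 N, ∫ ω, ‖j (U i ω) - j (U (i-1) ω)‖^2 ∂P :=
    Finset.sum_nonneg fun i _ => hb0 i
  have hScN : 0 ≤ ∑ i ∈ Finset.Icc 1 N, ∫ ω, ‖U i ω‖^2 ∂P :=
    Finset.sum_nonneg fun i _ => hc0 i
  have hSb : (∑ m ∈ Finset.Icc 1 N, ∫ ω, ‖j (U m ω) - j (U (m-1) ω)‖^2 ∂P) ≤ 2*R/μ := by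
    rw [le_div_iff₀ hμ]
    have h := hbound N le_rfl
    have h2 : 0 ≤ (μ/2) * ∫ ω, ‖j (U N ω)‖^2 ∂P := mul_nonneg (by positivity) haN
    have h3 : 0 ≤ (k*μ^2/2) * ∑ i ∈ Finset.Icc 1 N, ∫ ω, ‖U i ω‖^2 ∂P :=
      mul_nonneg (by positivity) hScN
    linarith [hR]
  have hSc : k * μ * (∑ m ∈ Finset.Icc 1 N, ∫ ω, ‖U m ω‖^2 ∂P) ≤ 2*R/μ := by
    rw [le_div_iff₀ hμ]
    have h := hbound N le_rfl
    have h2 : 0 ≤ (μ/2) * ∫ ω, ‖j (U N ω)‖^2 ∂P := mul_nonneg (by positivity) haN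
    have h3 : 0 ≤ (μ/2) * ∑ i ∈ Finset.Icc 1 N, ∫ ω, ‖j (U i ω) - j (U (i-1) ω)‖^2 ∂P :=
      mul_nonneg (by positivity) hSbN
    linarith [hR]
  have hSup : (⨆ n ∈ Finset.Icc 0 N, ∫ ω, ‖j (U n ω)‖^2 ∂P) ≤ 2*R/μ := by
    refine Real.iSup_le (fun n => Real.iSup_le (fun hn => hA n ?_) hB0) hB0
    exact (Finset.mem_Icc.mp hn).2
  have hfinal : 6*R/μ ≤ (6*M^2/μ + 6*‖j‖^2/μ + 4)
      * (T + ‖j U0‖^2 + ∫ t in Set.Icc (0:ℝ) T, ‖f t‖^2) := by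
    rw [div_le_iff₀ hμ, hR]
    have hexp : (6*M^2/μ + 6*‖j‖^2/μ + 4)
        * (T + ‖j U0‖^2 + ∫ t in Set.Icc (0:ℝ) T, ‖f t‖^2) * μ
        = (6*M^2 + 6*‖j‖^2 + 4*μ)
          * (T + ‖j U0‖^2 + ∫ t in Set.Icc (0:ℝ) T, ‖f t‖^2) := by
      field_simp
    rw [hexp]
    linarith [mul_nonneg (sq_nonneg M) hF0, mul_nonneg (sq_nonneg M) (sq_nonneg ‖j U0‖),
      mul_nonneg (sq_nonneg ‖j‖) hT.le, mul_nonneg (sq_nonneg ‖j‖) (sq_nonneg ‖j U0‖),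
      mul_nonneg hμ.le hT.le, mul_nonneg hμ.le hF0, mul_nonneg hμ.le (sq_nonneg ‖j U0‖),
      mul_nonneg (sq_nonneg M) hT.le, mul_nonneg (sq_nonneg ‖j‖) hF0]
  refine le_trans (add_le_add (add_le_add hSup hSb) hSc) ?_
  refine le_trans (le_of_eq (by ring)) hfinal
end
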